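/- arXiv:math/0103194 — 5 statements merged into one kernel-verified Lean document; each statement's English description precedes it below -/
import Mathlib

section
/- (Garside) Let n ≥ 2. If two positive words W and W' in the letters σ_1,…,σ_{n−1} represent the same element of the braid group B_n, then W can be transformed into W' through a finite sequence of positive words, each obtained from the preceding one by a single application of a commutation relation (replacing an occurrence of σ_iσ_j by σ_jσ_i where |i−j| > 1) or a triple relation (replacing an occurrence of σ_iσ_jσ_i by σ_jσ_iσ_j where |i−j| = 1). Equivalently: two elements of the free monoid on σ_1,…,σ_{n−1} map to the same element of B_n if and only if they are identified by the monoid congruence generated by the relations σ_iσ_j = σ_jσ_i for |i−j| > 1 and σ_iσ_{i+1}σ_i = σ_{i+1}σ_iσ_{i+1}. -/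
/-- The braid relators on generators indexed by `Fin n` (so this presents the
braid group on `n + 1` strands): `σᵢσⱼ = σⱼσᵢ` for `|i - j| > 1` and
`σᵢσᵢ₊₁σᵢ = σᵢ₊₁σᵢσᵢ₊₁`. -/
def braidRels (n : ℕ) : Set (FreeGroup (Fin n)) :=
  {r | ∃ i j : Fin n, i.val + 2 ≤ j.val ∧
        r = FreeGroup.of i * FreeGroup.of j * (FreeGroup.of j * FreeGroup.of i)⁻¹} ∪
  {r | ∃ i j : Fin n, i.val + 1 = j.val ∧
        r = FreeGroup.of i * FreeGroup.of j * FreeGroup.of i *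
            (FreeGroup.of j * FreeGroup.of i * FreeGroup.of j)⁻¹}

/-- The braid group with `n` Artin generators, i.e. the braid group `B_{n+1}`
on `n + 1` strands. -/
abbrev BraidGroup (n : ℕ) : Type := PresentedGroup (braidRels n)

/-- The Artin generators (zero-based: `σ 0, …, σ (n-1)` are the paper's
`σ₁, …, σₙ`). -/
def σ {n : ℕ} (i : Fin n) : BraidGroup n := PresentedGroup.of i

/-- A single Hurwitz move `R_k` (the position `k` is encoded by the prefix `u`):
`(…, a, b, …) ↦ (…, a b a⁻¹, a, …)`. -/
def HurwitzMove {G : Type*} [Group G] (l l' : List G) : Prop :=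
  ∃ (u v : List G) (a b : G),
    l = u ++ a :: b :: v ∧ l' = u ++ (a * b * a⁻¹) :: a :: v

/-- Hurwitz equivalence: finite sequences of Hurwitz moves and their inverses. -/
def HurwitzEquiv {G : Type*} [Group G] : List G → List G → Prop :=
  Relation.EqvGen HurwitzMove

/-- One elementary braid relation between positive words: either a commutation
`σᵢσⱼ ↦ σⱼσᵢ` (`|i - j| > 1`) or a triple relation `σᵢσᵢ₊₁σᵢ ↦ σᵢ₊₁σᵢσᵢ₊₁`. -/
def braidMonoidRel (n : ℕ) (w w' : FreeMonoid (Fin n)) : Prop :=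
  (∃ i j : Fin n, i.val + 2 ≤ j.val ∧
     w = FreeMonoid.of i * FreeMonoid.of j ∧ w' = FreeMonoid.of j * FreeMonoid.of i) ∨
  (∃ i j : Fin n, i.val + 1 = j.val ∧
     w = FreeMonoid.of i * FreeMonoid.of j * FreeMonoid.of i ∧
     w' = FreeMonoid.of j * FreeMonoid.of i * FreeMonoid.of j)

namespace Garside
variable {n : ℕ}
abbrev m (i : Fin n) : FreeMonoid (Fin n) := FreeMonoid.of i
def br (n : ℕ) : FreeMonoid (Fin n) → FreeMonoid (Fin n) → Prop :=
  fun u v => conGen (braidMonoidRel n) u v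
theorem br.refl (u : FreeMonoid (Fin n)) : br n u u := (conGen _).refl u
theorem br.symm {u v : FreeMonoid (Fin n)} (h : br n u v) : br n v u := (conGen _).symm h
theorem br.trans {u v w : FreeMonoid (Fin n)} (h : br n u v) (h' : br n v w) : br n u w :=
  (conGen _).trans h h'
theorem br.mul {u v x y : FreeMonoid (Fin n)} (h : br n u v) (h' : br n x y) :
    br n (u * x) (v * y) := (conGen _).mul h h'
theorem br.of {u v : FreeMonoid (Fin n)} (h : braidMonoidRel n u v) : br n u v :=
  ConGen.Rel.of _ _ h

-- Step / Chain
def Step (u v : FreeMonoid (Fin n)) : Prop :=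
  ∃ x y a b, (braidMonoidRel n a b ∨ braidMonoidRel n b a) ∧ u = x * a * y ∧ v = x * b * y

def Chain : ℕ → FreeMonoid (Fin n) → FreeMonoid (Fin n) → Prop
  | 0, u, v => u = v
  | k+1, u, v => ∃ t, Step u t ∧ Chain k t v

theorem Step.symm {u v : FreeMonoid (Fin n)} (h : Step u v) : Step v u := by
  obtain ⟨x, y, a, b, hr, h1, h2⟩ := h
  exact ⟨x, y, b, a, hr.symm, h2, h1⟩

theorem Step.br {u v : FreeMonoid (Fin n)} (h : Step u v) : br n u v := by
  obtain ⟨x, y, a, b, hr, rfl, rfl⟩ := h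
  rcases hr with hr | hr
  · exact ((br.refl x).mul (br.of hr)).mul (br.refl y)
  · exact ((br.refl x).mul (br.of hr).symm).mul (br.refl y)

theorem Chain.br {u v : FreeMonoid (Fin n)} : ∀ {k}, Chain k u v → br n u v := by
  intro k
  induction k generalizing u v with
  | zero => rintro rfl; exact br.refl u
  | succ k ih => rintro ⟨t, hs, hc⟩; exact hs.br.trans (ih hc)

theorem Chain.trans {u v w : FreeMonoid (Fin n)} :
    ∀ {k l}, Chain k u v → Chain l v w → Chain (k + l) u w := by
  intro k
  induction k generalizing u v w with
  | zero => rintro l rfl h; simpa using h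
  | succ k ih =>
    rintro l ⟨t, hs, hc⟩ h
    have he : k + 1 + l = (k + l) + 1 := by omega
    rw [he]
    exact ⟨t, hs, ih hc h⟩

theorem Chain.single {u v : FreeMonoid (Fin n)} (h : Step u v) : Chain 1 u v := ⟨v, h, rfl⟩

theorem Chain.symm {u v : FreeMonoid (Fin n)} : ∀ {k}, Chain k u v → Chain k v u := by
  intro k
  induction k generalizing u v with
  | zero => rintro rfl; rfl
  | succ k ih =>
    rintro ⟨t, hs, hc⟩
    have h2 := (ih hc).trans (Chain.single hs.symm)
    simpa using h2

theorem Step.mulr {u v : FreeMonoid (Fin n)} (y : FreeMonoid (Fin n)) (h : Step u v) :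
    Step (u * y) (v * y) := by
  obtain ⟨x, z, a, b, hr, rfl, rfl⟩ := h
  exact ⟨x, z * y, a, b, hr, by simp [mul_assoc], by simp [mul_assoc]⟩

theorem Step.mull {u v : FreeMonoid (Fin n)} (x : FreeMonoid (Fin n)) (h : Step u v) :
    Step (x * u) (x * v) := by
  obtain ⟨z, y, a, b, hr, rfl, rfl⟩ := h
  exact ⟨x * z, y, a, b, hr, by simp [mul_assoc], by simp [mul_assoc]⟩

theorem Chain.mulr {u v : FreeMonoid (Fin n)} (y : FreeMonoid (Fin n)) :
    ∀ {k}, Chain k u v → Chain k (u * y) (v * y) := by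
  intro k
  induction k generalizing u v with
  | zero => rintro rfl; rfl
  | succ k ih => rintro ⟨t, hs, hc⟩; exact ⟨t * y, hs.mulr y, ih hc⟩

theorem Chain.mull {u v : FreeMonoid (Fin n)} (x : FreeMonoid (Fin n)) :
    ∀ {k}, Chain k u v → Chain k (x * u) (x * v) := by
  intro k
  induction k generalizing u v with
  | zero => rintro rfl; rfl
  | succ k ih => rintro ⟨t, hs, hc⟩; exact ⟨x * t, hs.mull x, ih hc⟩

theorem br_iff_chain {u v : FreeMonoid (Fin n)} : br n u v ↔ ∃ k, Chain k u v := by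
  constructor
  · intro h
    induction h with
    | of a b h =>
      exact ⟨1, Chain.single ⟨1, 1, a, b, Or.inl h, by simp, by simp⟩⟩
    | refl x => exact ⟨0, rfl⟩
    | symm _ ih => obtain ⟨k, hk⟩ := ih; exact ⟨k, hk.symm⟩
    | trans _ _ ih₁ ih₂ =>
      obtain ⟨k, hk⟩ := ih₁; obtain ⟨l, hl⟩ := ih₂; exact ⟨k + l, hk.trans hl⟩
    | mul _ _ ih₁ ih₂ =>
      obtain ⟨k, hk⟩ := ih₁; obtain ⟨l, hl⟩ := ih₂
      rename_i w x y z _ _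
      exact ⟨k + l, (hk.mulr y).trans (hl.mull x)⟩
  · rintro ⟨k, hk⟩; exact hk.br

theorem br.mull (x : FreeMonoid (Fin n)) {u v : FreeMonoid (Fin n)} (h : br n u v) :
    br n (x * u) (x * v) := (br.refl x).mul h
theorem br.mulr (y : FreeMonoid (Fin n)) {u v : FreeMonoid (Fin n)} (h : br n u v) :
    br n (u * y) (v * y) := h.mul (br.refl y)

/-- Commutation relation, symmetric form. -/
theorem bcomm {i j : Fin n} (h : i.val + 2 ≤ j.val ∨ j.val + 2 ≤ i.val) :
    br n (m i * m j) (m j * m i) := by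
  rcases h with h | h
  · exact br.of (Or.inl ⟨i, j, h, rfl, rfl⟩)
  · exact (br.of (Or.inl ⟨j, i, h, rfl, rfl⟩)).symm

theorem bbraid {i j : Fin n} (h : i.val + 1 = j.val ∨ j.val + 1 = i.val) :
    br n (m i * m j * m i) (m j * m i * m j) := by
  rcases h with h | h
  · exact br.of (Or.inr ⟨i, j, h, rfl, rfl⟩)
  · exact (br.of (Or.inr ⟨j, i, h, rfl, rfl⟩)).symm

/-- Swap two far generators at the head of a word. -/
theorem swapH {i j : Fin n} (h : i.val + 2 ≤ j.val ∨ j.val + 2 ≤ i.val)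
    (w : FreeMonoid (Fin n)) : br n (m i * (m j * w)) (m j * (m i * w)) := by
  simpa [mul_assoc] using (bcomm h).mulr w

theorem braidH {i j : Fin n} (h : i.val + 1 = j.val ∨ j.val + 1 = i.val)
    (w : FreeMonoid (Fin n)) :
    br n (m i * (m j * (m i * w))) (m j * (m i * (m j * w))) := by
  simpa [mul_assoc]  using (bbraid h).mulr w

theorem rel_length {u v : FreeMonoid (Fin n)} (h : braidMonoidRel n u v) :
    u.length = v.length := by
  rcases h with ⟨i, j, _, rfl, rfl⟩ | ⟨i, j, _, rfl, rfl⟩ <;> simp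

theorem br_length {u v : FreeMonoid (Fin n)} (h : br n u v) : u.length = v.length := by
  induction h with
  | of _ _ h => exact rel_length h
  | refl => rfl
  | symm _ ih => omega
  | trans _ _ ih₁ ih₂ => omega
  | mul _ _ ih₁ ih₂ => simp [FreeMonoid.length_mul, ih₁, ih₂]


-- ## Pair predicates and Concl

def FarP (i j : Fin n) : Prop := i.val + 2 ≤ j.val ∨ j.val + 2 ≤ i.val
def AdjP (i j : Fin n) : Prop := i.val + 1 = j.val ∨ j.val + 1 = i.val

theorem FarP.symm {i j : Fin n} (h : FarP i j) : FarP j i := Or.symm h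
theorem AdjP.symm {i j : Fin n} (h : AdjP i j) : AdjP j i := Or.symm h
theorem FarP.not_adj {i j : Fin n} (h : FarP i j) : ¬ AdjP i j := by
  rcases h with h | h <;> rintro (h' | h') <;> omega
theorem FarP.ne {i j : Fin n} (h : FarP i j) : i ≠ j := by
  rintro rfl; rcases h with h | h <;> omega
theorem AdjP.ne {i j : Fin n} (h : AdjP i j) : i ≠ j := by
  rintro rfl; rcases h with h | h <;> omega
theorem far_or_adj {i j : Fin n} (h : i ≠ j) : FarP i j ∨ AdjP i j := by
  have : i.val ≠ j.val := fun e => h (Fin.ext e)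
  unfold FarP AdjP; omega

instance {i j : Fin n} : Decidable (AdjP i j) := inferInstanceAs (Decidable (_ ∨ _))

def lcmT (i j : Fin n) : FreeMonoid (Fin n) :=
  if AdjP i j then m j * m i else m j

theorem lcmT_far {i j : Fin n} (h : FarP i j) : lcmT i j = m j := if_neg h.not_adj
theorem lcmT_adj {i j : Fin n} (h : AdjP i j) : lcmT i j = m j * m i := if_pos h

def Concl (i j : Fin n) (u v : FreeMonoid (Fin n)) : Prop :=
  (i = j → br n u v) ∧
  (i ≠ j → ∃ w, br n u (lcmT i j * w) ∧ br n v (lcmT j i * w))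

theorem conclEq {i j : Fin n} {u v : FreeMonoid (Fin n)} (hij : i = j) (h : br n u v) :
    Concl i j u v := ⟨fun _ => h, fun hne => absurd hij hne⟩

theorem conclFar {i j : Fin n} {u v : FreeMonoid (Fin n)} (hij : FarP i j)
    (h : ∃ w, br n u (m j * w) ∧ br n v (m i * w)) : Concl i j u v := by
  refine ⟨fun e => absurd e hij.ne, fun _ => ?_⟩
  rw [lcmT_far hij, lcmT_far hij.symm]; exact h

theorem conclAdj {i j : Fin n} {u v : FreeMonoid (Fin n)} (hij : AdjP i j)
    (h : ∃ w, br n u (m j * (m i * w)) ∧ br n v (m i * (m j * w))) : Concl i j u v := by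
  refine ⟨fun e => absurd e hij.ne, fun _ => ?_⟩
  rw [lcmT_adj hij, lcmT_adj hij.symm]
  simpa [mul_assoc] using h

theorem conclFar' {i j : Fin n} {u v : FreeMonoid (Fin n)} (hij : FarP i j)
    (h : Concl i j u v) : ∃ w, br n u (m j * w) ∧ br n v (m i * w) := by
  have := h.2 hij.ne
  rwa [lcmT_far hij, lcmT_far hij.symm] at this

theorem conclAdj' {i j : Fin n} {u v : FreeMonoid (Fin n)} (hij : AdjP i j)
    (h : Concl i j u v) : ∃ w, br n u (m j * (m i * w)) ∧ br n v (m i * (m j * w)) := by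
  have := h.2 hij.ne
  rw [lcmT_adj hij, lcmT_adj hij.symm] at this
  simpa [mul_assoc] using this

theorem Concl.transport {i j : Fin n} {u u' v : FreeMonoid (Fin n)}
    (h : br n u u') (hc : Concl i j u' v) : Concl i j u v :=
  ⟨fun e => h.trans (hc.1 e), fun hne => by
    obtain ⟨w, h1, h2⟩ := hc.2 hne; exact ⟨w, h.trans h1, h2⟩⟩

-- ## head splitting

theorem eq_head {i p : Fin n} {u y : FreeMonoid (Fin n)} (h : m i * u = m p * y) :
    i = p ∧ u = y := by
  have h1 := congrArg FreeMonoid.toList h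
  rw [FreeMonoid.toList_of_mul, FreeMonoid.toList_of_mul] at h1
  injection h1 with h2 h3
  exact ⟨h2, FreeMonoid.toList.injective h3⟩

theorem split_head {i : Fin n} {u x z : FreeMonoid (Fin n)} (h : m i * u = x * z) :
    (x = 1 ∧ m i * u = z) ∨ ∃ x', x = m i * x' ∧ u = x' * z := by
  induction x using FreeMonoid.casesOn with
  | one => exact Or.inl ⟨rfl, by simpa using h⟩
  | of_mul a xs =>
    rw [mul_assoc] at h
    obtain ⟨h1, h2⟩ := eq_head h
    subst h1
    exact Or.inr ⟨xs, rfl, h2⟩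

theorem stepFar {p q : Fin n} (h : FarP p q) (x y : FreeMonoid (Fin n)) :
    Step (x * (m p * (m q * y))) (x * (m q * (m p * y))) := by
  rcases h with h | h
  · exact ⟨x, y, m p * m q, m q * m p, Or.inl (Or.inl ⟨p, q, h, rfl, rfl⟩),
      by simp [mul_assoc], by simp [mul_assoc]⟩
  · exact ⟨x, y, m p * m q, m q * m p, Or.inr (Or.inl ⟨q, p, h, rfl, rfl⟩),
      by simp [mul_assoc], by simp [mul_assoc]⟩

theorem stepAdj {p q : Fin n} (h : AdjP p q) (x y : FreeMonoid (Fin n)) :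
    Step (x * (m p * (m q * (m p * y)))) (x * (m q * (m p * (m q * y)))) := by
  rcases h with h | h
  · exact ⟨x, y, m p * m q * m p, m q * m p * m q, Or.inl (Or.inr ⟨p, q, h, rfl, rfl⟩),
      by simp [mul_assoc], by simp [mul_assoc]⟩
  · exact ⟨x, y, m p * m q * m p, m q * m p * m q, Or.inr (Or.inr ⟨q, p, h, rfl, rfl⟩),
      by simp [mul_assoc], by simp [mul_assoc]⟩

theorem step_shape {u v : FreeMonoid (Fin n)} (h : Step u v) :
    (∃ (x y : FreeMonoid (Fin n)) (p q : Fin n), FarP p q ∧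
       u = x * (m p * (m q * y)) ∧ v = x * (m q * (m p * y))) ∨
    (∃ (x y : FreeMonoid (Fin n)) (p q : Fin n), AdjP p q ∧
       u = x * (m p * (m q * (m p * y))) ∧ v = x * (m q * (m p * (m q * y)))) := by
  obtain ⟨x, y, a, b, hr, rfl, rfl⟩ := h
  rcases hr with (⟨i, j, hij, rfl, rfl⟩ | ⟨i, j, hij, rfl, rfl⟩) |
    (⟨i, j, hij, rfl, rfl⟩ | ⟨i, j, hij, rfl, rfl⟩)
  · exact Or.inl ⟨x, y, i, j, Or.inl hij, by simp [mul_assoc], by simp [mul_assoc]⟩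
  · exact Or.inr ⟨x, y, i, j, Or.inl hij, by simp [mul_assoc], by simp [mul_assoc]⟩
  · exact Or.inl ⟨x, y, j, i, Or.inr hij, by simp [mul_assoc], by simp [mul_assoc]⟩
  · exact Or.inr ⟨x, y, j, i, Or.inr hij, by simp [mul_assoc], by simp [mul_assoc]⟩


-- ## The key lemma (Garside)

theorem keyChain : ∀ ℓ k (u v : FreeMonoid (Fin n)) (i j : Fin n),
    u.length ≤ ℓ → Chain k (m i * u) (m j * v) → Concl i j u v := by
  intro ℓ
  induction ℓ using Nat.strong_induction_on with
  | _ ℓ IHℓ =>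
  have Hrec : ∀ (u v : FreeMonoid (Fin n)) (i j : Fin n), u.length < ℓ →
      br n (m i * u) (m j * v) → Concl i j u v := by
    intro u v i j hlt hbr
    obtain ⟨k, hk⟩ := br_iff_chain.mp hbr
    exact IHℓ u.length hlt k u v i j le_rfl hk
  intro k
  induction k using Nat.strong_induction_on with
  | _ k IHk =>
  intro u v i j hu hch
  rcases k with _ | k
  · have hch' : m i * u = m j * v := hch
    obtain ⟨hij, huv⟩ := eq_head hch'
    exact conclEq hij (by subst huv; exact br.refl u)
  · obtain ⟨t, hs, hc⟩ := (hch : ∃ t, Step (m i * u) t ∧ Chain k t (m j * v))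
    rcases step_shape hs with ⟨x, y, p, q, hpq, hux, htx⟩ | ⟨x, y, p, q, hpq, hux, htx⟩
    -- ### Case A : the first move is a commutation
    · rcases split_head hux with ⟨hx1, hz⟩ | ⟨x', rfl, hu'⟩
      -- #### the first move happens at the head
      · obtain ⟨hip, hu2⟩ := eq_head hz
        subst hip
        rw [htx, hx1, one_mul] at hc
        have hyl : y.length + 1 ≤ ℓ := by
          have h1 := congrArg FreeMonoid.length hu2
          simp [FreeMonoid.length_mul] at h1; omega
        have hlen1 : (m i * y).length ≤ ℓ := by
          simp [FreeMonoid.length_mul]; omega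
        have C1 := IHk k (Nat.lt_succ_self k) (m i * y) v q j hlen1 hc
        by_cases hqj : q = j
        · subst hqj
          exact conclFar hpq ⟨y, by rw [hu2]; exact br.refl _, (C1.1 rfl).symm⟩
        · rcases far_or_adj hqj with hfqj | haqj
          · -- A-ii : FarP q j
            obtain ⟨w₁, hA, hB⟩ := conclFar' hfqj C1
            have C3 := Hrec y w₁ i j (by omega) hA
            by_cases hij : i = j
            · subst hij
              refine conclEq rfl ?_
              rw [hu2]
              exact (br.mull (m q) (C3.1 rfl)).trans hB.symm
            · rcases far_or_adj hij with hfij | haij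
              · -- A-ii-b
                obtain ⟨w₂, hA2, hB2⟩ := conclFar' hfij C3
                refine conclFar hfij ⟨m q * w₂, ?_, ?_⟩
                · rw [hu2]
                  exact (br.mull (m q) hA2).trans (swapH hfqj w₂)
                · exact hB.trans ((br.mull (m q) hB2).trans (swapH hpq.symm w₂))
              · -- A-ii-c
                obtain ⟨w₂, hA2, hB2⟩ := conclAdj' haij C3
                refine conclAdj haij ⟨m q * w₂, ?_, ?_⟩
                · rw [hu2]
                  exact (br.mull (m q) hA2).trans ((swapH hfqj _).trans
                    (br.mull (m j) (swapH hpq.symm w₂)))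
                · exact hB.trans ((br.mull (m q) hB2).trans ((swapH hpq.symm _).trans
                    (br.mull (m i) (swapH hfqj w₂))))
          · -- A-iii : AdjP q j
            obtain ⟨w₁, hA, hB⟩ := conclAdj' haqj C1
            have C3 := Hrec y (m q * w₁) i j (by omega) hA
            by_cases hij : i = j
            · exfalso
              subst hij
              rcases hpq with h | h <;> rcases haqj with h' | h' <;> omega
            · have hw₁l : w₁.length + 2 ≤ ℓ := by
                have h1 := br_length hA
                simp [FreeMonoid.length_mul] at h1; omega
              rcases far_or_adj hij with hfij | haij
              · -- A-iii-b
                obtain ⟨w₂, hA2, hB2⟩ := conclFar' hfij C3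
                have C5 := Hrec w₁ w₂ q i (by omega) hB2
                obtain ⟨w₃, hA3, hB3⟩ := conclFar' hpq.symm C5
                refine conclFar hfij ⟨m q * (m j * w₃), ?_, ?_⟩
                · rw [hu2]
                  exact (br.mull (m q) hA2).trans ((br.mull (m q) (br.mull (m j) hB3)).trans
                    (braidH haqj w₃))
                · exact hB.trans ((br.mull (m q) (br.mull (m j) hA3)).trans
                    ((br.mull (m q) (swapH hfij.symm w₃)).trans (swapH hpq.symm _)))
              · -- A-iii-c
                obtain ⟨w₂, hA2, hB2⟩ := conclAdj' haij C3
                have C5 := Hrec w₁ (m j * w₂) q i (by omega) hB2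
                obtain ⟨w₃, hA3, hB3⟩ := conclFar' hpq.symm C5
                have hw₂l : w₂.length + 3 ≤ ℓ := by
                  have h1 := br_length hB2
                  simp [FreeMonoid.length_mul] at h1; omega
                have C7 := Hrec w₂ w₃ j q (by omega) hB3
                obtain ⟨w₄, hA4, hB4⟩ := conclAdj' haqj.symm C7
                refine conclAdj haij ⟨m q * (m j * (m i * w₄)), ?_, ?_⟩
                · rw [hu2]
                  exact (br.mull (m q) hA2).trans <|
                    (br.mull (m q) (br.mull (m j) (br.mull (m i) hA4))).trans <|
                    (br.mull (m q) (br.mull (m j) (swapH hpq (m j * w₄)))).trans <|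
                    (braidH haqj (m i * (m j * w₄))).trans <|
                    (br.mull (m j) (br.mull (m q) (braidH haij.symm w₄))).trans <|
                    (br.mull (m j) (swapH hpq.symm (m j * (m i * w₄))))
                · exact hB.trans <|
                    (br.mull (m q) (br.mull (m j) hA3)).trans <|
                    (br.mull (m q) (br.mull (m j) (br.mull (m i) hB4))).trans <|
                    (br.mull (m q) (braidH haij.symm (m q * w₄))).trans <|
                    (swapH hpq.symm _).trans <|
                    (br.mull (m i) (br.mull (m q) (br.mull (m j) (swapH hpq w₄)))).trans <|
                    (br.mull (m i) (braidH haqj (m i * w₄)))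
      -- #### the first move happens inside u
      · set u' := x' * (m q * (m p * y)) with hu'def
        have hstep : Step u u' := by rw [hu']; exact stepFar hpq x' y
        have ht' : t = m i * u' := by rw [htx, mul_assoc]
        rw [ht'] at hc
        have hlen' : u'.length ≤ ℓ := by
          have h1 := br_length hstep.br; omega
        exact Concl.transport hstep.br (IHk k (Nat.lt_succ_self k) u' v i j hlen' hc)
    -- ### Case B : the first move is a braid move
    · rcases split_head hux with ⟨hx1, hz⟩ | ⟨x', rfl, hu'⟩
      -- #### the first move happens at the head
      · obtain ⟨hip, hu2⟩ := eq_head hz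
        subst hip
        rw [htx, hx1, one_mul] at hc
        have hyl : y.length + 2 ≤ ℓ := by
          have h1 := congrArg FreeMonoid.length hu2
          simp [FreeMonoid.length_mul] at h1; omega
        have hlen1 : (m i * (m q * y)).length ≤ ℓ := by
          simp [FreeMonoid.length_mul]; omega
        have C1 := IHk k (Nat.lt_succ_self k) (m i * (m q * y)) v q j hlen1 hc
        by_cases hqj : q = j
        · subst hqj
          exact conclAdj hpq ⟨y, by rw [hu2]; exact br.refl _, (C1.1 rfl).symm⟩
        · rcases far_or_adj hqj with hfqj | haqj
          · -- B-ii : FarP q j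
            obtain ⟨w₁, hA, hB⟩ := conclFar' hfqj C1
            have C3 := Hrec (m q * y) w₁ i j (by simp [FreeMonoid.length_mul]; omega) hA
            by_cases hij : i = j
            · exfalso
              subst hij
              rcases hpq with h | h <;> rcases hfqj with h' | h' <;> omega
            · rcases far_or_adj hij with hfij | haij
              · -- B-ii-b
                obtain ⟨w₂, hA2, hB2⟩ := conclFar' hfij C3
                have C5 := Hrec y w₂ q j (by omega) hA2
                obtain ⟨w₃, hA3, hB3⟩ := conclFar' hfqj C5
                refine conclFar hfij ⟨m q * (m i * w₃), ?_, ?_⟩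
                · rw [hu2]
                  exact (br.mull (m q) (br.mull (m i) hA3)).trans
                    ((br.mull (m q) (swapH hfij w₃)).trans (swapH hfqj (m i * w₃)))
                · exact hB.trans ((br.mull (m q) hB2).trans
                    ((br.mull (m q) (br.mull (m i) hB3)).trans (braidH hpq.symm w₃)))
              · -- B-ii-c
                obtain ⟨w₂, hA2, hB2⟩ := conclAdj' haij C3
                have C5 := Hrec y (m i * w₂) q j (by omega) hA2
                obtain ⟨w₃, hA3, hB3⟩ := conclFar' hfqj C5
                have hw₂l : w₂.length + 2 ≤ ℓ := by
                  have h1 := br_length hA2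
                  simp [FreeMonoid.length_mul] at h1; omega
                have C6 := Hrec w₂ w₃ i q (by omega) hB3
                obtain ⟨w₄, hA4, hB4⟩ := conclAdj' hpq C6
                refine conclAdj haij ⟨m q * (m i * (m j * w₄)), ?_, ?_⟩
                · rw [hu2]
                  exact (br.mull (m q) (br.mull (m i) hA3)).trans <|
                    (br.mull (m q) (br.mull (m i) (br.mull (m j) hB4))).trans <|
                    (br.mull (m q) (braidH haij (m q * w₄))).trans <|
                    (swapH hfqj _).trans <|
                    (br.mull (m j) (br.mull (m q) (br.mull (m i) (swapH hfqj.symm w₄)))).trans <|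
                    (br.mull (m j) (braidH hpq.symm (m j * w₄)))
                · exact hB.trans <| (br.mull (m q) hB2).trans <|
                    (br.mull (m q) (br.mull (m i) (br.mull (m j) hA4))).trans <|
                    (br.mull (m q) (br.mull (m i) (swapH hfqj.symm (m i * w₄)))).trans <|
                    (braidH hpq.symm (m j * (m i * w₄))).trans <|
                    (br.mull (m i) (br.mull (m q) (braidH haij w₄))).trans <|
                    (br.mull (m i) (swapH hfqj (m i * (m j * w₄))))
          · -- B-iii : AdjP q j
            obtain ⟨w₁, hA, hB⟩ := conclAdj' haqj C1
            have C3 := Hrec (m q * y) (m q * w₁) i j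
              (by simp [FreeMonoid.length_mul]; omega) hA
            have hw₁l : w₁.length + 2 ≤ ℓ := by
              have h1 := br_length hA
              simp [FreeMonoid.length_mul] at h1; omega
            by_cases hij : i = j
            · -- B-iii-a
              subst hij
              have h1 := C3.1 rfl
              have h2 := (Hrec y w₁ q q (by omega) h1).1 rfl
              refine conclEq rfl ?_
              rw [hu2]
              exact (br.mull (m q) (br.mull (m i) h2)).trans hB.symm
            · rcases far_or_adj hij with hfij | haij
              · -- B-iii-b
                obtain ⟨w₂, hA2, hB2⟩ := conclFar' hfij C3
                have C5 := Hrec y w₂ q j (by omega) hA2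
                obtain ⟨w₃, hA3, hB3⟩ := conclAdj' haqj C5
                have C6 := Hrec w₁ (m q * (m j * w₃)) q i (by omega)
                  (hB2.trans (br.mull (m i) hB3))
                obtain ⟨w₄, hA4, hB4⟩ := conclAdj' hpq.symm C6
                have hw₃l : w₃.length + 3 ≤ ℓ := by
                  have h1 := br_length hB3
                  have h2 := br_length hA2
                  simp [FreeMonoid.length_mul] at h1 h2; omega
                have h5 := (Hrec (m j * w₃) (m i * w₄) q q
                  (by simp [FreeMonoid.length_mul]; omega) hB4).1 rfl
                have C8 := Hrec w₃ w₄ j i (by omega) h5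
                obtain ⟨w₅, hA5, hB5⟩ := conclFar' hfij.symm C8
                refine conclFar hfij ⟨m q * (m i * (m j * (m q * w₅))), ?_, ?_⟩
                · rw [hu2]
                  exact (br.mull (m q) (br.mull (m i) hA3)).trans <|
                    (br.mull (m q) (br.mull (m i) (br.mull (m j) (br.mull (m q) hA5)))).trans <|
                    (br.mull (m q) (swapH hfij (m q * (m i * w₅)))).trans <|
                    (br.mull (m q) (br.mull (m j) (braidH hpq w₅))).trans <|
                    (braidH haqj (m i * (m q * w₅))).trans <|
                    (br.mull (m j) (br.mull (m q) (swapH hfij.symm (m q * w₅))))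
                · exact hB.trans <| (br.mull (m q) (br.mull (m j) hA4)).trans <|
                    (br.mull (m q) (br.mull (m j) (br.mull (m i) (br.mull (m q) hB5)))).trans <|
                    (br.mull (m q) (swapH hfij.symm (m q * (m j * w₅)))).trans <|
                    (br.mull (m q) (br.mull (m i) (braidH haqj.symm w₅))).trans <|
                    (braidH hpq.symm (m j * (m q * w₅)))
              · -- B-iii-c : impossible
                exfalso
                rcases hpq with h | h <;> rcases haqj with h' | h' <;>
                  rcases haij with h'' | h'' <;> omega
      -- #### the first move happens inside u
      · set u' := x' * (m q * (m p * (m q * y))) with hu'def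
        have hstep : Step u u' := by rw [hu']; exact stepAdj hpq x' y
        have ht' : t = m i * u' := by rw [htx, mul_assoc]
        rw [ht'] at hc
        have hlen' : u'.length ≤ ℓ := by
          have h1 := br_length hstep.br; omega
        exact Concl.transport hstep.br (IHk k (Nat.lt_succ_self k) u' v i j hlen' hc)



-- ## Cancellativity

theorem br_cancel_head {i : Fin n} {u v : FreeMonoid (Fin n)}
    (h : br n (m i * u) (m i * v)) : br n u v := by
  obtain ⟨k, hk⟩ := br_iff_chain.mp h
  exact (keyChain u.length k u v i i le_rfl hk).1 rfl

theorem br_cancel_left (x : FreeMonoid (Fin n)) {u v : FreeMonoid (Fin n)}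
    (h : br n (x * u) (x * v)) : br n u v := by
  induction x using FreeMonoid.inductionOn' with
  | one => simpa using h
  | of_mul a xs ih =>
    rw [mul_assoc, mul_assoc] at h
    exact ih (br_cancel_head h)

theorem rel_rev {a b : FreeMonoid (Fin n)} (h : braidMonoidRel n a b) :
    br n a.reverse b.reverse := by
  rcases h with ⟨i, j, hij, rfl, rfl⟩ | ⟨i, j, hij, rfl, rfl⟩
  · simp only [FreeMonoid.reverse_mul, FreeMonoid.reverse_of]
    exact bcomm (Or.inr hij)
  · simp only [FreeMonoid.reverse_mul, FreeMonoid.reverse_of, ← mul_assoc]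
    exact bbraid (Or.inl hij)

theorem br_rev {u v : FreeMonoid (Fin n)} (h : br n u v) : br n u.reverse v.reverse := by
  induction h with
  | of a b hab => exact rel_rev hab
  | refl x => exact br.refl _
  | symm _ ih => exact ih.symm
  | trans _ _ ih₁ ih₂ => exact ih₁.trans ih₂
  | mul _ _ ih₁ ih₂ =>
    rw [FreeMonoid.reverse_mul, FreeMonoid.reverse_mul]
    exact ih₂.mul ih₁

theorem br_cancel_right (x : FreeMonoid (Fin n)) {u v : FreeMonoid (Fin n)}
    (h : br n (u * x) (v * x)) : br n u v := by
  have h1 := br_rev h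
  rw [FreeMonoid.reverse_mul, FreeMonoid.reverse_mul] at h1
  have h2 := br_cancel_left _ h1
  have h3 := br_rev h2
  rwa [FreeMonoid.reverse_reverse, FreeMonoid.reverse_reverse] at h3


-- ## The fundamental word Δ

theorem br_of_eq {u v : FreeMonoid (Fin n)} (h : u = v) : br n u v := h ▸ br.refl u

def gen (n a : ℕ) : FreeMonoid (Fin n) := if h : a < n then FreeMonoid.of ⟨a, h⟩ else 1

theorem gen_eq {a : ℕ} (h : a < n) : gen n a = m ⟨a, h⟩ := dif_pos h

theorem swapG {a b : ℕ} (hab : a + 2 ≤ b ∨ b + 2 ≤ a) (ha : a < n) (hb : b < n) :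
    br n (gen n a * gen n b) (gen n b * gen n a) := by
  rw [gen_eq ha, gen_eq hb]
  exact bcomm hab

theorem braidG {a b : ℕ} (hab : a + 1 = b ∨ b + 1 = a) (ha : a < n) (hb : b < n) :
    br n (gen n a * gen n b * gen n a) (gen n b * gen n a * gen n b) := by
  rw [gen_eq ha, gen_eq hb]
  exact bbraid hab

def asc (n s : ℕ) : ℕ → FreeMonoid (Fin n)
  | 0 => 1
  | k+1 => if k < s then 1 else asc n s k * gen n k

def dsc (n s : ℕ) : ℕ → FreeMonoid (Fin n)
  | 0 => 1
  | k+1 => if k < s then 1 else gen n k * dsc n s k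

def TW (n s : ℕ) : ℕ → FreeMonoid (Fin n)
  | 0 => 1
  | k+1 => if k < s then 1 else asc n s (k+1) * TW n s k

theorem asc_zero {s : ℕ} : asc n s 0 = 1 := rfl
theorem dsc_zero {s : ℕ} : dsc n s 0 = 1 := rfl
theorem TW_zero {s : ℕ} : TW n s 0 = 1 := rfl

theorem asc_succ {s k : ℕ} (h : s ≤ k) : asc n s (k+1) = asc n s k * gen n k := by
  simp [asc, Nat.not_lt.mpr h]

theorem dsc_succ {s k : ℕ} (h : s ≤ k) : dsc n s (k+1) = gen n k * dsc n s k := by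
  simp [dsc, Nat.not_lt.mpr h]

theorem TW_succ {s k : ℕ} (h : s ≤ k) : TW n s (k+1) = asc n s (k+1) * TW n s k := by
  simp [TW, Nat.not_lt.mpr h]

theorem asc_nil {s : ℕ} : ∀ {k}, k ≤ s → asc n s k = 1 := by
  intro k
  induction k with
  | zero => intro _; rfl
  | succ k ih => intro h; simp [asc, Nat.lt_of_succ_le h]

theorem dsc_nil {s : ℕ} : ∀ {k}, k ≤ s → dsc n s k = 1 := by
  intro k
  induction k with
  | zero => intro _; rfl
  | succ k ih => intro h; simp [dsc, Nat.lt_of_succ_le h]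

theorem TW_nil {s : ℕ} : ∀ {k}, k ≤ s → TW n s k = 1 := by
  intro k
  induction k with
  | zero => intro _; rfl
  | succ k ih => intro h; simp [TW, Nat.lt_of_succ_le h]

theorem commA {s : ℕ} : ∀ {k j}, k + 1 ≤ j → j < n →
    br n (gen n j * asc n s k) (asc n s k * gen n j) := by
  intro k
  induction k with
  | zero => intro j _ _; simp only [asc_zero, mul_one, one_mul]; exact br.refl _
  | succ k ih =>
    intro j hj hjn
    by_cases hks : k < s
    · simp only [asc, if_pos hks, mul_one, one_mul]; exact br.refl _
    · rw [asc_succ (Nat.not_lt.mp hks), ← mul_assoc]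
      refine ((ih (by omega) hjn).mulr (gen n k)).trans ?_
      rw [mul_assoc, mul_assoc]
      exact br.mull (asc n s k)
        (swapG (a := j) (b := k) (Or.inr (by omega)) hjn (by omega))

theorem commD {s : ℕ} : ∀ {k j}, k + 1 ≤ j → j < n →
    br n (gen n j * dsc n s k) (dsc n s k * gen n j) := by
  intro k
  induction k with
  | zero => intro j _ _; simp only [dsc_zero, mul_one, one_mul]; exact br.refl _
  | succ k ih =>
    intro j hj hjn
    by_cases hks : k < s
    · simp only [dsc, if_pos hks, mul_one, one_mul]; exact br.refl _
    · rw [dsc_succ (Nat.not_lt.mp hks), ← mul_assoc]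
      refine ((swapG (a := j) (b := k) (Or.inr (by omega)) hjn (by omega)).mulr
        (dsc n s k)).trans ?_
      rw [mul_assoc, mul_assoc]
      exact br.mull (gen n k) (ih (by omega) hjn)

theorem fact1 {s : ℕ} : ∀ {k j}, s ≤ j → j + 2 ≤ k → k ≤ n →
    br n (gen n (j+1) * asc n s k) (asc n s k * gen n j) := by
  intro k
  induction k with
  | zero => intro j _ h _; omega
  | succ k ih =>
    intro j hsj hjk hkn
    rcases Nat.lt_or_ge (j + 2) (k + 1) with hlt | hge
    · rw [asc_succ (by omega), ← mul_assoc]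
      refine ((ih hsj (by omega) (by omega)).mulr (gen n k)).trans ?_
      rw [mul_assoc, mul_assoc]
      exact br.mull (asc n s k)
        (swapG (a := j) (b := k) (Or.inl (by omega)) (by omega) (by omega))
    · have hk : k = j + 1 := by omega
      subst hk
      rw [asc_succ (by omega), asc_succ (by omega)]
      have h1 : br n (gen n (j+1) * (asc n s j * gen n j * gen n (j+1)))
          (asc n s j * (gen n (j+1) * gen n j * gen n (j+1))) := by
        have h0 := (commA (s := s) (k := j) (j := j + 1) (by omega) (by omega)).mulr
          (gen n j * gen n (j+1))
        refine (br_of_eq (by simp [mul_assoc])).trans (h0.trans (br_of_eq (by simp [mul_assoc])))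
      refine h1.trans ?_
      refine (br.mull (asc n s j)
        (braidG (a := j+1) (b := j) (Or.inr rfl) (by omega) (by omega))).trans ?_
      exact br_of_eq (by simp [mul_assoc])

theorem fact1' {s : ℕ} : ∀ {k i}, s ≤ i → i + 2 ≤ k → k ≤ n →
    br n (gen n i * dsc n s k) (dsc n s k * gen n (i+1)) := by
  intro k
  induction k with
  | zero => intro i _ h _; omega
  | succ k ih =>
    intro i hsi hik hkn
    rcases Nat.lt_or_ge (i + 2) (k + 1) with hlt | hge
    · rw [dsc_succ (by omega), ← mul_assoc]
      refine ((swapG (a := i) (b := k) (Or.inl (by omega)) (by omega) (by omega)).mulr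
        (dsc n s k)).trans ?_
      rw [mul_assoc, mul_assoc]
      exact br.mull (gen n k) (ih hsi (by omega) (by omega))
    · have hk : k = i + 1 := by omega
      subst hk
      rw [dsc_succ (by omega), dsc_succ (by omega)]
      -- gen i * (gen (i+1) * (gen i * dsc s i)) ≐ (gen (i+1) * (gen i * dsc s i)) * gen (i+1)
      have h1 : br n (gen n i * (gen n (i+1) * (gen n i * dsc n s i)))
          (gen n (i+1) * (gen n i * (gen n (i+1) * dsc n s i))) := by
        have h0 := (braidG (a := i) (b := i+1) (Or.inl rfl) (by omega) (by omega)).mulr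
          (dsc n s i)
        refine (br_of_eq (by simp [mul_assoc])).trans (h0.trans (br_of_eq (by simp [mul_assoc])))
      refine h1.trans ?_
      refine (br.mull (gen n (i+1)) (br.mull (gen n i)
        (commD (s := s) (k := i) (j := i+1) (by omega) (by omega)))).trans ?_
      exact br_of_eq (by simp [mul_assoc])

theorem factF {s : ℕ} : ∀ {k}, s + 1 ≤ k → k ≤ n →
    br n (asc n s k * dsc n s (k-1)) (dsc n s k * asc n (s+1) k) := by
  intro k
  induction k with
  | zero => intro h _; omega
  | succ k ih =>
    intro hk hkn
    rcases Nat.lt_or_ge k (s + 1) with hks | hks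
    · have hk0 : k = s := by omega
      subst hk0
      simp only [Nat.add_sub_cancel]
      rw [asc_succ le_rfl, dsc_succ le_rfl]
      simp only [asc_nil (le_refl _), dsc_nil (le_refl _)]
      exact br_of_eq (by simp)
    · obtain ⟨k', rfl⟩ : ∃ k', k = k' + 1 := ⟨k - 1, by omega⟩
      simp only [Nat.add_sub_cancel]
      have hsk' : s ≤ k' := by omega
      have e1 : br n (asc n s (k'+2) * dsc n s (k'+1))
          (asc n s k' * (gen n k' * (gen n (k'+1) * (gen n k' * dsc n s k')))) :=
        br_of_eq (by
          rw [asc_succ (by omega : s ≤ k' + 1), asc_succ hsk', dsc_succ hsk']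
          simp [mul_assoc])
      have e2 : br n (asc n s k' * (gen n k' * (gen n (k'+1) * (gen n k' * dsc n s k'))))
          (asc n s k' * (gen n (k'+1) * (gen n k' * (gen n (k'+1) * dsc n s k')))) :=
        br.mull _ (by
          simpa only [mul_assoc] using
            (braidG (a := k') (b := k'+1) (Or.inl rfl) (by omega) (by omega)).mulr
              (dsc n s k'))
      have e3 : br n (asc n s k' * (gen n (k'+1) * (gen n k' * (gen n (k'+1) * dsc n s k'))))
          (gen n (k'+1) * (asc n s k' * (gen n k' * (gen n (k'+1) * dsc n s k')))) := by
        simpa only [mul_assoc] using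
          (commA (s := s) (k := k') (j := k'+1) (by omega) (by omega)).symm.mulr
            (gen n k' * (gen n (k'+1) * dsc n s k'))
      have e4 : br n (gen n (k'+1) * (asc n s k' * (gen n k' * (gen n (k'+1) * dsc n s k'))))
          (gen n (k'+1) * (asc n s k' * (gen n k' * (dsc n s k' * gen n (k'+1))))) :=
        br.mull _ (br.mull _ (br.mull _
          (commD (s := s) (k := k') (j := k'+1) (by omega) (by omega))))
      have hIH := ih (by omega) (by omega)
      simp only [Nat.add_sub_cancel] at hIH
      have e5 : br n (gen n (k'+1) * (asc n s k' * (gen n k' * (dsc n s k' * gen n (k'+1)))))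
          (gen n (k'+1) * (dsc n s (k'+1) * (asc n (s+1) (k'+1) * gen n (k'+1)))) := by
        have h0 := br.mull (gen n (k'+1)) (hIH.mulr (gen n (k'+1)))
        rw [asc_succ hsk'] at h0
        simpa only [mul_assoc] using h0
      have e6 : br n (gen n (k'+1) * (dsc n s (k'+1) * (asc n (s+1) (k'+1) * gen n (k'+1))))
          (dsc n s (k'+2) * asc n (s+1) (k'+2)) :=
        br_of_eq (by
          rw [dsc_succ (by omega : s ≤ k' + 1), asc_succ (by omega : s + 1 ≤ k' + 1)]
          simp [mul_assoc])
      exact e1.trans (e2.trans (e3.trans (e4.trans (e5.trans e6))))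

theorem factE {s : ℕ} : ∀ {k}, k ≤ n → br n (TW n s k) (dsc n s k * TW n (s+1) k) := by
  intro k
  induction k with
  | zero => intro _; exact br_of_eq (by simp [TW_zero, dsc_zero])
  | succ k ih =>
    intro hkn
    by_cases hks : k < s
    · rw [TW_nil (by omega), dsc_nil (by omega), TW_nil (by omega)]
      exact br_of_eq (by simp)
    · push_neg at hks
      have hF := factF (s := s) (k := k+1) (by omega) hkn
      simp only [Nat.add_sub_cancel] at hF
      have e1 : br n (TW n s (k+1)) (asc n s (k+1) * (dsc n s k * TW n (s+1) k)) := by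
        rw [TW_succ hks]
        exact br.mull _ (ih (by omega))
      have e2 : br n (asc n s (k+1) * (dsc n s k * TW n (s+1) k))
          (dsc n s (k+1) * (asc n (s+1) (k+1) * TW n (s+1) k)) := by
        simpa only [mul_assoc] using hF.mulr (TW n (s+1) k)
      have e3 : br n (dsc n s (k+1) * (asc n (s+1) (k+1) * TW n (s+1) k))
          (dsc n s (k+1) * TW n (s+1) (k+1)) := by
        rcases Nat.lt_or_ge k (s+1) with h | h
        · have hk0 : s = k := by omega
          subst hk0
          rw [TW_nil (by omega : s ≤ s + 1), TW_nil (le_refl (s+1)), asc_nil (le_refl (s+1))]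
          exact br_of_eq (by simp)
        · rw [TW_succ h]
          exact br.refl _
      exact e1.trans (e2.trans e3)

theorem factC : ∀ (d : ℕ) {s k i r : ℕ}, k ≤ s + d → s ≤ i → i + 1 ≤ k → k ≤ n →
    s + k = r + i + 1 →
    br n (gen n i * TW n s k) (TW n s k * gen n r) := by
  intro d
  induction d with
  | zero => intro s k i r h1 h2 h3 _ _; omega
  | succ d ih =>
    intro s k i r hd hsi hik hkn hr
    rcases Nat.lt_or_ge s i with hsi' | hsi'
    · -- i ≥ s + 1
      obtain ⟨k', rfl⟩ : ∃ k', k = k' + 1 := ⟨k - 1, by omega⟩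
      obtain ⟨i', rfl⟩ : ∃ i', i = i' + 1 := ⟨i - 1, by omega⟩
      have e1 : br n (gen n (i'+1) * TW n s (k'+1)) (asc n s (k'+1) * (gen n i' * TW n s k')) := by
        rw [TW_succ (by omega)]
        simpa only [mul_assoc] using
          (fact1 (s := s) (k := k'+1) (j := i') (by omega) (by omega) hkn).mulr (TW n s k')
      have e2 : br n (asc n s (k'+1) * (gen n i' * TW n s k'))
          (asc n s (k'+1) * (TW n s k' * gen n r)) :=
        br.mull _ (ih (s := s) (k := k') (i := i') (r := r)
          (by omega) (by omega) (by omega) (by omega) (by omega))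
      have e3 : br n (asc n s (k'+1) * (TW n s k' * gen n r)) (TW n s (k'+1) * gen n r) :=
        br_of_eq (by rw [TW_succ (by omega)]; simp [mul_assoc])
      exact e1.trans (e2.trans e3)
    · -- i = s
      have hise : s = i := by omega
      subst hise
      rcases Nat.lt_or_ge (s + 1) k with hk1 | hk1
      · have e1 : br n (gen n s * TW n s k) (gen n s * (dsc n s k * TW n (s+1) k)) :=
          br.mull _ (factE hkn)
        have e2 : br n (gen n s * (dsc n s k * TW n (s+1) k))
            (dsc n s k * (gen n (s+1) * TW n (s+1) k)) := by
          simpa only [mul_assoc] using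
            (fact1' (s := s) (k := k) (i := s) le_rfl (by omega) hkn).mulr (TW n (s+1) k)
        have e3 : br n (dsc n s k * (gen n (s+1) * TW n (s+1) k))
            (dsc n s k * (TW n (s+1) k * gen n r)) :=
          br.mull _ (ih (s := s+1) (k := k) (i := s+1) (r := r)
            (by omega) (by omega) (by omega) (by omega) (by omega))
        have e4 : br n (dsc n s k * (TW n (s+1) k * gen n r)) (TW n s k * gen n r) := by
          simpa only [mul_assoc] using (factE (s := s) hkn).symm.mulr (gen n r)
        exact e1.trans (e2.trans (e3.trans e4))
      · -- k = s + 1, r = s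
        have hk : k = s + 1 := by omega
        have hrs : s = r := by omega
        subst hk
        subst hrs
        have hTW : TW n s (s+1) = gen n s := by
          rw [TW_succ le_rfl, asc_succ le_rfl]
          rw [TW_nil (le_refl _), asc_nil (le_refl _)]
          simp
        rw [hTW]
        exact br.refl _

theorem ascHead {s : ℕ} : ∀ {k}, s + 1 ≤ k → asc n s k = gen n s * asc n (s+1) k := by
  intro k
  induction k with
  | zero => intro h; omega
  | succ k ih =>
    intro hk
    rcases Nat.lt_or_ge k (s + 1) with hks | hks
    · have hk0 : k = s := by omega
      subst hk0
      rw [asc_succ le_rfl, asc_nil (le_refl _), asc_nil (le_refl _)]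
      simp
    · rw [asc_succ (by omega), asc_succ (by omega : s + 1 ≤ k), ih hks, mul_assoc]

theorem divTW : ∀ (k : ℕ) {s i : ℕ}, s ≤ i → i + 1 ≤ k → k ≤ n →
    ∃ d, br n (TW n s k) (gen n i * d) := by
  intro k
  induction k with
  | zero => intro s i _ h _; omega
  | succ k ih =>
    intro s i hsi hik hkn
    rcases Nat.lt_or_ge s i with hsi' | hsi'
    · obtain ⟨i', rfl⟩ : ∃ i', i = i' + 1 := ⟨i - 1, by omega⟩
      obtain ⟨d', hd'⟩ := ih (s := s) (i := i') (by omega) (by omega) (by omega)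
      refine ⟨asc n s (k+1) * d', ?_⟩
      have e1 : br n (TW n s (k+1)) (asc n s (k+1) * (gen n i' * d')) := by
        rw [TW_succ (by omega)]
        exact br.mull _ hd'
      have e2 : br n (asc n s (k+1) * (gen n i' * d')) (gen n (i'+1) * (asc n s (k+1) * d')) := by
        simpa only [mul_assoc] using
          (fact1 (s := s) (k := k+1) (j := i') (by omega) (by omega) hkn).symm.mulr d'
      exact e1.trans e2
    · rw [show i = s by omega]
      refine ⟨asc n (s+1) (k+1) * TW n s k, ?_⟩
      exact br_of_eq (by rw [TW_succ (by omega), ascHead (by omega)]; simp [mul_assoc])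


-- ## Powers of Δ and common multiples

def Delta (n : ℕ) : FreeMonoid (Fin n) := TW n 0 n

theorem delta_div (i : Fin n) : ∃ d, br n (Delta n) (m i * d) := by
  obtain ⟨d, hd⟩ := divTW (n := n) n (s := 0) (i := i.val) (Nat.zero_le _) i.isLt le_rfl
  refine ⟨d, ?_⟩
  rwa [gen_eq i.isLt, Fin.eta] at hd

theorem delta_comm (i : Fin n) : ∃ j : Fin n, br n (m i * Delta n) (Delta n * m j) := by
  have hin := i.isLt
  have h := factC (n := n) n (s := 0) (k := n) (i := i.val) (r := n - 1 - i.val)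
    (by omega) (Nat.zero_le _) i.isLt le_rfl (by omega)
  refine ⟨⟨n - 1 - i.val, by omega⟩, ?_⟩
  rwa [gen_eq i.isLt, Fin.eta, gen_eq (show n - 1 - i.val < n by omega)] at h

theorem word_comm : ∀ u : FreeMonoid (Fin n), ∃ u', br n (u * Delta n) (Delta n * u') := by
  intro u
  induction u using FreeMonoid.inductionOn' with
  | one => exact ⟨1, br_of_eq (by simp)⟩
  | of_mul a xs ih =>
    obtain ⟨xs', hxs⟩ := ih
    obtain ⟨j, hj⟩ := delta_comm a
    refine ⟨m j * xs', ?_⟩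
    have e1 : br n (FreeMonoid.of a * xs * Delta n) (FreeMonoid.of a * (Delta n * xs')) := by
      rw [mul_assoc]
      exact br.mull _ hxs
    have e2 : br n (FreeMonoid.of a * (Delta n * xs')) (Delta n * (m j * xs')) := by
      simpa only [mul_assoc] using hj.mulr xs'
    exact e1.trans e2

theorem pow_comm : ∀ (L : ℕ) (u : FreeMonoid (Fin n)),
    ∃ u', br n (u * (Delta n)^L) ((Delta n)^L * u') := by
  intro L
  induction L with
  | zero => intro u; exact ⟨u, br_of_eq (by simp)⟩
  | succ L ih =>
    intro u
    obtain ⟨u', hu'⟩ := ih u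
    obtain ⟨u'', hu''⟩ := word_comm u'
    refine ⟨u'', ?_⟩
    have e1 : br n (u * (Delta n)^(L+1)) ((Delta n)^L * (u' * Delta n)) := by
      simpa only [pow_succ, mul_assoc] using hu'.mulr (Delta n)
    have e2 : br n ((Delta n)^L * (u' * Delta n)) ((Delta n)^(L+1) * u'') := by
      simpa only [pow_succ, mul_assoc] using br.mull ((Delta n)^L) hu''
    exact e1.trans e2

theorem pump : ∀ (u : FreeMonoid (Fin n)) (L : ℕ), u.length ≤ L →
    ∃ c, br n ((Delta n)^L) (u * c) := by
  intro u
  induction u using FreeMonoid.inductionOn' with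
  | one => intro L _; exact ⟨(Delta n)^L, br_of_eq (by simp)⟩
  | of_mul a xs ih =>
    intro L hL
    have hlen : 1 + xs.length ≤ L := by
      simpa [FreeMonoid.length_mul] using hL
    obtain ⟨L', rfl⟩ : ∃ L', L = L' + 1 := ⟨L - 1, by omega⟩
    obtain ⟨d, hd⟩ := delta_div (n := n) a
    obtain ⟨d', hd'⟩ := pow_comm L' d
    obtain ⟨c', hc'⟩ := ih L' (by omega)
    refine ⟨c' * d', ?_⟩
    have e1 : br n ((Delta n)^(L'+1)) (m a * (d * (Delta n)^L')) := by
      rw [pow_succ']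
      simpa only [mul_assoc] using hd.mulr ((Delta n)^L')
    have e2 : br n (m a * (d * (Delta n)^L')) (m a * ((Delta n)^L' * d')) :=
      br.mull _ hd'
    have e3 : br n (m a * ((Delta n)^L' * d')) (m a * (xs * (c' * d'))) := by
      refine br.mull _ ?_
      simpa only [mul_assoc] using hc'.mulr d'
    refine e1.trans (e2.trans (e3.trans (br_of_eq (by simp [mul_assoc]))))

theorem common_left (u v : FreeMonoid (Fin n)) : ∃ a b, br n (a * u) (b * v) := by
  obtain ⟨c, hc⟩ := pump u.reverse (max u.length v.length)
    (by simp [FreeMonoid.length_reverse])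
  obtain ⟨c', hc'⟩ := pump v.reverse (max u.length v.length)
    (by simp [FreeMonoid.length_reverse])
  have h1 := br_rev hc
  rw [FreeMonoid.reverse_mul, FreeMonoid.reverse_reverse] at h1
  have h2 := br_rev hc'
  rw [FreeMonoid.reverse_mul, FreeMonoid.reverse_reverse] at h2
  exact ⟨c.reverse, c'.reverse, h1.symm.trans h2⟩

-- ## The braid monoid as a quotient

theorem BM_left_cancel {a x y : (conGen (braidMonoidRel n)).Quotient}
    (h : a * x = a * y) : x = y := by
  induction a using Con.induction_on with
  | H a =>
  induction x using Con.induction_on with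
  | H x =>
  induction y using Con.induction_on with
  | H y =>
  have h' : br n (a * x) (a * y) := (Con.eq _).mp (by rw [Con.coe_mul, Con.coe_mul]; exact h)
  exact (Con.eq _).mpr (br_cancel_left a h')

theorem BM_right_cancel {a x y : (conGen (braidMonoidRel n)).Quotient}
    (h : x * a = y * a) : x = y := by
  induction a using Con.induction_on with
  | H a =>
  induction x using Con.induction_on with
  | H x =>
  induction y using Con.induction_on with
  | H y =>
  have h' : br n (x * a) (y * a) := (Con.eq _).mp (by rw [Con.coe_mul, Con.coe_mul]; exact h)
  exact (Con.eq _).mpr (br_cancel_right a h')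

theorem BM_ore (r s : (conGen (braidMonoidRel n)).Quotient) :
    ∃ (r' s' : (conGen (braidMonoidRel n)).Quotient), s' * r = r' * s := by
  induction r using Con.induction_on with
  | H r =>
  induction s using Con.induction_on with
  | H s =>
  obtain ⟨a, b, hab⟩ := common_left r s
  refine ⟨(b : (conGen (braidMonoidRel n)).Quotient), (a : (conGen (braidMonoidRel n)).Quotient), ?_⟩
  rw [← Con.coe_mul, ← Con.coe_mul]
  exact (Con.eq _).mpr hab

noncomputable instance oreBM :
    OreLocalization.OreSet (⊤ : Submonoid (conGen (braidMonoidRel n)).Quotient) where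
  ore_right_cancel := fun r₁ r₂ s h => ⟨1, by
    simp only [OneMemClass.coe_one, one_mul]
    exact BM_right_cancel h⟩
  oreNum := fun r s => (BM_ore r s.1).choose
  oreDenom := fun r s => ⟨(BM_ore r s.1).choose_spec.choose, trivial⟩
  ore_eq := fun r s => (BM_ore r s.1).choose_spec.choose_spec

theorem num_inj : Function.Injective
    (OreLocalization.numeratorHom :
      (conGen (braidMonoidRel n)).Quotient →*
        (conGen (braidMonoidRel n)).Quotient[(⊤ : Submonoid (conGen (braidMonoidRel n)).Quotient)⁻¹]) := by
  intro a b h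
  rw [OreLocalization.numeratorHom_apply, OreLocalization.numeratorHom_apply,
    OreLocalization.oreDiv_eq_iff] at h
  obtain ⟨u, v, h1, h2⟩ := h
  have huv : (u : (conGen (braidMonoidRel n)).Quotient) = v := by
    simpa using h2
  rw [Submonoid.smul_def, smul_eq_mul, huv] at h1
  exact (BM_left_cancel h1).symm


-- ## Relations hold in the braid group

theorem braid_group_comm {i j : Fin n} (hij : i.val + 2 ≤ j.val) : σ i * σ j = σ j * σ i := by
  have hmem : (FreeGroup.of i * FreeGroup.of j * (FreeGroup.of j * FreeGroup.of i)⁻¹) ∈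
      braidRels n := Or.inl ⟨i, j, hij, rfl⟩
  have h1 : (PresentedGroup.mk (braidRels n))
      (FreeGroup.of i * FreeGroup.of j * (FreeGroup.of j * FreeGroup.of i)⁻¹) = 1 :=
    (QuotientGroup.eq_one_iff _).mpr (Subgroup.subset_normalClosure hmem)
  rw [map_mul, map_inv, map_mul, map_mul, mul_inv_eq_one] at h1
  exact h1

theorem braid_group_braid {i j : Fin n} (hij : i.val + 1 = j.val) :
    σ i * σ j * σ i = σ j * σ i * σ j := by
  have hmem : (FreeGroup.of i * FreeGroup.of j * FreeGroup.of i *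
      (FreeGroup.of j * FreeGroup.of i * FreeGroup.of j)⁻¹) ∈ braidRels n :=
    Or.inr ⟨i, j, hij, rfl⟩
  have h1 : (PresentedGroup.mk (braidRels n))
      (FreeGroup.of i * FreeGroup.of j * FreeGroup.of i *
        (FreeGroup.of j * FreeGroup.of i * FreeGroup.of j)⁻¹) = 1 :=
    (QuotientGroup.eq_one_iff _).mpr (Subgroup.subset_normalClosure hmem)
  rw [map_mul, map_inv, map_mul, map_mul, map_mul, map_mul, mul_inv_eq_one] at h1
  exact h1

theorem easy_dir {w w' : FreeMonoid (Fin n)} (h : conGen (braidMonoidRel n) w w') :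
    FreeMonoid.lift (fun i => σ i) w = FreeMonoid.lift (fun i => σ i) w' := by
  have hle : conGen (braidMonoidRel n) ≤ Con.ker (FreeMonoid.lift (fun i => σ i)) := by
    apply Con.conGen_le.mpr
    rintro x y (⟨i, j, hij, rfl, rfl⟩ | ⟨i, j, hij, rfl, rfl⟩) <;>
      rw [Con.ker_rel] <;>
      simp only [map_mul, FreeMonoid.lift_eval_of]
    · exact braid_group_comm hij
    · exact braid_group_braid hij
  exact (Con.ker_rel _).mp (hle h)

-- ## The homomorphism to the units of the Ore localization

noncomputable def funit (i : Fin n) :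
    ((conGen (braidMonoidRel n)).Quotient[(⊤ : Submonoid (conGen (braidMonoidRel n)).Quotient)⁻¹])ˣ :=
  (OreLocalization.numerator_isUnit
    (⟨((FreeMonoid.of i : FreeMonoid (Fin n)) : (conGen (braidMonoidRel n)).Quotient), trivial⟩ :
      (⊤ : Submonoid (conGen (braidMonoidRel n)).Quotient))).unit

theorem funit_coe (i : Fin n) : ((funit i : _ˣ) :
    (conGen (braidMonoidRel n)).Quotient[(⊤ : Submonoid (conGen (braidMonoidRel n)).Quotient)⁻¹])
      = OreLocalization.numeratorHom
        ((FreeMonoid.of i : FreeMonoid (Fin n)) : (conGen (braidMonoidRel n)).Quotient) :=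
  IsUnit.unit_spec _

theorem funit_rels : ∀ r ∈ braidRels n, FreeGroup.lift (funit (n := n)) r = 1 := by
  rintro r (⟨i, j, hij, rfl⟩ | ⟨i, j, hij, rfl⟩)
  · simp only [map_mul, map_inv, FreeGroup.lift_apply_of, mul_inv_eq_one]
    apply Units.ext
    rw [Units.val_mul, Units.val_mul, funit_coe, funit_coe, ← map_mul, ← map_mul,
      ← Con.coe_mul, ← Con.coe_mul]
    congr 1
    exact (Con.eq _).mpr (bcomm (Or.inl hij))
  · simp only [map_mul, map_inv, FreeGroup.lift_apply_of, mul_inv_eq_one]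
    apply Units.ext
    rw [Units.val_mul, Units.val_mul, Units.val_mul, Units.val_mul, funit_coe, funit_coe,
      ← map_mul, ← map_mul, ← map_mul, ← map_mul, ← Con.coe_mul, ← Con.coe_mul,
      ← Con.coe_mul, ← Con.coe_mul]
    congr 1
    exact (Con.eq _).mpr (bbraid (Or.inl hij))

noncomputable def phi : BraidGroup n →*
    ((conGen (braidMonoidRel n)).Quotient[(⊤ : Submonoid (conGen (braidMonoidRel n)).Quotient)⁻¹])ˣ :=
  PresentedGroup.toGroup funit_rels

theorem phi_lift (w : FreeMonoid (Fin n)) :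
    ((phi (FreeMonoid.lift (fun i => σ i) w) : _ˣ) :
      (conGen (braidMonoidRel n)).Quotient[(⊤ : Submonoid (conGen (braidMonoidRel n)).Quotient)⁻¹])
      = OreLocalization.numeratorHom (w : (conGen (braidMonoidRel n)).Quotient) := by
  induction w using FreeMonoid.inductionOn' with
  | one =>
    have : ((1 : FreeMonoid (Fin n)) : (conGen (braidMonoidRel n)).Quotient) = 1 := rfl
    rw [map_one, map_one, Units.val_one, this, map_one]
  | of_mul a xs ih =>
    rw [map_mul, map_mul, Units.val_mul, ih]
    have hcoe : ((FreeMonoid.of a * xs : FreeMonoid (Fin n)) :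
        (conGen (braidMonoidRel n)).Quotient) = (FreeMonoid.of a : FreeMonoid (Fin n)) * xs :=
      Con.coe_mul (FreeMonoid.of a) xs
    rw [hcoe, map_mul]
    congr 1
    have h1 : phi (FreeMonoid.lift (fun i => σ i) (FreeMonoid.of a)) = funit a := by
      rw [FreeMonoid.lift_eval_of]
      exact PresentedGroup.toGroup.of funit_rels
    rw [h1, funit_coe]

theorem hard_dir {w w' : FreeMonoid (Fin n)}
    (h : FreeMonoid.lift (fun i => σ i) w = FreeMonoid.lift (fun i => σ i) w') :
    conGen (braidMonoidRel n) w w' := by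
  have h2 := congrArg (fun x => ((phi x : _ˣ) :
    (conGen (braidMonoidRel n)).Quotient[(⊤ : Submonoid (conGen (braidMonoidRel n)).Quotient)⁻¹])) h
  simp only [phi_lift] at h2
  exact (Con.eq _).mp (num_inj h2)

end Garside

/-- (Garside) Two positive words in the Artin generators represent the same
element of the braid group `Bₙ` iff they are identified by the monoid
congruence generated by the commutation and triple relations, i.e. iff they are
connected by a finite sequence of single applications of these relations. -/


theorem garside_word_problem {n : ℕ} (hn : 2 ≤ n) (w w' : FreeMonoid (Fin (n - 1))) :
    FreeMonoid.lift (fun i => σ i) w = FreeMonoid.lift (fun i => σ i) w' ↔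
      conGen (braidMonoidRel (n - 1)) w w' :=
  ⟨Garside.hard_dir, Garside.easy_dir⟩
end

section
/- Let n ≥ 2 and let σ_1,…,σ_{n−1} be the standard Artin generators of the braid group B_n. Let i_1,…,i_p and j_1,…,j_p be indices in {1,…,n−1} such that σ_{i_1}⋯σ_{i_p} = σ_{j_1}⋯σ_{j_p} in B_n. Then the tuples (σ_{i_1},…,σ_{i_p}) and (σ_{j_1},…,σ_{j_p}) in (B_n)^p are Hurwitz equivalent. -/
namespace BraidAux

abbrev Wd := List ℕ

/-- far-commutation condition -/
def Far (i j : ℕ) : Prop := i + 2 ≤ j ∨ j + 2 ≤ i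

/-- adjacency condition -/
def Adj (i j : ℕ) : Prop := j = i + 1 ∨ i = j + 1

lemma Far.symm {i j : ℕ} (h : Far i j) : Far j i := Or.symm h
lemma Adj.symm {i j : ℕ} (h : Adj i j) : Adj j i := Or.symm h

/-- one elementary braid-relation rewrite -/
inductive Bstep : Wd → Wd → Prop
  | comm (u v : Wd) (i j : ℕ) (h : i + 2 ≤ j) :
      Bstep (u ++ i :: j :: v) (u ++ j :: i :: v)
  | braid (u v : Wd) (i : ℕ) :
      Bstep (u ++ i :: (i+1) :: i :: v) (u ++ (i+1) :: i :: (i+1) :: v)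

/-- symmetric single step -/
def SS (w w' : Wd) : Prop := Bstep w w' ∨ Bstep w' w

lemma SS.symm {w w' : Wd} (h : SS w w') : SS w' w := Or.symm h

/-- positive equivalence of words -/
def beq : Wd → Wd → Prop := Relation.ReflTransGen SS

lemma beq.rfl {w : Wd} : beq w w := Relation.ReflTransGen.refl

lemma beq.trans {a b c : Wd} (h : beq a b) (h' : beq b c) : beq a c :=
  Relation.ReflTransGen.trans h h'

lemma beq.symm {a b : Wd} (h : beq a b) : beq b a :=
  (@Relation.ReflTransGen.symmetric _ SS ⟨fun _ _ hs => Or.symm hs⟩).symm _ _ h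

instance : Trans beq beq beq := ⟨beq.trans⟩

lemma beq_of_SS {a b : Wd} (h : SS a b) : beq a b := Relation.ReflTransGen.single h

lemma Bstep.context {w w' : Wd} (p q : Wd) (h : Bstep w w') :
    Bstep (p ++ w ++ q) (p ++ w' ++ q) := by
  cases h with
  | comm u v i j hij =>
      have := Bstep.comm (p ++ u) (v ++ q) i j hij
      simpa [List.append_assoc] using this
  | braid u v i =>
      have := Bstep.braid (p ++ u) (v ++ q) i
      simpa [List.append_assoc] using this

lemma beq.context {w w' : Wd} (p q : Wd) (h : beq w w') :
    beq (p ++ w ++ q) (p ++ w' ++ q) := by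
  induction h with
  | refl => exact beq.rfl
  | tail _ hs ih =>
      refine ih.trans (beq_of_SS ?_)
      rcases hs with hs | hs
      · exact Or.inl (hs.context p q)
      · exact Or.inr (hs.context p q)

lemma beq.appR {w w' : Wd} (q : Wd) (h : beq w w') : beq (w ++ q) (w' ++ q) := by
  simpa using h.context [] q

lemma beq.appL {w w' : Wd} (p : Wd) (h : beq w w') : beq (p ++ w) (p ++ w') := by
  simpa using h.context p []

lemma beq.cons {w w' : Wd} (x : ℕ) (h : beq w w') : beq (x :: w) (x :: w') := by
  simpa using h.appL [x]

/-- single commutation in context -/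
lemma bs_comm {i j : ℕ} (h : Far i j) (p q : Wd) :
    beq (p ++ i :: j :: q) (p ++ j :: i :: q) := by
  rcases h with h | h
  · exact beq_of_SS (Or.inl (Bstep.comm p q i j h))
  · exact beq_of_SS (Or.inr (Bstep.comm p q j i h))

/-- single braid move in context -/
lemma bs_braid {i j : ℕ} (h : Adj i j) (p q : Wd) :
    beq (p ++ i :: j :: i :: q) (p ++ j :: i :: j :: q) := by
  rcases h with h | h
  · subst h; exact beq_of_SS (Or.inl (Bstep.braid p q i))
  · subst h; exact beq_of_SS (Or.inr (Bstep.braid p q j))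

lemma Bstep.length {w w' : Wd} (h : Bstep w w') : w.length = w'.length := by
  cases h <;> simp

lemma beq.length {w w' : Wd} (h : beq w w') : w.length = w'.length := by
  induction h with
  | refl => rfl
  | tail _ hs ih => rcases hs with hs | hs
                    · exact ih.trans hs.length
                    · exact ih.trans hs.length.symm

lemma Bstep.mem_iff {w w' : Wd} (h : Bstep w w') (l : ℕ) : l ∈ w ↔ l ∈ w' := by
  cases h <;> simp <;> tauto

lemma beq.mem_iff {w w' : Wd} (h : beq w w') (l : ℕ) : l ∈ w ↔ l ∈ w' := by
  induction h with
  | refl => rfl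
  | tail _ hs ih => rcases hs with hs | hs
                    · exact ih.trans (hs.mem_iff l)
                    · exact ih.trans (hs.mem_iff l).symm

/-- a letter far from everything in `u` passes over `u` -/
lemma far_pass {a : ℕ} {u : Wd} (h : ∀ l ∈ u, Far a l) (v : Wd) :
    beq (a :: (u ++ v)) (u ++ a :: v) := by
  induction u with
  | nil => exact beq.rfl
  | cons x u ih =>
      have h1 : beq (a :: x :: (u ++ v)) (x :: a :: (u ++ v)) :=
        bs_comm (h x (by simp)) [] (u ++ v)
      refine h1.trans ?_
      have h2 := (ih (fun l hl => h l (by simp [hl]))).cons x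
      simpa using h2



/-- the complement: `i :: cpl i j ≈ j :: cpl j i` are the relations -/
instance (i j : ℕ) : Decidable (Far i j) := by unfold Far; infer_instance

infix:50 " ∼ " => beq

def cpl (i j : ℕ) : Wd :=
  if i = j then [] else if Far i j then [j] else [j, i]

lemma cpl_self (i : ℕ) : cpl i i = [] := by simp [cpl]

lemma cpl_far {i j : ℕ} (h : Far i j) : cpl i j = [j] := by
  have : i ≠ j := by rcases h with h | h <;> omega
  simp [cpl, this, h]

lemma cpl_adj {i j : ℕ} (h : Adj i j) : cpl i j = [j, i] := by
  have h1 : i ≠ j := by rcases h with h | h <;> omega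
  have h2 : ¬ Far i j := by rcases h with h | h <;> simp [Far] <;> omega
  simp [cpl, h1, h2]

lemma tri (i j : ℕ) : i = j ∨ Far i j ∨ Adj i j := by
  simp only [Far, Adj]; omega

lemma cpl_length (i j : ℕ) : (cpl i j).length = (cpl j i).length := by
  rcases tri i j with rfl | h | h
  · rfl
  · rw [cpl_far h, cpl_far h.symm]; rfl
  · rw [cpl_adj h, cpl_adj h.symm]; rfl

/-- the defining relations, in complement form -/
lemma rel_cpl (i j : ℕ) (t : Wd) : beq (i :: (cpl i j ++ t)) (j :: (cpl j i ++ t)) := by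
  rcases tri i j with rfl | h | h
  · exact beq.rfl
  · rw [cpl_far h, cpl_far h.symm]
    exact bs_comm h [] t
  · rw [cpl_adj h, cpl_adj h.symm]
    exact bs_braid h [] t

/-- identity T1: `x m y x m ≈ m y x m y` -/
lemma T1 {x m y : ℕ} (hxm : Adj x m) (hmy : Adj m y) (hxy : Far x y) (F : Wd) :
    beq (x :: m :: y :: x :: m :: F) (m :: y :: x :: m :: y :: F) := by
  calc (x :: m :: y :: x :: m :: F) ∼ (x :: m :: x :: y :: m :: F) :=
        bs_comm hxy.symm [x, m] (m :: F)
    _ ∼ (m :: x :: m :: y :: m :: F) := bs_braid hxm [] (y :: m :: F)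
    _ ∼ (m :: x :: y :: m :: y :: F) := bs_braid hmy [m, x] F
    _ ∼ (m :: y :: x :: m :: y :: F) := bs_comm hxy [m] (m :: y :: F)

/-- identity T2: `x m y m x ≈ y m x m y` -/
lemma T2 {x m y : ℕ} (hxm : Adj x m) (hmy : Adj m y) (hxy : Far x y) (F : Wd) :
    beq (x :: m :: y :: m :: x :: F) (y :: m :: x :: m :: y :: F) := by
  calc (x :: m :: y :: m :: x :: F) ∼ (x :: y :: m :: y :: x :: F) :=
        bs_braid hmy [x] (x :: F)
    _ ∼ (y :: x :: m :: y :: x :: F) := bs_comm hxy [] (m :: y :: x :: F)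
    _ ∼ (y :: x :: m :: x :: y :: F) := bs_comm hxy.symm [y, x, m] F
    _ ∼ (y :: m :: x :: m :: y :: F) := bs_braid hxm [y] (y :: F)

/-- identity T3: `m x y m x ≈ y m x y m` -/
lemma T3 {m x y : ℕ} (hmx : Adj m x) (hmy : Adj m y) (hxy : Far x y) (F : Wd) :
    beq (m :: x :: y :: m :: x :: F) (y :: m :: x :: y :: m :: F) := by
  calc (m :: x :: y :: m :: x :: F) ∼ (m :: y :: x :: m :: x :: F) :=
        bs_comm hxy [m] (m :: x :: F)
    _ ∼ (m :: y :: m :: x :: m :: F) := bs_braid (Adj.symm hmx) [m, y] F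
    _ ∼ (y :: m :: y :: x :: m :: F) := (bs_braid (Adj.symm hmy) [] (x :: m :: F)).symm
    _ ∼ (y :: m :: x :: y :: m :: F) := bs_comm hxy.symm [y, m] (m :: F)

lemma SS.length {w w' : Wd} (h : SS w w') : w.length = w'.length := by
  rcases h with h | h
  exacts [h.length, h.length.symm]

lemma cpl_mem {i j l : ℕ} (h : l ∈ cpl i j) : l = i ∨ l = j := by
  unfold cpl at h
  split_ifs at h <;> simp at h <;> tauto

lemma bstep_cases {w w' : Wd} (h : Bstep w w') :
    (∃ u v i j, i + 2 ≤ j ∧ w = u ++ i :: j :: v ∧ w' = u ++ j :: i :: v) ∨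
    (∃ u v i, w = u ++ i :: (i+1) :: i :: v ∧ w' = u ++ (i+1) :: i :: (i+1) :: v) := by
  cases h with
  | comm u v i j hij => exact Or.inl ⟨u, v, i, j, hij, rfl, rfl⟩
  | braid u v i => exact Or.inr ⟨u, v, i, rfl, rfl⟩

/-- analysis of a single step applied to a word with explicit head -/
lemma head_step {i : ℕ} {A W : Wd} (h : SS (i :: A) W) :
    (∃ A', SS A A' ∧ W = i :: A') ∨
    (∃ a A₀, i ≠ a ∧ A = cpl i a ++ A₀ ∧ W = a :: (cpl a i ++ A₀)) := by
  rcases h with h | h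
  · rcases bstep_cases h with ⟨u, v, x, y, hxy, h1, h2⟩ | ⟨u, v, x, h1, h2⟩
    · cases u with
      | nil =>
          simp only [List.nil_append, List.cons.injEq] at h1
          obtain ⟨rfl, rfl⟩ := h1
          refine Or.inr ⟨y, v, by omega, ?_, ?_⟩
          · rw [cpl_far (Or.inl hxy : Far i y)]; rfl
          · rw [cpl_far (Or.inr hxy : Far y i)]; simpa using h2
      | cons u0 u' =>
          simp only [List.cons_append, List.cons.injEq] at h1
          obtain ⟨rfl, rfl⟩ := h1
          exact Or.inl ⟨u' ++ y :: x :: v, Or.inl (Bstep.comm u' v x y hxy), by simpa using h2⟩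
    · cases u with
      | nil =>
          simp only [List.nil_append, List.cons.injEq] at h1
          obtain ⟨rfl, rfl⟩ := h1
          refine Or.inr ⟨i + 1, v, by omega, ?_, ?_⟩
          · rw [cpl_adj (Or.inl rfl : Adj i (i+1))]; rfl
          · rw [cpl_adj (Or.inr rfl : Adj (i+1) i)]; simpa using h2
      | cons u0 u' =>
          simp only [List.cons_append, List.cons.injEq] at h1
          obtain ⟨rfl, rfl⟩ := h1
          exact Or.inl ⟨u' ++ (x+1) :: x :: (x+1) :: v, Or.inl (Bstep.braid u' v x),
            by simpa using h2⟩
  · rcases bstep_cases h with ⟨u, v, x, y, hxy, h2, h1⟩ | ⟨u, v, x, h2, h1⟩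
    · cases u with
      | nil =>
          simp only [List.nil_append, List.cons.injEq] at h1
          obtain ⟨rfl, rfl⟩ := h1
          refine Or.inr ⟨x, v, by omega, ?_, ?_⟩
          · rw [cpl_far (Or.inr hxy : Far i x)]; rfl
          · rw [cpl_far (Or.inl hxy : Far x i)]; simpa using h2
      | cons u0 u' =>
          simp only [List.cons_append, List.cons.injEq] at h1
          obtain ⟨rfl, rfl⟩ := h1
          exact Or.inl ⟨u' ++ x :: y :: v, Or.inr (Bstep.comm u' v x y hxy), by simpa using h2⟩
    · cases u with
      | nil =>
          simp only [List.nil_append, List.cons.injEq] at h1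
          obtain ⟨rfl, rfl⟩ := h1
          refine Or.inr ⟨x, v, by omega, ?_, ?_⟩
          · rw [cpl_adj (Or.inr rfl : Adj (x+1) x)]; rfl
          · rw [cpl_adj (Or.inl rfl : Adj x (x+1))]; simpa using h2
      | cons u0 u' =>
          simp only [List.cons_append, List.cons.injEq] at h1
          obtain ⟨rfl, rfl⟩ := h1
          exact Or.inl ⟨u' ++ x :: (x+1) :: x :: v, Or.inr (Bstep.braid u' v x),
            by simpa using h2⟩

lemma key_step {ℓ : ℕ}
    (KIH : ∀ (A : Wd) (i j : ℕ) (B : Wd), A.length < ℓ → beq (i :: A) (j :: B) →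
      ∃ C, beq A (cpl i j ++ C) ∧ beq B (cpl j i ++ C))
    (i a j : ℕ) (A₀ C₁ : Wd) (hia : i ≠ a)
    (hlen : (cpl i a ++ A₀).length = ℓ)
    (H : beq (cpl a i ++ A₀) (cpl a j ++ C₁)) :
    ∃ C, beq (cpl i a ++ A₀) (cpl i j ++ C) ∧ beq (cpl j a ++ C₁) (cpl j i ++ C) := by
  rcases eq_or_ne a j with rfl | haj
  · exact ⟨A₀, beq.rfl, by simpa [cpl_self] using H.symm⟩
  rcases tri i a with hia' | hFia | hAia
  · exact absurd hia' hia
  · -- Far i a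
    rw [cpl_far hFia] at hlen ⊢
    rw [cpl_far hFia.symm] at H
    rcases tri a j with haj' | hFaj | hAaj
    · exact absurd haj' haj
    · -- case F-F
      rw [cpl_far hFaj] at H
      rw [cpl_far hFaj.symm] at *
      have H' : beq (i :: A₀) (j :: C₁) := by simpa using H
      have hl1 : A₀.length < ℓ := by simp at hlen; omega
      obtain ⟨D, hD1, hD2⟩ := KIH A₀ i j C₁ hl1 H'
      refine ⟨a :: D, ?_, ?_⟩
      · refine (hD1.cons a).trans ?_
        have := far_pass (a := a) (u := cpl i j)
          (fun l hl => by rcases cpl_mem hl with rfl | rfl; exacts [hFia.symm, hFaj]) D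
        simpa using this
      · refine (hD2.cons a).trans ?_
        have := far_pass (a := a) (u := cpl j i)
          (fun l hl => by rcases cpl_mem hl with rfl | rfl; exacts [hFaj, hFia.symm]) D
        simpa using this
    · -- case F-A
      rw [cpl_adj hAaj] at H
      rw [cpl_adj hAaj.symm] at *
      have H' : beq (i :: A₀) (j :: (a :: C₁)) := by simpa using H
      have hij : i ≠ j := by
        rcases hFia with h | h <;> rcases hAaj with h' | h' <;> omega
      have hl1 : A₀.length < ℓ := by simp at hlen; omega
      obtain ⟨D, hD1, hD2⟩ := KIH A₀ i j (a :: C₁) hl1 H'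
      have hlH := H'.length
      simp at hlH hlen
      rcases tri i j with hij' | hFij | hAij
      · exact absurd hij' hij
      · -- F-A, Far i j
        rw [cpl_far hFij] at hD1 ⊢
        rw [cpl_far hFij.symm] at hD2 ⊢
        have hD2' : beq (a :: C₁) (i :: D) := by simpa using hD2
        have hl2 : C₁.length < ℓ := by omega
        obtain ⟨E, hE1, hE2⟩ := KIH C₁ a i D hl2 hD2'
        rw [cpl_far hFia.symm] at hE1
        rw [cpl_far hFia] at hE2
        refine ⟨a :: j :: E, ?_, ?_⟩
        · calc (a :: A₀) ∼ (a :: ([j] ++ D)) := hD1.cons a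
            _ ∼ (a :: j :: ([a] ++ E)) := (hE2.cons j).cons a
            _ ∼ (j :: a :: j :: E) := bs_braid hAaj [] E
        · calc (a :: j :: C₁) ∼ (a :: j :: ([i] ++ E)) := (hE1.cons j).cons a
            _ ∼ (a :: i :: j :: E) := bs_comm hFij.symm [a] E
            _ ∼ (i :: a :: j :: E) := bs_comm hFia.symm [] (j :: E)
      · -- F-A, Adj i j
        rw [cpl_adj hAij] at hD1 ⊢
        rw [cpl_adj hAij.symm] at hD2 ⊢
        have hD2' : beq (a :: C₁) (i :: (j :: D)) := by simpa using hD2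
        have hl2 : C₁.length < ℓ := by omega
        obtain ⟨E, hE1, hE2⟩ := KIH C₁ a i (j :: D) hl2 hD2'
        rw [cpl_far hFia.symm] at hE1
        rw [cpl_far hFia] at hE2
        have hE2' : beq (j :: D) (a :: E) := by simpa using hE2
        have hlD2 := hD2'.length
        simp at hlD2
        have hl3 : D.length < ℓ := by omega
        obtain ⟨F, hF1, hF2⟩ := KIH D j a E hl3 hE2'
        rw [cpl_adj hAaj.symm] at hF1
        rw [cpl_adj hAaj] at hF2
        refine ⟨a :: j :: i :: F, ?_, ?_⟩
        · calc (a :: A₀) ∼ (a :: (j :: i :: D)) := by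
                have := hD1.cons a; simpa using this
            _ ∼ (a :: j :: i :: (a :: j :: F)) := by
                have := ((hF1.cons i).cons j).cons a; simpa using this
            _ ∼ (j :: i :: a :: j :: i :: F) := T1 hAaj hAij.symm hFia.symm F
        · calc (a :: j :: C₁) ∼ (a :: j :: (i :: E)) := by
                have := (hE1.cons j).cons a; simpa using this
            _ ∼ (a :: j :: i :: (j :: a :: F)) := by
                have := ((hF2.cons i).cons j).cons a; simpa using this
            _ ∼ (i :: j :: a :: j :: i :: F) := T2 hAaj hAij.symm hFia.symm F
  · -- Adj i a
    rw [cpl_adj hAia] at hlen ⊢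
    rw [cpl_adj hAia.symm] at H
    rcases tri a j with haj' | hFaj | hAaj
    · exact absurd haj' haj
    · -- case A-F
      rw [cpl_far hFaj] at H
      rw [cpl_far hFaj.symm] at *
      have H' : beq (i :: (a :: A₀)) (j :: C₁) := by simpa using H
      have hij : i ≠ j := by
        rcases hAia with h | h <;> rcases hFaj with h' | h' <;> omega
      have hl1 : (a :: A₀).length < ℓ := by simp at hlen ⊢; omega
      obtain ⟨D, hD1, hD2⟩ := KIH (a :: A₀) i j C₁ hl1 H'
      have hlH := H'.length
      simp at hlH hlen
      rcases tri i j with hij' | hFij | hAij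
      · exact absurd hij' hij
      · -- A-F, Far i j
        rw [cpl_far hFij] at hD1 ⊢
        rw [cpl_far hFij.symm] at hD2 ⊢
        have hD1' : beq (a :: A₀) (j :: D) := by simpa using hD1
        have hl2 : A₀.length < ℓ := by omega
        obtain ⟨E, hE1, hE2⟩ := KIH A₀ a j D hl2 hD1'
        rw [cpl_far hFaj] at hE1
        rw [cpl_far hFaj.symm] at hE2
        refine ⟨a :: i :: E, ?_, ?_⟩
        · calc (a :: i :: A₀) ∼ (a :: i :: ([j] ++ E)) := (hE1.cons i).cons a
            _ ∼ (a :: j :: i :: E) := bs_comm hFij [a] E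
            _ ∼ (j :: a :: i :: E) := bs_comm hFaj [] (i :: E)
        · calc (a :: C₁) ∼ (a :: ([i] ++ D)) := hD2.cons a
            _ ∼ (a :: i :: ([a] ++ E)) := (hE2.cons i).cons a
            _ ∼ (i :: a :: i :: E) := bs_braid hAia.symm [] E
      · -- A-F, Adj i j
        rw [cpl_adj hAij] at hD1 ⊢
        rw [cpl_adj hAij.symm] at hD2 ⊢
        have hD1' : beq (a :: A₀) (j :: (i :: D)) := by simpa using hD1
        have hl2 : A₀.length < ℓ := by omega
        obtain ⟨E, hE1, hE2⟩ := KIH A₀ a j (i :: D) hl2 hD1'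
        rw [cpl_far hFaj] at hE1
        rw [cpl_far hFaj.symm] at hE2
        have hE2' : beq (i :: D) (a :: E) := by simpa using hE2
        have hlD1 := hD1'.length
        simp at hlD1
        have hl3 : D.length < ℓ := by omega
        obtain ⟨F, hF1, hF2⟩ := KIH D i a E hl3 hE2'
        rw [cpl_adj hAia] at hF1
        rw [cpl_adj hAia.symm] at hF2
        refine ⟨a :: i :: j :: F, ?_, ?_⟩
        · calc (a :: i :: A₀) ∼ (a :: i :: (j :: E)) := by
                have := (hE1.cons i).cons a; simpa using this
            _ ∼ (a :: i :: j :: (i :: a :: F)) := by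
                have := ((hF2.cons j).cons i).cons a; simpa using this
            _ ∼ (j :: i :: a :: i :: j :: F) := T2 hAia.symm hAij hFaj F
        · calc (a :: C₁) ∼ (a :: (i :: j :: D)) := by
                have := hD2.cons a; simpa using this
            _ ∼ (a :: i :: j :: (a :: i :: F)) := by
                have := ((hF1.cons j).cons i).cons a; simpa using this
            _ ∼ (i :: j :: a :: i :: j :: F) := T1 hAia.symm hAij hFaj F
    · -- case A-A
      rw [cpl_adj hAaj] at H
      rw [cpl_adj hAaj.symm] at *
      have H' : beq (i :: (a :: A₀)) (j :: (a :: C₁)) := by simpa using H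
      have hlH := H'.length
      simp at hlH hlen
      rcases eq_or_ne i j with rfl | hij
      · -- A-A, i = j
        have hl1 : (a :: A₀).length < ℓ := by simp; omega
        obtain ⟨D, hD1, hD2⟩ := KIH (a :: A₀) i i (a :: C₁) hl1 H'
        rw [cpl_self] at hD1 hD2
        simp only [List.nil_append] at hD1 hD2
        have hAC : beq (a :: A₀) (a :: C₁) := hD1.trans hD2.symm
        have hl2 : A₀.length < ℓ := by omega
        obtain ⟨E, hE1, hE2⟩ := KIH A₀ a a C₁ hl2 hAC
        rw [cpl_self] at hE1 hE2
        simp only [List.nil_append] at hE1 hE2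
        rw [cpl_self]
        exact ⟨a :: i :: A₀, beq.rfl, by
          have := ((hE2.trans hE1.symm).cons i).cons a; simpa using this⟩
      · -- A-A, i ≠ j
        have hFij : Far i j := by
          rcases hAia with h | h <;> rcases hAaj with h' | h' <;>
            first
              | (exact Or.inl (by omega))
              | (exact Or.inr (by omega))
              | (exact absurd (by omega : i = j) hij)
        have hl1 : (a :: A₀).length < ℓ := by simp; omega
        obtain ⟨D, hD1, hD2⟩ := KIH (a :: A₀) i j (a :: C₁) hl1 H'
        rw [cpl_far hFij] at hD1 ⊢
        rw [cpl_far hFij.symm] at hD2 ⊢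
        have hD1' : beq (a :: A₀) (j :: D) := by simpa using hD1
        have hl2 : A₀.length < ℓ := by omega
        obtain ⟨E, hE1, hE2⟩ := KIH A₀ a j D hl2 hD1'
        rw [cpl_adj hAaj] at hE1
        rw [cpl_adj hAaj.symm] at hE2
        have hD2' : beq (a :: C₁) (i :: (a :: j :: E)) := by
          refine (by simpa using hD2 : beq (a :: C₁) (i :: D)).trans ?_
          have := (hE2.cons i); simpa using this
        have hlD := hD1'.length
        simp at hlD
        have hl3 : C₁.length < ℓ := by omega
        obtain ⟨F, hF1, hF2⟩ := KIH C₁ a i (a :: j :: E) hl3 hD2'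
        rw [cpl_adj hAia.symm] at hF1
        rw [cpl_adj hAia] at hF2
        have hF2' : beq (a :: (j :: E)) (a :: (i :: F)) := by simpa using hF2
        have hlE := hE1.length
        simp at hlE
        have hl4 : (j :: E).length < ℓ := by simp; omega
        obtain ⟨G, hG1, hG2⟩ := KIH (j :: E) a a (i :: F) hl4 hF2'
        rw [cpl_self] at hG1 hG2
        simp only [List.nil_append] at hG1 hG2
        have hJI : beq (j :: E) (i :: F) := hG1.trans hG2.symm
        have hl5 : E.length < ℓ := by omega
        obtain ⟨Hw, hH1, hH2⟩ := KIH E j i F hl5 hJI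
        rw [cpl_far hFij.symm] at hH1
        rw [cpl_far hFij] at hH2
        refine ⟨a :: i :: j :: a :: Hw, ?_, ?_⟩
        · calc (a :: i :: A₀) ∼ (a :: i :: (j :: a :: E)) := by
                have := (hE1.cons i).cons a; simpa using this
            _ ∼ (a :: i :: j :: a :: (i :: Hw)) := by
                have := (((hH1.cons a).cons j).cons i).cons a; simpa using this
            _ ∼ (j :: a :: i :: j :: a :: Hw) := T3 hAia.symm hAaj hFij Hw
        · calc (a :: j :: C₁) ∼ (a :: j :: (i :: a :: F)) := by
                have := (hF1.cons j).cons a; simpa using this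
            _ ∼ (a :: j :: i :: a :: (j :: Hw)) := by
                have := (((hH2.cons a).cons i).cons j).cons a; simpa using this
            _ ∼ (i :: a :: j :: i :: a :: Hw) := T3 hAaj hAia.symm hFij.symm Hw
            _ ∼ (i :: a :: i :: j :: a :: Hw) := bs_comm hFij.symm [i, a] (a :: Hw)

/-- Garside's key lemma -/
theorem keyLemma : ∀ ℓ : ℕ, ∀ (A : Wd) (i j : ℕ) (B : Wd), A.length = ℓ →
    beq (i :: A) (j :: B) → ∃ C, beq A (cpl i j ++ C) ∧ beq B (cpl j i ++ C) := by
  intro ℓ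
  induction ℓ using Nat.strong_induction_on with
  | _ ℓ KIHraw =>
  have KIH : ∀ (A : Wd) (i j : ℕ) (B : Wd), A.length < ℓ → beq (i :: A) (j :: B) →
      ∃ C, beq A (cpl i j ++ C) ∧ beq B (cpl j i ++ C) :=
    fun A i j B hl h => KIHraw A.length hl A i j B rfl h
  intro A i j B hA hbeq
  suffices Hs : ∀ w, beq w (j :: B) → ∀ (i' : ℕ) (A' : Wd), w = i' :: A' → A'.length = ℓ →
      ∃ C, beq A' (cpl i' j ++ C) ∧ beq B (cpl j i' ++ C) from Hs _ hbeq i A rfl hA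
  intro w hw
  induction hw using Relation.ReflTransGen.head_induction_on with
  | refl =>
      rintro i' A' heq hlen'
      simp only [List.cons.injEq] at heq
      obtain ⟨rfl, rfl⟩ := heq
      exact ⟨B, by simpa [cpl_self] using (beq.rfl : beq B B), by simpa [cpl_self] using (beq.rfl : beq B B)⟩
  | head hst hchain ih =>
      rintro i' A' rfl hlen'
      rcases head_step hst with ⟨A'', hSS, rfl⟩ | ⟨a, A₀, hi'a, rfl, hW⟩
      · obtain ⟨C, hC1, hC2⟩ := ih i' A'' rfl (by rw [← hSS.length]; exact hlen')
        exact ⟨C, (beq_of_SS hSS).trans hC1, hC2⟩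
      · subst hW
        obtain ⟨C₁, hC1, hC2⟩ := ih a (cpl a i' ++ A₀) rfl
          (by simpa [List.length_append, cpl_length a i'] using hlen')
        obtain ⟨C, hG1, hG2⟩ := key_step KIH i' a j A₀ C₁ hi'a hlen' hC1
        exact ⟨C, hG1, hC2.trans hG2⟩

/-- cancel one letter on the left -/
lemma cancel_letter {x : ℕ} {A B : Wd} (h : beq (x :: A) (x :: B)) : beq A B := by
  obtain ⟨C, h1, h2⟩ := keyLemma A.length A x x B rfl h
  rw [cpl_self] at h1 h2
  simpa using h1.trans (by simpa using h2.symm)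

/-- cancel a word on the left -/
lemma cancel_word {u : Wd} : ∀ {A B : Wd}, beq (u ++ A) (u ++ B) → beq A B := by
  induction u with
  | nil => intro A B h; simpa using h
  | cons x u ih =>
      intro A B h
      exact ih (cancel_letter (by simpa using h))

/-! ### The Garside element -/

/-- descending run `[r, r-1, ..., 0]` -/
def desc : ℕ → Wd
  | 0 => [0]
  | r+1 => (r+1) :: desc r

/-- the half twist on `r` generators -/
def delta : ℕ → Wd
  | 0 => []
  | r+1 => List.range (r+1) ++ delta r

lemma mem_desc {r l : ℕ} (h : l ∈ desc r) : l ≤ r := by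
  induction r with
  | zero => simp [desc] at h; omega
  | succ r ih =>
      rcases (by simpa [desc] using h : l = r + 1 ∨ l ∈ desc r) with rfl | h
      · omega
      · exact (ih h).trans (by omega)

lemma mem_delta {r l : ℕ} (h : l ∈ delta r) : l < r := by
  induction r with
  | zero => simp [delta] at h
  | succ r ih =>
      rcases (by simpa [delta] using h : l ∈ List.range (r+1) ∨ l ∈ delta r) with h | h
      · exact List.mem_range.1 h
      · exact (ih h).trans (by omega)

/-- a letter `i ≥ 1` passes the ascending run, decreasing -/
lemma asc_pass : ∀ r i : ℕ, 1 ≤ i → i ≤ r →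
    beq (i :: List.range (r+1)) (List.range (r+1) ++ [i-1]) := by
  intro r
  induction r with
  | zero => intro i h1 h2; omega
  | succ r ih =>
      intro i h1 h2
      rcases Nat.lt_or_ge i (r+1) with hlt | hge
      · -- i ≤ r, use IH
        have hIH := (ih i h1 (by omega)).appR [r+1]
        rw [List.range_succ (n := r+1)]
        refine ?_
        have hswap : beq (List.range (r+1) ++ (i-1) :: (r+1) :: [])
            (List.range (r+1) ++ (r+1) :: (i-1) :: []) :=
          bs_comm (Or.inl (by omega) : Far (i-1) (r+1)) (List.range (r+1)) []
        have : beq (i :: (List.range (r+1) ++ [r+1]))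
            (List.range (r+1) ++ [i-1] ++ [r+1]) := by simpa using hIH
        refine this.trans ?_
        refine (by simpa using hswap : beq (List.range (r+1) ++ [i-1] ++ [r+1]) _).trans ?_
        simp [List.append_assoc]
        exact beq.rfl
      · -- i = r+1
        have hi : i = r + 1 := by omega
        subst hi
        have hr2 : List.range (r+2) = List.range r ++ [r, r+1] := by
          rw [List.range_succ (n := r+1), List.range_succ (n := r)]; simp
        rw [hr2]
        have hfp : beq ((r+1) :: (List.range r ++ [r, r+1]))
            (List.range r ++ (r+1) :: [r, r+1]) :=
          far_pass (fun l hl => Or.inr (by have := List.mem_range.1 hl; omega)) [r, r+1]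
        refine hfp.trans ?_
        have hb : beq (List.range r ++ (r+1) :: r :: (r+1) :: [])
            (List.range r ++ r :: (r+1) :: r :: []) :=
          bs_braid (Or.inr rfl : Adj (r+1) r) (List.range r) []
        refine (by simpa using hb : beq (List.range r ++ (r+1) :: [r, r+1]) _).trans ?_
        simp [List.append_assoc]
        exact beq.rfl

/-- a letter `j` with `j + 1 ≤ r` passes the descending run, increasing -/
lemma desc_pass : ∀ r j : ℕ, j + 1 ≤ r → beq (j :: desc r) (desc r ++ [j+1]) := by
  intro r
  induction r with
  | zero => intro j h; omega
  | succ r ih =>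
      intro j h
      rcases Nat.lt_or_ge (j+1) (r+1) with hlt | hge
      · -- j + 1 ≤ r
        have hswap : beq (j :: (r+1) :: desc r) ((r+1) :: j :: desc r) :=
          bs_comm (Or.inl (by omega) : Far j (r+1)) [] (desc r)
        refine (by simpa [desc] using hswap : beq (j :: desc (r+1)) _).trans ?_
        have := (ih j (by omega)).cons (r+1)
        simpa [desc] using this
      · -- j = r
        have hj : j = r := by omega
        subst hj
        cases j with
        | zero =>
            have := bs_braid (Or.inl rfl : Adj 0 1) [] ([] : Wd)
            simpa [desc] using this
        | succ r' =>
            -- word: (r'+1) :: (r'+2) :: (r'+1) :: desc r'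
            have hb : beq ((r'+1) :: (r'+2) :: (r'+1) :: desc r')
                ((r'+2) :: (r'+1) :: (r'+2) :: desc r') :=
              bs_braid (Or.inl rfl : Adj (r'+1) (r'+2)) [] (desc r')
            have hfp : beq ((r'+2) :: (desc r' ++ [r'+2]))
                 (desc r' ++ (r'+2) :: [r'+2]) :=
              far_pass (fun l hl => Or.inr (by have := mem_desc hl; omega)) [r'+2]
            have hfp' : beq ((r'+2) :: desc r') (desc r' ++ [r'+2]) := by
              have := far_pass (a := r'+2) (u := desc r')
                (fun l hl => Or.inr (by have := mem_desc hl; omega)) []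
              simpa using this
            have := (hfp'.cons (r'+1)).cons (r'+2)
            refine (by simpa [desc] using hb : beq ((r'+1) :: desc (r'+1+1)) _).trans ?_
            simpa [desc] using this
        
/-- the two standard factorizations of the half twist -/
lemma delta_desc : ∀ r : ℕ, beq (delta (r+1)) (delta r ++ desc r) := by
  intro r
  induction r with
  | zero => exact beq.rfl
  | succ r ih =>
      have hfp : beq ((r+1) :: (delta r ++ desc r)) (delta r ++ (r+1) :: desc r) :=
        far_pass (fun l hl => Or.inr (by have := mem_delta hl; omega)) (desc r)
      have step1 : beq (delta (r+2)) (List.range (r+1) ++ (r+1) :: delta (r+1)) := by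
        show beq (List.range (r+2) ++ delta (r+1)) _
        rw [List.range_succ (n := r+1)]
        simpa [List.append_assoc] using (beq.rfl :
          beq (List.range (r+1) ++ (r+1) :: delta (r+1)) _)
      refine step1.trans ?_
      have step2 : beq (List.range (r+1) ++ (r+1) :: delta (r+1))
          (List.range (r+1) ++ (r+1) :: (delta r ++ desc r)) := by
        have := (ih.cons (r+1)).appL (List.range (r+1))
        simpa using this
      refine step2.trans ?_
      have step3 := hfp.appL (List.range (r+1))
      refine step3.trans ?_
      show beq (List.range (r+1) ++ (delta r ++ (r+1) :: desc r)) (delta (r+1+1-1) ++ desc (r+1))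
      simp only [delta, desc]
      simpa [List.append_assoc, delta] using (beq.rfl :
        beq (List.range (r+1) ++ (delta r ++ (r+1) :: desc r)) _)

/-- the fundamental commutation `σᵢ Δ = Δ σ_{m-1-i}` -/
lemma delta_pass : ∀ m i : ℕ, i < m → beq (i :: delta m) (delta m ++ [m - 1 - i]) := by
  intro m
  induction m with
  | zero => intro i h; omega
  | succ r ih =>
      intro i hi
      rcases Nat.eq_zero_or_pos i with rfl | hpos
      · -- i = 0, go via the descending form
        cases r with
        | zero => exact beq.rfl
        | succ r' =>
            have h1 := (delta_desc (r'+1)).cons 0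
            refine h1.trans ?_
            have h2 := (ih 0 (by omega)).appR (desc (r'+1))
            have h2' : beq (0 :: (delta (r'+1) ++ desc (r'+1)))
                (delta (r'+1) ++ (r' :: desc (r'+1))) := by
              simpa [List.append_assoc] using h2
            refine h2'.trans ?_
            have h3 : beq (r' :: desc (r'+1)) (desc (r'+1) ++ [r'+1]) := by
              simpa using desc_pass (r'+1) r' (by omega)
            refine (h3.appL (delta (r'+1))).trans ?_
            have h4 := ((delta_desc (r'+1)).symm).appR [r'+1]
            simpa [List.append_assoc] using h4
      · -- i ≥ 1, go via the ascending form
        have h1 := (asc_pass r i hpos (by omega)).appR (delta r)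
        refine (by simpa [delta, List.append_assoc] using h1 :
          beq (i :: delta (r+1)) (List.range (r+1) ++ ([i-1] ++ delta r))).trans ?_
        have h2 := (ih (i-1) (by omega)).appL (List.range (r+1))
        refine h2.trans ?_
        have he : r - 1 - (i - 1) = r + 1 - 1 - i := by omega
        show beq (List.range (r+1) ++ (delta r ++ [r - 1 - (i-1)])) (delta (r+1) ++ [r + 1 - 1 - i])
        rw [he]
        simpa [delta, List.append_assoc] using
          (beq.rfl : beq (List.range (r+1) ++ (delta r ++ [r + 1 - 1 - i])) _)

/-- every generator divides Δ on the left -/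
lemma delta_head : ∀ m i : ℕ, i < m → ∃ d, beq (delta m) (i :: d) := by
  intro m
  induction m with
  | zero => intro i h; omega
  | succ r ih =>
      intro i hi
      rcases Nat.eq_zero_or_pos i with rfl | hpos
      · refine ⟨(List.range r).map (· + 1) ++ delta r, ?_⟩
        show beq (List.range (r+1) ++ delta r) _
        rw [List.range_succ_eq_map (n := r)]
        exact beq.rfl
      · obtain ⟨d, hd⟩ := ih (i-1) (by omega)
        refine ⟨List.range (r+1) ++ d, ?_⟩
        have h1 : beq (delta (r+1)) (List.range (r+1) ++ (i-1) :: d) := by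
          have := hd.appL (List.range (r+1))
          simpa [delta] using this
        refine h1.trans ?_
        have h2 := ((asc_pass r i hpos (by omega)).symm).appR d
        simpa [List.append_assoc] using h2

/-! ### Powers of Δ², centrality, divisibility -/

/-- even powers of Δ -/
def eP (m : ℕ) : ℕ → Wd
  | 0 => []
  | k+1 => (delta m ++ delta m) ++ eP m k

lemma eP_append (m k : ℕ) : eP m k ++ (delta m ++ delta m) = eP m (k+1) := by
  induction k with
  | zero => simp [eP]
  | succ k ih => show ((delta m ++ delta m) ++ eP m k) ++ _ = _
                 rw [List.append_assoc, ih]; rfl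

lemma eP_add (m k l : ℕ) : eP m (k + l) = eP m k ++ eP m l := by
  induction k with
  | zero => simp [eP]
  | succ k ih =>
      have : k + 1 + l = (k + l) + 1 := by omega
      rw [this]
      show (delta m ++ delta m) ++ eP m (k + l) = ((delta m ++ delta m) ++ eP m k) ++ eP m l
      rw [ih]; simp [List.append_assoc]

lemma mem_eP {m k l : ℕ} (h : l ∈ eP m k) : l < m := by
  induction k with
  | zero => simp [eP] at h
  | succ k ih =>
      rcases (by simpa [eP] using h : (l ∈ delta m ∨ l ∈ delta m) ∨ l ∈ eP m k) with h | h
      · rcases h with h | h <;> exact mem_delta h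
      · exact ih h

/-- Δ² is central: single letter -/
lemma delta2_pass {m i : ℕ} (h : i < m) :
    beq (i :: (delta m ++ delta m)) ((delta m ++ delta m) ++ [i]) := by
  have h1 := (delta_pass m i h).appR (delta m)
  have h2 := (delta_pass m (m - 1 - i) (by omega)).appL (delta m)
  have he : m - 1 - (m - 1 - i) = i := by omega
  refine (by simpa [List.append_assoc] using h1 :
    beq (i :: (delta m ++ delta m)) (delta m ++ ((m-1-i) :: delta m))).trans ?_
  rw [he] at h2
  refine h2.trans ?_
  simpa [List.append_assoc] using
    (beq.rfl : beq (delta m ++ (delta m ++ [i])) _)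

/-- a bounded letter passes `eP` -/
lemma letter_eP {m i : ℕ} (h : i < m) (k : ℕ) :
    beq (i :: eP m k) (eP m k ++ [i]) := by
  induction k with
  | zero => exact beq.rfl
  | succ k ih =>
      have h1 := (delta2_pass h).appR (eP m k)
      refine (by simpa [List.append_assoc] using h1 :
        beq (i :: ((delta m ++ delta m) ++ eP m k)) ((delta m ++ delta m) ++ (i :: eP m k))).trans ?_
      have h2 := ih.appL (delta m ++ delta m)
      simpa [eP, List.append_assoc] using h2

/-- a bounded word passes `eP` -/
lemma word_eP {m : ℕ} {w : Wd} (hw : ∀ l ∈ w, l < m) (k : ℕ) :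
    beq (w ++ eP m k) (eP m k ++ w) := by
  induction w with
  | nil => simp; exact beq.rfl
  | cons x w ih =>
      have h1 := (ih (fun l hl => hw l (by simp [hl]))).cons x
      refine (by simpa using h1 : beq ((x :: w) ++ eP m k) (x :: (eP m k ++ w))).trans ?_
      have h2 := (letter_eP (hw x (by simp)) k).appR w
      simpa [List.append_assoc] using h2

/-- every bounded word divides a power of Δ² -/
lemma div_eP {m : ℕ} : ∀ w : Wd, (∀ l ∈ w, l < m) →
    ∃ u : Wd, (∀ l ∈ u, l < m) ∧ beq (w ++ u) (eP m w.length) := by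
  intro w
  induction w with
  | nil => exact fun _ => ⟨[], by simp, beq.rfl⟩
  | cons i w ih =>
      intro hw
      obtain ⟨u, hu, hbe⟩ := ih (fun l hl => hw l (by simp [hl]))
      have him : i < m := hw i (by simp)
      obtain ⟨d, hd⟩ := delta_head m i him
      have hdb : ∀ l ∈ d, l < m := by
        intro l hl
        have := (hd.mem_iff l).2 (by simp [hl])
        exact mem_delta this
      refine ⟨u ++ (d ++ delta m), ?_, ?_⟩
      · intro l hl
        rcases (by simpa using hl : l ∈ u ∨ l ∈ d ∨ l ∈ delta m) with h | h | h
        exacts [hu l h, hdb l h, mem_delta h]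
      · have h1 : beq ((i :: w) ++ (u ++ (d ++ delta m)))
            (i :: (eP m w.length ++ (d ++ delta m))) := by
          have := (hbe.appR (d ++ delta m)).cons i
          simpa [List.append_assoc] using this
        refine h1.trans ?_
        have h2 : beq (i :: (eP m w.length ++ (d ++ delta m)))
            (eP m w.length ++ (i :: (d ++ delta m))) := by
          have := (letter_eP him w.length).appR (d ++ delta m)
          simpa [List.append_assoc] using this
        refine h2.trans ?_
        have h3 : beq (i :: (d ++ delta m)) (delta m ++ delta m) := by
          have := (hd.symm).appR (delta m)
          simpa using this
        have h4 := h3.appL (eP m w.length)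
        refine h4.trans ?_
        rw [eP_append]
        show beq (eP m (w.length + 1)) (eP m ((i :: w).length))
        simp
        exact beq.rfl

/-! ### The group of fractions -/

def BWrd (m : ℕ) := {w : Wd // ∀ l ∈ w, l < m}

lemma eP_comm (m k l : ℕ) : eP m k ++ eP m l = eP m l ++ eP m k := by
  rw [← eP_add, ← eP_add, Nat.add_comm]

def fracRel (m : ℕ) (x y : ℕ × BWrd m) : Prop :=
  beq (eP m y.1 ++ x.2.1) (eP m x.1 ++ y.2.1)

lemma fracRel_refl (m : ℕ) (x : ℕ × BWrd m) : fracRel m x x := beq.rfl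

lemma fracRel_symm {m : ℕ} {x y : ℕ × BWrd m} (h : fracRel m x y) : fracRel m y x := h.symm

lemma fracRel_trans {m : ℕ} {x y z : ℕ × BWrd m}
    (h1 : fracRel m x y) (h2 : fracRel m y z) : fracRel m x z := by
  rcases x with ⟨k, a, ha⟩; rcases y with ⟨l, b, hb⟩; rcases z with ⟨s, c, hc⟩
  unfold fracRel at h1 h2 ⊢
  simp only at h1 h2 ⊢
  apply cancel_word (u := eP m l)
  have e1 : eP m l ++ (eP m s ++ a) = eP m s ++ (eP m l ++ a) := by
    rw [← List.append_assoc, eP_comm, List.append_assoc]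
  have e2 : eP m s ++ (eP m k ++ b) = eP m k ++ (eP m s ++ b) := by
    rw [← List.append_assoc, eP_comm, List.append_assoc]
  have e3 : eP m k ++ (eP m l ++ c) = eP m l ++ (eP m k ++ c) := by
    rw [← List.append_assoc, eP_comm, List.append_assoc]
  rw [e1]
  refine (h1.appL (eP m s)).trans ?_
  rw [e2]
  refine (h2.appL (eP m k)).trans ?_
  rw [e3]
  exact beq.rfl

instance fracSetoid (m : ℕ) : Setoid (ℕ × BWrd m) where
  r := fracRel m
  iseqv := ⟨fracRel_refl m, fracRel_symm, fracRel_trans⟩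

def XGrp (m : ℕ) := Quotient (fracSetoid m)

def bappend {m : ℕ} (a b : BWrd m) : BWrd m :=
  ⟨a.1 ++ b.1, by
    intro l hl
    rcases (by simpa using hl : l ∈ a.1 ∨ l ∈ b.1) with h | h
    exacts [a.2 l h, b.2 l h]⟩

lemma Xmul_wd {m : ℕ} (x y x' y' : ℕ × BWrd m) (hx : fracRel m x x') (hy : fracRel m y y') :
    fracRel m (x.1 + y.1, bappend x.2 y.2) (x'.1 + y'.1, bappend x'.2 y'.2) := by
  rcases x with ⟨k, a, ha⟩; rcases y with ⟨l, b, hb⟩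
  rcases x' with ⟨k', a', ha'⟩; rcases y' with ⟨l', b', hb'⟩
  unfold fracRel at hx hy ⊢
  simp only [bappend] at hx hy ⊢
  -- hx : beq (eP m k' ++ a) (eP m k ++ a'), hy : beq (eP m l' ++ b) (eP m l ++ b')
  have e0 : eP m (k' + l') ++ (a ++ b) = eP m l' ++ (eP m k' ++ (a ++ b)) := by
    rw [eP_add, eP_comm, List.append_assoc]
  rw [e0]
  have s1 : beq (eP m l' ++ (eP m k' ++ (a ++ b))) (eP m l' ++ (eP m k ++ (a' ++ b))) := by
    have := (hx.appR b).appL (eP m l')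
    simpa [List.append_assoc] using this
  refine s1.trans ?_
  have e1 : eP m l' ++ (eP m k ++ (a' ++ b)) = eP m k ++ (eP m l' ++ (a' ++ b)) := by
    rw [← List.append_assoc, eP_comm, List.append_assoc]
  rw [e1]
  have s2 : beq (eP m k ++ (eP m l' ++ (a' ++ b))) (eP m k ++ (a' ++ (eP m l' ++ b))) := by
    have := (((word_eP ha' l').symm).appR b).appL (eP m k)
    simpa [List.append_assoc] using this
  refine s2.trans ?_
  have s3 : beq (eP m k ++ (a' ++ (eP m l' ++ b))) (eP m k ++ (a' ++ (eP m l ++ b'))) := by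
    have := hy.appL (eP m k ++ a')
    simpa [List.append_assoc] using this
  refine s3.trans ?_
  have s4 : beq (eP m k ++ (a' ++ (eP m l ++ b'))) (eP m k ++ (eP m l ++ (a' ++ b'))) := by
    have := ((word_eP ha' l).appR b').appL (eP m k)
    simpa [List.append_assoc] using this
  refine s4.trans ?_
  have e2 : eP m k ++ (eP m l ++ (a' ++ b')) = eP m (k + l) ++ (a' ++ b') := by
    rw [eP_add, List.append_assoc]
  rw [e2]
  exact beq.rfl

def Xmul {m : ℕ} : XGrp m → XGrp m → XGrp m :=
  Quotient.map₂ (fun x y => (x.1 + y.1, bappend x.2 y.2))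
    (fun _ _ hx _ _ hy => Xmul_wd _ _ _ _ hx hy)

def Xone (m : ℕ) : XGrp m := ⟦(0, ⟨[], by simp⟩)⟧

lemma Xmul_mk {m : ℕ} (x y : ℕ × BWrd m) :
    Xmul ⟦x⟧ ⟦y⟧ = ⟦(x.1 + y.1, bappend x.2 y.2)⟧ := rfl

instance XMonoid (m : ℕ) : Monoid (XGrp m) where
  mul := Xmul
  one := Xone m
  mul_assoc := by
    intro x y z
    induction x using Quotient.inductionOn with | _ x =>
    induction y using Quotient.inductionOn with | _ y =>
    induction z using Quotient.inductionOn with | _ z =>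
    show Xmul (Xmul _ _) _ = Xmul _ (Xmul _ _)
    rw [Xmul_mk, Xmul_mk, Xmul_mk, Xmul_mk]
    apply Quotient.sound
    have : (x.1 + y.1 + z.1, bappend (bappend x.2 y.2) z.2) =
        (x.1 + (y.1 + z.1), bappend x.2 (bappend y.2 z.2)) := by
      refine Prod.ext (by omega) ?_
      simp only [bappend]
      exact Subtype.ext (List.append_assoc _ _ _)
    rw [this]
  one_mul := by
    intro x
    induction x using Quotient.inductionOn with | _ x =>
    show Xmul (Xone m) _ = _
    rw [Xone, Xmul_mk]
    apply Quotient.sound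
    have : ((0:ℕ) + x.1, bappend ⟨[], by simp⟩ x.2) = x := by
      refine Prod.ext (by omega) ?_
      simp only [bappend]
      exact Subtype.ext (by simp)
    rw [this]
  mul_one := by
    intro x
    induction x using Quotient.inductionOn with | _ x =>
    show Xmul _ (Xone m) = _
    rw [Xone, Xmul_mk]
    apply Quotient.sound
    have : (x.1 + (0:ℕ), bappend x.2 ⟨[], by simp⟩) = x := by
      refine Prod.ext (by omega) ?_
      simp only [bappend]
      exact Subtype.ext (by simp)
    rw [this]

lemma X_right_inv (m : ℕ) : ∀ x : XGrp m, ∃ y : XGrp m, x * y = 1 := by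
  intro x
  induction x using Quotient.inductionOn with | _ x =>
  rcases x with ⟨k, a, ha⟩
  obtain ⟨u, hu, hbe⟩ := div_eP a ha
  refine ⟨⟦(a.length, ⟨u ++ eP m k, ?_⟩)⟧, ?_⟩
  · intro l hl
    rcases (by simpa using hl : l ∈ u ∨ l ∈ eP m k) with h | h
    exacts [hu l h, mem_eP h]
  · show Xmul _ _ = Xone m
    rw [Xmul_mk]
    apply Quotient.sound
    show fracRel m _ _
    unfold fracRel
    simp only [bappend, eP]
    have h1 : beq ((a ++ (u ++ eP m k)) : Wd) (eP m (a.length + k)) := by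
      rw [eP_add]
      have := hbe.appR (eP m k)
      simpa [List.append_assoc] using this
    have e : a.length + k = k + a.length := by omega
    rw [e] at h1
    simpa using h1
  
lemma left_inv_of_right {M : Type*} [Monoid M] (h : ∀ x : M, ∃ y, x * y = 1)
    {x y : M} (hxy : x * y = 1) : y * x = 1 := by
  obtain ⟨z, hyz⟩ := h y
  have hzx : z = x := by
    calc z = 1 * z := by rw [one_mul]
      _ = (x * y) * z := by rw [hxy]
      _ = x * (y * z) := mul_assoc _ _ _
      _ = x := by rw [hyz, mul_one]
  rw [← hzx]; exact hyz

noncomputable instance XGroup (m : ℕ) : Group (XGrp m) :=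
  { XMonoid m with
    inv := fun x => Classical.choose (X_right_inv m x)
    inv_mul_cancel := fun x =>
      left_inv_of_right (X_right_inv m) (Classical.choose_spec (X_right_inv m x)) }

/-! ### From braid relations to Hurwitz equivalence -/

section Hurwitz

variable {G : Type*} [Group G]

lemma HE_refl (l : List G) : HurwitzEquiv l l := Relation.EqvGen.refl l

lemma HE_symm {l l' : List G} (h : HurwitzEquiv l l') : HurwitzEquiv l' l :=
  Relation.EqvGen.symm _ _ h

lemma HE_trans {l l' l'' : List G} (h : HurwitzEquiv l l') (h' : HurwitzEquiv l' l'') :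
    HurwitzEquiv l l'' := Relation.EqvGen.trans _ _ _ h h'

lemma HE_of_move {l l' : List G} (h : HurwitzMove l l') : HurwitzEquiv l l' :=
  Relation.EqvGen.rel _ _ h

lemma HM_context (p q : List G) {l l' : List G} (h : HurwitzMove l l') :
    HurwitzMove (p ++ l ++ q) (p ++ l' ++ q) := by
  obtain ⟨u, v, a, b, rfl, rfl⟩ := h
  exact ⟨p ++ u, v ++ q, a, b, by simp, by simp⟩

lemma HE_context (p q : List G) {l l' : List G} (h : HurwitzEquiv l l') :
    HurwitzEquiv (p ++ l ++ q) (p ++ l' ++ q) := by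
  induction h with
  | rel x y hm => exact HE_of_move (HM_context p q hm)
  | refl x => exact HE_refl _
  | symm x y _ ih => exact HE_symm ih
  | trans x y z _ _ ih1 ih2 => exact HE_trans ih1 ih2

lemma HE_pair {a b : G} (h : a * b = b * a) : HurwitzEquiv [a, b] [b, a] := by
  refine HE_of_move ⟨[], [], a, b, rfl, ?_⟩
  rw [h, mul_inv_cancel_right]; rfl

lemma HE_triple {a b : G} (h : a * b * a = b * a * b) : HurwitzEquiv [a, b, a] [b, a, b] := by
  have m1 : HurwitzMove [a, b, a] [a*b*a⁻¹, a, a] := ⟨[], [a], a, b, rfl, rfl⟩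
  have m2 : HurwitzMove [a*b*a⁻¹, a, a] [(a*b*a⁻¹)*a*(a*b*a⁻¹)⁻¹, a*b*a⁻¹, a] :=
    ⟨[], [a], a*b*a⁻¹, a, rfl, rfl⟩
  have key : (a*b*a⁻¹)*a*(a*b*a⁻¹)⁻¹ = b := by
    calc (a*b*a⁻¹)*a*(a*b*a⁻¹)⁻¹ = a*b*a*b⁻¹*a⁻¹ := by group
      _ = b*a*b*b⁻¹*a⁻¹ := by rw [h]
      _ = b := by group
  rw [key] at m2
  have m3 : HurwitzMove [b, a, b] [b, a*b*a⁻¹, a] := ⟨[b], [], a, b, rfl, rfl⟩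
  exact HE_trans (HE_of_move m1) (HE_trans (HE_of_move m2) (HE_symm (HE_of_move m3)))

end Hurwitz

/-! ### The braid group side -/

lemma rel_one {N : ℕ} {r : FreeGroup (Fin N)} (h : r ∈ braidRels N) :
    (PresentedGroup.mk (braidRels N)) r = 1 :=
  (QuotientGroup.eq_one_iff r).2 (Subgroup.subset_normalClosure h)

lemma sigma_comm {N : ℕ} {i j : Fin N} (h : i.val + 2 ≤ j.val) : σ i * σ j = σ j * σ i := by
  have hr : FreeGroup.of i * FreeGroup.of j * (FreeGroup.of j * FreeGroup.of i)⁻¹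
      ∈ braidRels N := Or.inl ⟨i, j, h, rfl⟩
  have h1 := rel_one hr
  rw [map_mul, map_inv, map_mul] at h1
  exact mul_inv_eq_one.1 h1

lemma sigma_braid {N : ℕ} {i j : Fin N} (h : i.val + 1 = j.val) :
    σ i * σ j * σ i = σ j * σ i * σ j := by
  have hr : FreeGroup.of i * FreeGroup.of j * FreeGroup.of i *
      (FreeGroup.of j * FreeGroup.of i * FreeGroup.of j)⁻¹ ∈ braidRels N :=
    Or.inr ⟨i, j, h, rfl⟩
  have h1 := rel_one hr
  rw [map_mul, map_inv, map_mul, map_mul, map_mul] at h1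
  exact mul_inv_eq_one.1 h1

/-- generators, with junk value outside the range -/
noncomputable def σ' (N : ℕ) (x : ℕ) : BraidGroup N :=
  if h : x < N then σ ⟨x, h⟩ else 1

lemma map_Bstep {N : ℕ} {w w' : Wd} (hb : ∀ l ∈ w, l < N) (h : Bstep w w') :
    HurwitzEquiv (w.map (σ' N)) (w'.map (σ' N)) := by
  rcases bstep_cases h with ⟨u, v, x, y, hxy, rfl, rfl⟩ | ⟨u, v, x, rfl, rfl⟩
  · have hx : x < N := hb x (by simp)
    have hy : y < N := hb y (by simp)
    have hcomm : σ' N x * σ' N y = σ' N y * σ' N x := by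
      simp only [σ', dif_pos hx, dif_pos hy]
      exact sigma_comm (i := ⟨x, hx⟩) (j := ⟨y, hy⟩) hxy
    have := HE_context (p := u.map (σ' N)) (q := v.map (σ' N)) (HE_pair hcomm)
    simpa using this
  · have hx : x < N := hb x (by simp)
    have hy : x + 1 < N := hb (x+1) (by simp)
    have hbr : σ' N x * σ' N (x+1) * σ' N x = σ' N (x+1) * σ' N x * σ' N (x+1) := by
      simp only [σ', dif_pos hx, dif_pos hy]
      exact sigma_braid (i := ⟨x, hx⟩) (j := ⟨x+1, hy⟩) rfl
    have := HE_context (p := u.map (σ' N)) (q := v.map (σ' N)) (HE_triple hbr)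
    simpa using this

lemma map_beq {N : ℕ} {w w' : Wd} (hb : ∀ l ∈ w, l < N) (h : beq w w') :
    HurwitzEquiv (w.map (σ' N)) (w'.map (σ' N)) := by
  induction h with
  | refl => exact HE_refl _
  | @tail b c hwb hbc ih =>
      have hbb : ∀ l ∈ b, l < N := fun l hl => hb l ((beq.mem_iff hwb l).2 hl)
      refine HE_trans ih ?_
      rcases hbc with hs | hs
      · exact map_Bstep hbb hs
      · have hcb : ∀ l ∈ c, l < N := fun l hl => hbb l ((Bstep.mem_iff hs l).1 hl)
        exact HE_symm (map_Bstep hcb hs)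

/-! ### The evaluation homomorphism into the group of fractions -/

def toX (N : ℕ) : Fin N → XGrp N := fun i => ⟦(0, ⟨[i.val], by simp [i.isLt]⟩)⟧

lemma toX_rels (N : ℕ) : ∀ r ∈ braidRels N, FreeGroup.lift (toX N) r = 1 := by
  rintro r (⟨i, j, hij, rfl⟩ | ⟨i, j, hij, rfl⟩)
  · simp only [map_mul, map_inv, FreeGroup.lift_apply_of]
    apply mul_inv_eq_one.2
    show Xmul _ _ = Xmul _ _
    simp only [toX, Xmul_mk]
    apply Quotient.sound
    show fracRel N _ _
    unfold fracRel
    simp only [bappend, eP]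
    simpa using bs_comm (Or.inl hij : Far i.val j.val) [] []
  · simp only [map_mul, map_inv, FreeGroup.lift_apply_of]
    apply mul_inv_eq_one.2
    show Xmul (Xmul _ _) _ = Xmul (Xmul _ _) _
    simp only [toX, Xmul_mk]
    apply Quotient.sound
    show fracRel N _ _
    unfold fracRel
    simp only [bappend, eP]
    simpa using bs_braid (Or.inl hij.symm : Adj i.val j.val) [] []

noncomputable def Phi (N : ℕ) : BraidGroup N →* XGrp N :=
  PresentedGroup.toGroup (toX_rels N)

noncomputable def toB (N : ℕ) (w : Wd) : BraidGroup N := (w.map (σ' N)).prod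

lemma Phi_toB {N : ℕ} : ∀ (w : Wd) (hw : ∀ l ∈ w, l < N),
    Phi N (toB N w) = ⟦(0, ⟨w, hw⟩)⟧ := by
  intro w
  induction w with
  | nil =>
      intro hw
      show Phi N ((List.map (σ' N) []).prod) = _
      simp only [List.map_nil, List.prod_nil, map_one]
      rfl
  | cons x w ih =>
      intro hw
      have hx : x < N := hw x (by simp)
      have h1 : toB N (x :: w) = σ ⟨x, hx⟩ * toB N w := by
        show (List.map (σ' N) (x :: w)).prod = _
        rw [List.map_cons, List.prod_cons]
        simp [σ', dif_pos hx, toB]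
      rw [h1, map_mul]
      have h2 : Phi N (σ ⟨x, hx⟩) = toX N ⟨x, hx⟩ := by
        show Phi N (PresentedGroup.of _) = _
        exact PresentedGroup.toGroup.of (toX_rels N)
      rw [h2, ih (fun l hl => hw l (by simp [hl]))]
      show Xmul _ _ = _
      rw [toX, Xmul_mk]
      rfl

lemma toB_inj {N : ℕ} (w w' : Wd) (hw : ∀ l ∈ w, l < N) (hw' : ∀ l ∈ w', l < N)
    (h : toB N w = toB N w') : beq w w' := by
  have h1 := congrArg (Phi N) h
  rw [Phi_toB w hw, Phi_toB w' hw'] at h1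
  have h2 := Quotient.exact h1
  have h3 : beq (eP N 0 ++ w) (eP N 0 ++ w') := h2
  simpa [eP] using h3

end BraidAux

/-- Two equal positive words in the Artin generators of `Bₙ` give Hurwitz
equivalent factorizations. -/
theorem hurwitz_equiv_of_eq_positive_words {n p : ℕ} (hn : 2 ≤ n)
    (i j : Fin p → Fin (n - 1))
    (h : (List.ofFn fun k => σ (i k)).prod = (List.ofFn fun k => σ (j k)).prod) :
    HurwitzEquiv (List.ofFn fun k => σ (i k)) (List.ofFn fun k => σ (j k)) := by
  classical
  have hb1 : ∀ l ∈ (List.ofFn fun k => ((i k).val) : BraidAux.Wd), l < n - 1 := by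
    intro l hl
    rw [List.mem_ofFn] at hl
    obtain ⟨k, rfl⟩ := hl
    exact (i k).isLt
  have hb2 : ∀ l ∈ (List.ofFn fun k => ((j k).val) : BraidAux.Wd), l < n - 1 := by
    intro l hl
    rw [List.mem_ofFn] at hl
    obtain ⟨k, rfl⟩ := hl
    exact (j k).isLt
  have hmap1 : (List.ofFn fun k => ((i k).val) : BraidAux.Wd).map (BraidAux.σ' (n-1))
      = List.ofFn (fun k => σ (i k)) := by
    rw [List.map_ofFn]
    exact congrArg List.ofFn (funext fun k => by
      show BraidAux.σ' (n-1) ((i k).val) = σ (i k)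
      simp [BraidAux.σ', (i k).isLt])
  have hmap2 : (List.ofFn fun k => ((j k).val) : BraidAux.Wd).map (BraidAux.σ' (n-1))
      = List.ofFn (fun k => σ (j k)) := by
    rw [List.map_ofFn]
    exact congrArg List.ofFn (funext fun k => by
      show BraidAux.σ' (n-1) ((j k).val) = σ (j k)
      simp [BraidAux.σ', (j k).isLt])
  have htoB : BraidAux.toB (n-1) (List.ofFn fun k => ((i k).val))
      = BraidAux.toB (n-1) (List.ofFn fun k => ((j k).val)) := by
    show ((List.ofFn fun k => ((i k).val) : BraidAux.Wd).map (BraidAux.σ' (n-1))).prod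
      = ((List.ofFn fun k => ((j k).val) : BraidAux.Wd).map (BraidAux.σ' (n-1))).prod
    rw [hmap1, hmap2]
    exact h
  have hbeq := BraidAux.toB_inj _ _ hb1 hb2 htoB
  have hHE := BraidAux.map_beq hb1 hbeq
  rw [hmap1, hmap2] at hHE
  exact hHE
end

section
/- Let n ≥ 2 and let σ_1,…,σ_{n−1} be the standard Artin generators of B_n. For every i with 1 < i ≤ n−1, the (n)-tuple (σ_i, σ_1, σ_2, …, σ_{n−1}) in (B_n)^n is Hurwitz equivalent to the n-tuple (σ_1, σ_2, …, σ_{n−1}, σ_{i−1}). -/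
section aux
variable {G : Type*} [Group G]

lemma hurwitzMove_cons {x : G} {l l' : List G} (h : HurwitzMove l l') :
    HurwitzMove (x :: l) (x :: l') := by
  obtain ⟨u, v, a, b, h1, h2⟩ := h
  exact ⟨x :: u, v, a, b, by simp [h1], by simp [h2]⟩

lemma hurwitzEquiv_cons {x : G} {l l' : List G} (h : HurwitzEquiv l l') :
    HurwitzEquiv (x :: l) (x :: l') := by
  induction h with
  | rel a b hab => exact Relation.EqvGen.rel _ _ (hurwitzMove_cons hab)
  | refl a => exact Relation.EqvGen.refl _
  | symm a b _ ih => exact Relation.EqvGen.symm _ _ ih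
  | trans a b c _ _ ih1 ih2 => exact Relation.EqvGen.trans _ _ _ ih1 ih2

lemma move_through (l : List G) : ∀ c : G,
    HurwitzEquiv (c :: l) (l ++ [l.prod⁻¹ * c * l.prod]) := by
  induction l with
  | nil => intro c; simpa [HurwitzEquiv] using Relation.EqvGen.refl (r := @HurwitzMove G _) [c]
  | cons b l ih =>
    intro c
    have key : b * (b⁻¹ * c * b) * b⁻¹ = c := by group
    have step : HurwitzMove (b :: (b⁻¹ * c * b) :: l) (c :: b :: l) :=
      ⟨[], l, b, b⁻¹ * c * b, rfl, by simp [key]⟩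
    have h1 : HurwitzEquiv (c :: b :: l) (b :: (b⁻¹ * c * b) :: l) :=
      Relation.EqvGen.symm _ _ (Relation.EqvGen.rel _ _ step)
    have h2 := hurwitzEquiv_cons (x := b) (ih (b⁻¹ * c * b))
    have h3 : b :: (l ++ [l.prod⁻¹ * (b⁻¹ * c * b) * l.prod]) =
        (b :: l) ++ [(b :: l).prod⁻¹ * c * (b :: l).prod] := by
      simp [List.prod_cons, mul_assoc]
    rw [h3] at h2
    exact Relation.EqvGen.trans _ _ _ h1 h2
end aux

section braid
variable {m : ℕ}

lemma braidRels_eq_one {r : FreeGroup (Fin m)} (h : r ∈ braidRels m) :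
    PresentedGroup.mk (braidRels m) r = 1 := by
  have : r ∈ Subgroup.normalClosure (braidRels m) := Subgroup.subset_normalClosure h
  exact (QuotientGroup.eq_one_iff r).2 this

lemma braid_comm {a b : Fin m} (h : a.val + 2 ≤ b.val) : Commute (σ a) (σ b) := by
  have h1 := braidRels_eq_one (Or.inl ⟨a, b, h, rfl⟩)
  simp only [map_mul, map_inv] at h1
  have := mul_inv_eq_one.mp h1
  exact this

lemma braid_braid {a b : Fin m} (h : a.val + 1 = b.val) :
    σ a * σ b * σ a = σ b * σ a * σ b := by
  have h1 := braidRels_eq_one (Or.inr ⟨a, b, h, rfl⟩)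
  simp only [map_mul, map_inv] at h1
  exact mul_inv_eq_one.mp h1

noncomputable def gg (m : ℕ) (k : ℕ) : BraidGroup m := if h : k < m then σ ⟨k, h⟩ else 1

noncomputable def D (m : ℕ) (t : ℕ) : BraidGroup m := ((List.range t).map (gg m)).prod

lemma D_succ (t : ℕ) : D m (t + 1) = D m t * gg m t := by
  simp [D, List.range_succ]

lemma gg_val (k : Fin m) : gg m k.val = σ k := by
  simp [gg, k.isLt]

lemma commute_sigma_D (i : Fin m) : ∀ t, t + 1 ≤ i.val → Commute (σ i) (D m t) := by
  intro t
  induction t with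
  | zero => intro _; simp [D]
  | succ t ih =>
    intro ht
    rw [D_succ]
    refine (ih (by omega)).mul_right ?_
    have htm : t < m := lt_trans (by omega) i.isLt
    have : gg m t = σ ⟨t, htm⟩ := dif_pos htm
    rw [this]
    exact (braid_comm (a := ⟨t, htm⟩) (b := i) (by simpa using by omega)).symm

lemma sigma_mul_D (i j : Fin m) (hij : j.val + 1 = i.val) :
    ∀ t, i.val < t → t ≤ m → σ i * D m t = D m t * σ j := by
  intro t
  induction t with
  | zero => omega
  | succ t ih =>
    intro ht hm
    rcases Nat.lt_or_ge i.val t with h | h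
    · have hD := ih h (by omega)
      have htm : t < m := by omega
      have hgt : gg m t = σ ⟨t, htm⟩ := dif_pos htm
      have hcomm : σ j * σ ⟨t, htm⟩ = σ ⟨t, htm⟩ * σ j :=
        (braid_comm (a := j) (b := ⟨t, htm⟩) (by simp; omega)).eq
      rw [D_succ, hgt, ← mul_assoc, hD, mul_assoc, hcomm, ← mul_assoc]
    · have ht' : t = i.val := by omega
      subst ht'
      have hD1 : D m (i.val + 1) = D m j.val * σ j * σ i := by
        rw [D_succ, gg_val i, ← hij, D_succ, gg_val j]
      rw [hD1]
      have hc : σ i * D m j.val = D m j.val * σ i :=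
        (commute_sigma_D i j.val (by omega)).eq
      calc σ i * (D m j.val * σ j * σ i)
          = σ i * D m j.val * (σ j * σ i) := by simp [mul_assoc]
        _ = D m j.val * σ i * (σ j * σ i) := by rw [hc]
        _ = D m j.val * (σ i * σ j * σ i) := by simp [mul_assoc]
        _ = D m j.val * (σ j * σ i * σ j) := by rw [← braid_braid hij]
        _ = D m j.val * σ j * σ i * σ j := by simp [mul_assoc]

lemma D_eq_prod : D m m = (List.ofFn fun k : Fin m => σ k).prod := by
  unfold D
  congr 1
  apply List.ext_getElem (by simp)
  intro k h1 h2
  simp only [List.getElem_map, List.getElem_range, List.getElem_ofFn]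
  simp at h2
  simp [gg, h2]

lemma sigma_conj (i j : Fin m) (hij : j.val + 1 = i.val) :
    σ i * (List.ofFn fun k : Fin m => σ k).prod
      = (List.ofFn fun k : Fin m => σ k).prod * σ j := by
  rw [← D_eq_prod]
  exact sigma_mul_D i j hij m i.isLt le_rfl
end braid


/-- For `1 < i ≤ n - 1` (in the paper's one-based indexing; here zero-based,
so `j + 1 = i`), the tuple `(σᵢ, σ₁, …, σₙ₋₁)` is Hurwitz equivalent to
`(σ₁, …, σₙ₋₁, σᵢ₋₁)`. -/

theorem hurwitz_move_gen_through_pi {n : ℕ} (hn : 2 ≤ n)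
    (i j : Fin (n - 1)) (hij : j.val + 1 = i.val) :
    HurwitzEquiv (σ i :: List.ofFn (fun k : Fin (n - 1) => σ k))
      (List.ofFn (fun k : Fin (n - 1) => σ k) ++ [σ j]) := by
  set L := List.ofFn fun k : Fin (n - 1) => σ k with hL
  have h1 := move_through L (σ i)
  have h2 : L.prod⁻¹ * σ i * L.prod = σ j := by
    rw [mul_assoc, sigma_conj i j hij, inv_mul_cancel_left]
  rw [h2] at h1
  exact h1
end

section
/- Let n ≥ 2 and let σ_1,…,σ_{n−1} be the standard Artin generators of B_n. For every j with 1 ≤ j ≤ n−1, the n(n−1)-tuple consisting of n consecutive copies of the sequence (σ_1, σ_2, …, σ_{n−1}) is Hurwitz equivalent to the n(n−1)-tuple consisting of n consecutive copies of the sequence (σ_j σ_1 σ_j⁻¹, σ_j σ_2 σ_j⁻¹, …, σ_j σ_{n−1} σ_j⁻¹). (Both are factorizations of Δ_n² = (σ_1⋯σ_{n−1})^n, since Δ_n² is central.) -/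
set_option linter.unusedSectionVars false

section Basic
variable {G : Type*} [Group G]

theorem hwe_refl (l : List G) : HurwitzEquiv l l := Relation.EqvGen.refl l

theorem hwe_symm {l l' : List G} (h : HurwitzEquiv l l') : HurwitzEquiv l' l :=
  Relation.EqvGen.symm _ _ h

theorem hwe_trans {a b c : List G} (h1 : HurwitzEquiv a b) (h2 : HurwitzEquiv b c) :
    HurwitzEquiv a c := Relation.EqvGen.trans _ _ _ h1 h2

theorem hwe_of_move {l l' : List G} (h : HurwitzMove l l') : HurwitzEquiv l l' :=
  Relation.EqvGen.rel _ _ h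

theorem hwMove_append_left (u : List G) {l l' : List G} (h : HurwitzMove l l') :
    HurwitzMove (u ++ l) (u ++ l') := by
  obtain ⟨w, v, a, b, h1, h2⟩ := h
  exact ⟨u ++ w, v, a, b, by simp [h1], by simp [h2]⟩

theorem hwMove_append_right (w : List G) {l l' : List G} (h : HurwitzMove l l') :
    HurwitzMove (l ++ w) (l' ++ w) := by
  obtain ⟨u, v, a, b, h1, h2⟩ := h
  exact ⟨u, v ++ w, a, b, by simp [h1], by simp [h2]⟩

theorem hwe_append_left (u : List G) {l l' : List G} (h : HurwitzEquiv l l') :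
    HurwitzEquiv (u ++ l) (u ++ l') := by
  induction h with
  | rel x y hxy => exact hwe_of_move (hwMove_append_left u hxy)
  | refl x => exact hwe_refl _
  | symm x y _ ih => exact hwe_symm ih
  | trans x y z _ _ ih1 ih2 => exact hwe_trans ih1 ih2

theorem hwe_append_right (w : List G) {l l' : List G} (h : HurwitzEquiv l l') :
    HurwitzEquiv (l ++ w) (l' ++ w) := by
  induction h with
  | rel x y hxy => exact hwe_of_move (hwMove_append_right w hxy)
  | refl x => exact hwe_refl _
  | symm x y _ ih => exact hwe_symm ih
  | trans x y z _ _ ih1 ih2 => exact hwe_trans ih1 ih2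

theorem hwe_swap {a b : G} (h : a * b = b * a) (v : List G) :
    HurwitzEquiv (a :: b :: v) (b :: a :: v) := by
  have m : HurwitzMove (a :: b :: v) ((a * b * a⁻¹) :: a :: v) := ⟨[], v, a, b, rfl, rfl⟩
  have e : a * b * a⁻¹ = b := by rw [h]; group
  rw [e] at m
  exact hwe_of_move m

theorem hwe_triple {a b : G} (h : a * b * a = b * a * b) (v : List G) :
    HurwitzEquiv (a :: b :: a :: v) (b :: a :: b :: v) := by
  have m1 : HurwitzMove (a :: b :: a :: v) (a :: (b * a * b⁻¹) :: b :: v) :=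
    ⟨[a], v, b, a, rfl, rfl⟩
  have m2 : HurwitzMove (a :: (b * a * b⁻¹) :: b :: v)
      ((a * (b * a * b⁻¹) * a⁻¹) :: a :: b :: v) := ⟨[], b :: v, a, b * a * b⁻¹, rfl, rfl⟩
  have e : a * (b * a * b⁻¹) * a⁻¹ = b := by
    have : a * (b * a * b⁻¹) * a⁻¹ = (a * b * a) * b⁻¹ * a⁻¹ := by group
    rw [this, h]; group
  rw [e] at m2
  exact hwe_trans (hwe_of_move m1) (hwe_of_move m2)

theorem hwe_rot (a : G) (A : List G) :
    HurwitzEquiv (a :: A) (A.map (fun x => a * x * a⁻¹) ++ [a]) := by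
  induction A with
  | nil => exact hwe_refl [a]
  | cons x A ih =>
      have m1 : HurwitzMove (a :: x :: A) ((a * x * a⁻¹) :: a :: A) := ⟨[], A, a, x, rfl, rfl⟩
      have step2 := hwe_append_left [a * x * a⁻¹] ih
      simpa using hwe_trans (hwe_of_move m1) step2

theorem hwe_map_conj (t : G) {l l' : List G} (h : HurwitzEquiv l l') :
    HurwitzEquiv (l.map fun x => t * x * t⁻¹) (l'.map fun x => t * x * t⁻¹) := by
  have key : ∀ a b : G, t * (a * b * a⁻¹) * t⁻¹
      = (t * a * t⁻¹) * (t * b * t⁻¹) * (t * a * t⁻¹)⁻¹ := by intro a b; group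
  induction h with
  | rel x y hxy =>
      obtain ⟨u, v, a, b, h1, h2⟩ := hxy
      refine hwe_of_move ⟨u.map (fun x => t * x * t⁻¹), v.map (fun x => t * x * t⁻¹),
        t * a * t⁻¹, t * b * t⁻¹, ?_, ?_⟩
      · simp [h1]
      · simp [h2, key]
  | refl x => exact hwe_refl _
  | symm x y _ ih => exact hwe_symm ih
  | trans x y z _ _ ih1 ih2 => exact hwe_trans ih1 ih2

theorem hwe_commute_out {a : G} : ∀ (u : List G), (∀ x ∈ u, a * x = x * a) →
    HurwitzEquiv (u ++ [a]) (a :: u) := by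
  intro u
  induction u with
  | nil => intro _; exact hwe_refl [a]
  | cons x u ih =>
      intro hcomm
      have h1 : HurwitzEquiv (x :: (u ++ [a])) (x :: (a :: u)) :=
        hwe_append_left [x] (ih fun y hy => hcomm y (List.mem_cons_of_mem _ hy))
      have h2 : HurwitzEquiv (x :: a :: u) (a :: x :: u) :=
        hwe_swap (by rw [hcomm x List.mem_cons_self]) u
      exact hwe_trans h1 h2

end Basic

section Words
variable {G : Type*} [Group G]

def seg (g : ℕ → G) (a k : ℕ) : List G := (List.range' a k).map g

def DD (g : ℕ → G) (m : ℕ) : List G := seg g 0 m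

def Dpow (g : ℕ → G) (m p : ℕ) : List G := (List.replicate p (DD g m)).flatten

variable (g : ℕ → G) (m : ℕ)

theorem seg_succ_right (a k : ℕ) : seg g a (k + 1) = seg g a k ++ [g (a + k)] := by
  rw [seg, List.range'_1_concat]; simp [seg]

theorem seg_succ_left (a k : ℕ) : seg g a (k + 1) = g a :: seg g (a + 1) k := by
  rw [seg, List.range'_succ]; rfl

theorem seg_append (a k k' : ℕ) : seg g a k ++ seg g (a + k) k' = seg g a (k' + k) := by
  rw [seg, seg, seg, ← List.map_append, List.range'_append_1, Nat.add_comm]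

theorem Dpow_succ_left (p : ℕ) : Dpow g m (p + 1) = DD g m ++ Dpow g m p := by
  simp [Dpow, List.replicate_succ]

theorem Dpow_succ_right (p : ℕ) : Dpow g m (p + 1) = Dpow g m p ++ DD g m := by
  simp [Dpow, List.replicate_succ']

theorem Dpow_add (p q : ℕ) : Dpow g m (p + q) = Dpow g m p ++ Dpow g m q := by
  induction q with
  | zero => simp [Dpow]
  | succ q ih => rw [← Nat.add_assoc, Dpow_succ_right, ih, Dpow_succ_right, List.append_assoc]

end Words

section Rewriting
variable {G : Type*} [Group G] (g : ℕ → G) (m : ℕ)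
variable (hc : ∀ i j, i + 2 ≤ j → j < m → g i * g j = g j * g i)
variable (hb : ∀ i, i + 1 < m → g i * g (i + 1) * g i = g (i + 1) * g i * g (i + 1))

include hc hb

/-- `δ ⬝ σᵢ ≈ σᵢ₊₁ ⬝ δ`. -/
theorem hwe_shift1 (i : ℕ) (h : i + 1 < m) :
    HurwitzEquiv (DD g m ++ [g i]) (g (i + 1) :: DD g m) := by
  set t := m - (i + 2) with ht
  have hm : m = (i + 2) + t := by omega
  have hsplit : DD g m = seg g 0 (i + 2) ++ seg g (i + 2) t := by
    have h0 := seg_append g 0 (i+2) t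
    rw [Nat.zero_add] at h0
    rw [DD, h0]
    congr 1; omega
  -- step 1 : move `g i` left past `seg g (i+2) t`
  have s1 : HurwitzEquiv (seg g (i + 2) t ++ [g i]) (g i :: seg g (i + 2) t) := by
    apply hwe_commute_out
    intro x hx
    rw [seg, List.mem_map] at hx
    obtain ⟨y, hy, rfl⟩ := hx
    rw [List.mem_range'_1] at hy
    exact hc i y (by omega) (by omega)
  have e1 : HurwitzEquiv (DD g m ++ [g i])
      (seg g 0 (i + 2) ++ (g i :: seg g (i + 2) t)) := by
    rw [hsplit, List.append_assoc]
    exact hwe_append_left _ s1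
  -- step 2 : triple move
  have hsplit2 : seg g 0 (i + 2) = seg g 0 i ++ [g i, g (i + 1)] := by
    have h1 : seg g i 2 = [g i, g (i+1)] := by
      rw [show (2:ℕ) = 1 + 1 from rfl, seg_succ_right, seg_succ_right]; simp [seg]
    have h2 := seg_append g 0 i 2
    rw [Nat.zero_add] at h2
    rw [← h1, h2]
    congr 1; omega
  have e2 : HurwitzEquiv (seg g 0 (i + 2) ++ (g i :: seg g (i + 2) t))
      (seg g 0 i ++ (g (i+1) :: g i :: g (i+1) :: seg g (i + 2) t)) := by
    rw [hsplit2]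
    have : seg g 0 i ++ [g i, g (i+1)] ++ (g i :: seg g (i + 2) t)
        = seg g 0 i ++ (g i :: g (i+1) :: g i :: seg g (i + 2) t) := by simp
    rw [this]
    exact hwe_append_left _ (hwe_triple (hb i h) _)
  -- step 3 : move `g (i+1)` left past `seg g 0 i`
  have s3 : HurwitzEquiv (seg g 0 i ++ [g (i+1)]) (g (i+1) :: seg g 0 i) := by
    apply hwe_commute_out
    intro x hx
    rw [seg, List.mem_map] at hx
    obtain ⟨y, hy, rfl⟩ := hx
    rw [List.mem_range'_1] at hy
    exact (hc y (i+1) (by omega) (by omega)).symm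
  have e3 : HurwitzEquiv (seg g 0 i ++ (g (i+1) :: g i :: g (i+1) :: seg g (i + 2) t))
      (g (i+1) :: (seg g 0 i ++ (g i :: g (i+1) :: seg g (i + 2) t))) := by
    have h1 : seg g 0 i ++ (g (i+1) :: g i :: g (i+1) :: seg g (i + 2) t)
        = (seg g 0 i ++ [g (i+1)]) ++ (g i :: g (i+1) :: seg g (i + 2) t) := by simp
    have h2 : (g (i+1) :: seg g 0 i) ++ (g i :: g (i+1) :: seg g (i + 2) t)
        = g (i+1) :: (seg g 0 i ++ (g i :: g (i+1) :: seg g (i + 2) t)) := by simp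
    rw [h1, ← h2]
    exact hwe_append_right _ s3
  have efin : seg g 0 i ++ (g i :: g (i+1) :: seg g (i + 2) t) = DD g m := by
    rw [hsplit, hsplit2]; simp
  rw [efin] at e3
  exact hwe_trans (hwe_trans e1 e2) e3

/-- block right-shift: `I[a,a+k) ⬝ δ ≈ δ ⬝ I[a-1,a-1+k)` for `a ≥ 1`, `a + k ≤ m`. -/
theorem hwe_shiftBlock (a k : ℕ) (ha : 1 ≤ a) (hk : a + k ≤ m) :
    HurwitzEquiv (seg g a k ++ DD g m) (DD g m ++ seg g (a - 1) k) := by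
  induction k with
  | zero => simp [seg]; exact hwe_refl _
  | succ k ih =>
      have e1 : seg g a (k+1) ++ DD g m = seg g a k ++ ([g (a+k)] ++ DD g m) := by
        rw [seg_succ_right]; simp
      have s1 : HurwitzEquiv ([g (a+k)] ++ DD g m) (DD g m ++ [g (a+k-1)]) := by
        have := hwe_shift1 g m hc hb (a+k-1) (by omega)
        rw [show a + k - 1 + 1 = a + k by omega] at this
        exact hwe_symm this
      have e2 : HurwitzEquiv (seg g a (k+1) ++ DD g m)
          ((seg g a k ++ DD g m) ++ [g (a+k-1)]) := by
        rw [e1]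
        have := hwe_append_left (seg g a k) s1
        simpa using this
      have e3 : HurwitzEquiv ((seg g a k ++ DD g m) ++ [g (a+k-1)])
          ((DD g m ++ seg g (a-1) k) ++ [g (a+k-1)]) :=
        hwe_append_right _ (ih (by omega))
      have efin : (DD g m ++ seg g (a-1) k) ++ [g (a+k-1)] = DD g m ++ seg g (a-1) (k+1) := by
        rw [seg_succ_right, show a - 1 + k = a + k - 1 by omega]; simp
      rw [efin] at e3
      exact hwe_trans e2 e3

/-- block shift across `δ^p`. -/
theorem hwe_shiftBlockPow (a k p : ℕ) (hp : p ≤ a) (hk : a + k ≤ m) :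
    HurwitzEquiv (seg g a k ++ Dpow g m p) (Dpow g m p ++ seg g (a - p) k) := by
  induction p with
  | zero => simp [Dpow]; exact hwe_refl _
  | succ p ih =>
      have e1 : seg g a k ++ Dpow g m (p+1) = (seg g a k ++ Dpow g m p) ++ DD g m := by
        rw [Dpow_succ_right]; simp
      have s1 : HurwitzEquiv ((seg g a k ++ Dpow g m p) ++ DD g m)
          ((Dpow g m p ++ seg g (a-p) k) ++ DD g m) :=
        hwe_append_right _ (ih (by omega))
      have s2 : HurwitzEquiv (Dpow g m p ++ (seg g (a-p) k ++ DD g m))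
          (Dpow g m p ++ (DD g m ++ seg g (a-p-1) k)) :=
        hwe_append_left _ (hwe_shiftBlock g m hc hb (a-p) k (by omega) (by omega))
      have efin : Dpow g m p ++ (DD g m ++ seg g (a-p-1) k)
          = Dpow g m (p+1) ++ seg g (a-(p+1)) k := by
        rw [Dpow_succ_right, show a-p-1 = a-(p+1) by omega]; simp
      rw [e1]
      refine hwe_trans s1 ?_
      rw [List.append_assoc]
      rw [efin] at s2
      exact s2
end Rewriting

section Rewriting2
variable {G : Type*} [Group G] (g : ℕ → G) (m : ℕ)
variable (hc : ∀ i j, i + 2 ≤ j → j < m → g i * g j = g j * g i)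
variable (hb : ∀ i, i + 1 < m → g i * g (i + 1) * g i = g (i + 1) * g i * g (i + 1))

include hc hb

theorem hwe_claimP (q : ℕ) (hq : q ≤ m) :
    HurwitzEquiv (Dpow g m (q+1)) (seg g 0 q ++ Dpow g m q ++ seg g 0 (m - q)) := by
  induction q with
  | zero => simp [Dpow, DD]; exact hwe_refl _
  | succ q ih =>
      have s1 : HurwitzEquiv (Dpow g m (q+1+1))
          ((seg g 0 q ++ Dpow g m q ++ seg g 0 (m - q)) ++ DD g m) := by
        rw [Dpow_succ_right]
        exact hwe_append_right _ (ih (by omega))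
      have esplit : (seg g 0 q ++ Dpow g m q ++ seg g 0 (m - q)) ++ DD g m
          = (seg g 0 q ++ Dpow g m q ++ [g 0]) ++ (seg g 1 (m - q - 1) ++ DD g m) := by
        have e : seg g 0 (m - q - 1 + 1) = g 0 :: seg g 1 (m - q - 1) := by
          simpa using seg_succ_left g 0 (m - q - 1)
        rw [show m - q = m - q - 1 + 1 by omega, e]; simp
      have s2 : HurwitzEquiv
          ((seg g 0 q ++ Dpow g m q ++ [g 0]) ++ (seg g 1 (m-q-1) ++ DD g m))
          ((seg g 0 q ++ Dpow g m q ++ [g 0]) ++ (DD g m ++ seg g 0 (m-q-1))) :=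
        hwe_append_left _ (hwe_shiftBlock g m hc hb 1 (m-q-1) le_rfl (by omega))
      have s3 : HurwitzEquiv (Dpow g m q ++ [g 0]) ([g q] ++ Dpow g m q) := by
        have h0 := hwe_shiftBlockPow g m hc hb q 1 q le_rfl (by omega)
        have e1 : seg g q 1 = [g q] := by simp [seg]
        have e2 : seg g (q - q) 1 = [g 0] := by simp [seg]
        rw [e1, e2] at h0
        exact hwe_symm h0
      have s4 : HurwitzEquiv
          ((seg g 0 q ++ Dpow g m q ++ [g 0]) ++ (DD g m ++ seg g 0 (m-q-1)))
          ((seg g 0 q ++ ([g q] ++ Dpow g m q)) ++ (DD g m ++ seg g 0 (m-q-1))) := by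
        apply hwe_append_right
        rw [List.append_assoc]
        exact hwe_append_left _ s3
      have efin : (seg g 0 q ++ ([g q] ++ Dpow g m q)) ++ (DD g m ++ seg g 0 (m-q-1))
          = seg g 0 (q+1) ++ Dpow g m (q+1) ++ seg g 0 (m - (q+1)) := by
        rw [seg_succ_right, Dpow_succ_right, Nat.zero_add,
          show m - q - 1 = m - (q+1) by omega]
        simp
      refine hwe_trans s1 ?_
      rw [esplit]
      refine hwe_trans s2 ?_
      rw [← efin]
      exact s4

theorem hwe_claimC (k : ℕ) (hk : k ≤ m) :
    HurwitzEquiv (Dpow g m (m+1)) (seg g k (m-k) ++ Dpow g m m ++ seg g 0 k) := by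
  have eD : Dpow g m m = Dpow g m k ++ Dpow g m (m-k) := by
    have := Dpow_add g m k (m-k)
    rw [show k + (m-k) = m by omega] at this
    exact this
  have s1 : HurwitzEquiv (seg g k (m-k) ++ Dpow g m k) (Dpow g m k ++ seg g 0 (m-k)) := by
    have h0 := hwe_shiftBlockPow g m hc hb k (m-k) k le_rfl (by omega)
    rw [Nat.sub_self] at h0
    exact h0
  have s2 : HurwitzEquiv (seg g 0 (m-k) ++ (Dpow g m (m-k) ++ seg g 0 k))
      (Dpow g m (m-k+1)) := by
    have h0 := hwe_claimP g m hc hb (m-k) (by omega)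
    rw [show m - (m-k) = k by omega] at h0
    rw [← List.append_assoc]
    exact hwe_symm h0
  have main : HurwitzEquiv (seg g k (m-k) ++ Dpow g m m ++ seg g 0 k)
      (Dpow g m (m+1)) := by
    have e0 : seg g k (m-k) ++ Dpow g m m ++ seg g 0 k
        = (seg g k (m-k) ++ Dpow g m k) ++ (Dpow g m (m-k) ++ seg g 0 k) := by
      rw [eD]; simp
    rw [e0]
    refine hwe_trans (hwe_append_right _ s1) ?_
    rw [List.append_assoc]
    refine hwe_trans (hwe_append_left _ s2) ?_
    rw [← Dpow_add, show k + (m-k+1) = m+1 by omega]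
    exact hwe_refl _
  exact hwe_symm main

theorem hwe_conj_letter (J : ℕ) (hJ : J < m) :
    HurwitzEquiv (Dpow g m (m+1)) ((Dpow g m (m+1)).map (fun x => g J * x * (g J)⁻¹)) := by
  set A : List G := seg g (J+1) (m-1-J) ++ (Dpow g m m ++ seg g 0 J) with hA
  have h1 : HurwitzEquiv (Dpow g m (m+1)) (g J :: A) := by
    have h0 := hwe_claimC g m hc hb J (by omega)
    have e : seg g J (m-J) = g J :: seg g (J+1) (m-1-J) := by
      have e0 : seg g J (m-1-J+1) = g J :: seg g (J+1) (m-1-J) := seg_succ_left g J (m-1-J)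
      rw [show m - J = m-1-J+1 by omega, e0]
    rw [e] at h0
    have e2 : (g J :: seg g (J+1) (m-1-J)) ++ Dpow g m m ++ seg g 0 J = g J :: A := by
      rw [hA]; simp
    rw [e2] at h0
    exact h0
  have h2 : HurwitzEquiv (Dpow g m (m+1)) (A ++ [g J]) := by
    have h0 := hwe_claimC g m hc hb (J+1) (by omega)
    have e : seg g 0 (J+1) = seg g 0 J ++ [g J] := by
      rw [seg_succ_right, Nat.zero_add]
    rw [e, show m - (J+1) = m - 1 - J by omega] at h0
    have e2 : seg g (J+1) (m-1-J) ++ Dpow g m m ++ (seg g 0 J ++ [g J]) = A ++ [g J] := by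
      rw [hA]; simp
    rw [e2] at h0
    exact h0
  have h3 := hwe_map_conj (g J) h2
  have e3 : (A ++ [g J]).map (fun x => g J * x * (g J)⁻¹)
      = A.map (fun x => g J * x * (g J)⁻¹) ++ [g J] := by
    simp [mul_inv_cancel_right]
  rw [e3] at h3
  have h4 := hwe_rot (g J) A
  exact hwe_trans (hwe_trans h1 h4) (hwe_symm h3)

end Rewriting2

section BraidFacts

theorem braid_rel_one {N : ℕ} {r : FreeGroup (Fin N)} (hr : r ∈ braidRels N) :
    PresentedGroup.mk (braidRels N) r = 1 :=
  (QuotientGroup.eq_one_iff r).mpr (Subgroup.subset_normalClosure hr)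

theorem braid_comm_s7 {N : ℕ} (i j : Fin N) (h : i.val + 2 ≤ j.val) :
    σ i * σ j = σ j * σ i := by
  have h1 := braid_rel_one (N := N) (Or.inl ⟨i, j, h, rfl⟩)
  rw [map_mul, map_mul, map_inv, map_mul, mul_inv_eq_one] at h1
  exact h1

theorem braid_triple {N : ℕ} (i j : Fin N) (h : i.val + 1 = j.val) :
    σ i * σ j * σ i = σ j * σ i * σ j := by
  have h1 := braid_rel_one (N := N) (Or.inr ⟨i, j, h, rfl⟩)
  rw [map_mul, map_mul, map_inv, map_mul, map_mul, mul_inv_eq_one] at h1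
  exact h1

end BraidFacts

/-- Conjugating the standard `Δₙ²` factorization `(σ₁ ⋯ σₙ₋₁)ⁿ` by a single
generator `σⱼ` yields a Hurwitz equivalent factorization. -/
theorem hurwitz_equiv_conj_by_gen {n : ℕ} (hn : 2 ≤ n) (j : Fin (n - 1)) :
    HurwitzEquiv
      (List.replicate n (List.ofFn fun i : Fin (n - 1) => σ i)).flatten
      (List.replicate n (List.ofFn fun i : Fin (n - 1) => σ j * σ i * (σ j)⁻¹)).flatten := by
  classical
  let g : ℕ → BraidGroup (n - 1) := fun i => if h : i < n - 1 then σ ⟨i, h⟩ else 1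
  have hc : ∀ i k, i + 2 ≤ k → k < n - 1 → g i * g k = g k * g i := by
    intro i k h hk
    have hi : i < n - 1 := by omega
    simp only [g, dif_pos hi, dif_pos hk]
    exact braid_comm_s7 ⟨i, hi⟩ ⟨k, hk⟩ h
  have hb : ∀ i, i + 1 < n - 1 → g i * g (i + 1) * g i = g (i + 1) * g i * g (i + 1) := by
    intro i h
    have hi : i < n - 1 := by omega
    simp only [g, dif_pos hi, dif_pos h]
    exact braid_triple ⟨i, hi⟩ ⟨i + 1, h⟩ rfl
  have eB : (List.ofFn fun i : Fin (n - 1) => σ i) = DD g (n - 1) := by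
    apply List.ext_getElem
    · simp [DD, seg]
    · intro i h1 h2
      have hi : i < n - 1 := by simpa using h1
      simp [DD, seg, g, hi]
  have egj : g j.val = σ j := by simp [g, j.isLt]
  have en : n = (n - 1) + 1 := by omega
  have main := hwe_conj_letter g (n - 1) hc hb j.val j.isLt
  have eL : (List.replicate n (List.ofFn fun i : Fin (n - 1) => σ i)).flatten
      = Dpow g (n - 1) ((n - 1) + 1) := by
    rw [eB, Dpow, ← en]
  have e1 : (List.ofFn fun i : Fin (n - 1) => σ j * σ i * (σ j)⁻¹)
      = (DD g (n - 1)).map (fun x => g j.val * x * (g j.val)⁻¹) := by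
    rw [← eB, List.map_ofFn]
    congr 1
    funext i
    simp [egj]
  have eR : (List.replicate n (List.ofFn fun i : Fin (n - 1) => σ j * σ i * (σ j)⁻¹)).flatten
      = (Dpow g (n - 1) ((n - 1) + 1)).map (fun x => g j.val * x * (g j.val)⁻¹) := by
    rw [e1, Dpow, ← en, List.map_flatten, List.map_replicate]
  rw [eL, eR]
  exact main
end

section
/- Let n ≥ 2 and let σ_1,…,σ_{n−1} be the standard Artin generators of B_n. For every braid b ∈ B_n, the n(n−1)-tuple consisting of n consecutive copies of the sequence (σ_1, σ_2, …, σ_{n−1}) is Hurwitz equivalent to the n(n−1)-tuple consisting of n consecutive copies of the sequence (b σ_1 b⁻¹, b σ_2 b⁻¹, …, b σ_{n−1} b⁻¹). -/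
namespace Hur


variable {G : Type*} [Group G]

theorem he_refl (l : List G) : HurwitzEquiv l l := Relation.EqvGen.refl l

theorem he_symm {l l' : List G} (h : HurwitzEquiv l l') : HurwitzEquiv l' l :=
  Relation.EqvGen.symm _ _ h

theorem he_trans {l₁ l₂ l₃ : List G} (h : HurwitzEquiv l₁ l₂) (h' : HurwitzEquiv l₂ l₃) :
    HurwitzEquiv l₁ l₃ := Relation.EqvGen.trans _ _ _ h h'

theorem he_of_move {l l' : List G} (h : HurwitzMove l l') : HurwitzEquiv l l' :=
  Relation.EqvGen.rel _ _ h

theorem move_cons {v : List G} (a b : G) :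
    HurwitzMove (a :: b :: v) ((a * b * a⁻¹) :: a :: v) :=
  ⟨[], v, a, b, rfl, rfl⟩

theorem move_append_left {l l' : List G} (w : List G) (h : HurwitzMove l l') :
    HurwitzMove (w ++ l) (w ++ l') := by
  obtain ⟨u, v, a, b, h1, h2⟩ := h
  exact ⟨w ++ u, v, a, b, by simp [h1], by simp [h2]⟩

theorem move_append_right {l l' : List G} (w : List G) (h : HurwitzMove l l') :
    HurwitzMove (l ++ w) (l' ++ w) := by
  obtain ⟨u, v, a, b, h1, h2⟩ := h
  exact ⟨u, v ++ w, a, b, by simp [h1], by simp [h2]⟩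

theorem he_append_left {l l' : List G} (w : List G) (h : HurwitzEquiv l l') :
    HurwitzEquiv (w ++ l) (w ++ l') := by
  induction h with
  | rel x y hxy => exact he_of_move (move_append_left w hxy)
  | refl x => exact he_refl _
  | symm x y _ ih => exact he_symm ih
  | trans x y z _ _ ih1 ih2 => exact he_trans ih1 ih2

theorem he_append_right {l l' : List G} (w : List G) (h : HurwitzEquiv l l') :
    HurwitzEquiv (l ++ w) (l' ++ w) := by
  induction h with
  | rel x y hxy => exact he_of_move (move_append_right w hxy)
  | refl x => exact he_refl _
  | symm x y _ ih => exact he_symm ih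
  | trans x y z _ _ ih1 ih2 => exact he_trans ih1 ih2

theorem he_cons {l l' : List G} (a : G) (h : HurwitzEquiv l l') :
    HurwitzEquiv (a :: l) (a :: l') := he_append_left [a] h

theorem he_append {l₁ l₂ m₁ m₂ : List G} (h : HurwitzEquiv l₁ l₂) (h' : HurwitzEquiv m₁ m₂) :
    HurwitzEquiv (l₁ ++ m₁) (l₂ ++ m₂) :=
  he_trans (he_append_right m₁ h) (he_append_left l₂ h')

/-- conjugation map preserves Hurwitz equivalence -/
theorem he_map_conj {l l' : List G} (g : G) (h : HurwitzEquiv l l') :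
    HurwitzEquiv (l.map fun x => g * x * g⁻¹) (l'.map fun x => g * x * g⁻¹) := by
  induction h with
  | rel x y hxy =>
      obtain ⟨u, v, a, b, h1, h2⟩ := hxy
      refine he_of_move ⟨u.map fun x => g * x * g⁻¹, v.map fun x => g * x * g⁻¹,
        g * a * g⁻¹, g * b * g⁻¹, by simp [h1], ?_⟩
      rw [h2]
      simp only [List.map_append, List.map_cons]
      congr 2
      group
  | refl x => exact he_refl _
  | symm x y _ ih => exact he_symm ih
  | trans x y z _ _ ih1 ih2 => exact he_trans ih1 ih2

/-- a commuting adjacent pair can be swapped -/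
theorem he_swap {a b : G} (h : a * b = b * a) (v : List G) :
    HurwitzEquiv (a :: b :: v) (b :: a :: v) := by
  have hm := move_cons (v := v) a b
  rw [show a * b * a⁻¹ = b by rw [h]; group] at hm
  exact he_of_move hm

/-- the braid-relation triple move -/
theorem he_braid {a b : G} (h : a * b * a = b * a * b) (v : List G) :
    HurwitzEquiv (b :: a :: b :: v) (a :: b :: a :: v) := by
  have key : b⁻¹ * a * b = a * b * a⁻¹ := by
    rw [show a * b = b⁻¹ * (b * a * b) by group, ← h]; group
  have m1 : HurwitzMove (b :: a :: b :: v) (b :: (a * b * a⁻¹) :: a :: v) :=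
    move_append_left [b] (move_cons a b)
  have m2 : HurwitzMove (b :: (a * b * a⁻¹) :: a :: v) ((b * (a * b * a⁻¹) * b⁻¹) :: b :: a :: v) :=
    move_cons _ _
  have e : b * (a * b * a⁻¹) * b⁻¹ = a := by rw [← key]; group
  rw [e] at m2
  exact he_trans (he_of_move m1) (he_of_move m2)

/-- an element commuting with everything in `Y` can travel from back to front -/
theorem he_back_to_front {g : G} {Y : List G} (h : ∀ y ∈ Y, g * y = y * g) :
    HurwitzEquiv (Y ++ [g]) (g :: Y) := by
  induction Y with
  | nil => exact he_refl _
  | cons y Y ih =>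
      have h1 : HurwitzEquiv (y :: (Y ++ [g])) (y :: g :: Y) :=
        he_cons y (ih fun z hz => h z (List.mem_cons_of_mem _ hz))
      have h2 : HurwitzEquiv (y :: g :: Y) (g :: y :: Y) :=
        he_swap (by rw [h y List.mem_cons_self]) Y
      exact he_trans h1 h2

/-- forward full pass -/
theorem he_pass (a : G) (v : List G) :
    HurwitzEquiv (a :: v) ((v ++ [a]).map fun x => a * x * a⁻¹) := by
  induction v with
  | nil => simp only [List.nil_append, List.map_cons, List.map_nil]
           rw [show a * a * a⁻¹ = a by group]
           exact he_refl _
  | cons b v ih =>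
      have h1 : HurwitzEquiv (a :: b :: v) ((a * b * a⁻¹) :: a :: v) :=
        he_of_move (move_cons a b)
      have h2 : HurwitzEquiv ((a * b * a⁻¹) :: a :: v)
          ((a * b * a⁻¹) :: ((v ++ [a]).map fun x => a * x * a⁻¹)) := he_cons _ ih
      refine he_trans (he_trans h1 h2) ?_
      simp [List.map_append]
      exact he_refl _

/-- inverse full pass -/
theorem he_pass' (a : G) (v : List G) :
    HurwitzEquiv (a :: v) (v ++ [v.prod⁻¹ * a * v.prod]) := by
  induction v generalizing a with
  | nil => simp; exact he_refl _
  | cons x v ih =>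
      have m : HurwitzMove (x :: (x⁻¹ * a * x) :: v) ((x * (x⁻¹ * a * x) * x⁻¹) :: x :: v) :=
        move_cons _ _
      rw [show x * (x⁻¹ * a * x) * x⁻¹ = a by group] at m
      have h1 : HurwitzEquiv (a :: x :: v) (x :: (x⁻¹ * a * x) :: v) := he_symm (he_of_move m)
      have h2 := he_cons x (ih (x⁻¹ * a * x))
      refine he_trans (he_trans h1 h2) ?_
      rw [List.prod_cons]
      rw [show v.prod⁻¹ * (x⁻¹ * a * x) * v.prod = (x * v.prod)⁻¹ * a * (x * v.prod) by group]
      exact he_refl _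



variable {N : ℕ}

/-- total version of the Artin generators -/
noncomputable def s (N : ℕ) (i : ℕ) : BraidGroup N :=
  if h : i < N then σ ⟨i, h⟩ else 1

theorem rel_one {r : FreeGroup (Fin N)} (hr : r ∈ braidRels N) :
    PresentedGroup.mk (braidRels N) r = 1 := by
  apply (QuotientGroup.eq_one_iff _).2
  exact Subgroup.subset_normalClosure hr

theorem comm_rel {i j : ℕ} (hij : i + 2 ≤ j) : s N i * s N j = s N j * s N i := by
  unfold s
  by_cases hj : j < N
  · have hi : i < N := by omega
    rw [dif_pos hi, dif_pos hj]
    have hr : FreeGroup.of (⟨i, hi⟩ : Fin N) * FreeGroup.of (⟨j, hj⟩ : Fin N) *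
        (FreeGroup.of (⟨j, hj⟩ : Fin N) * FreeGroup.of (⟨i, hi⟩ : Fin N))⁻¹ ∈ braidRels N :=
      Or.inl ⟨⟨i, hi⟩, ⟨j, hj⟩, hij, rfl⟩
    have h1 := rel_one hr
    rw [map_mul, map_inv, map_mul, map_mul] at h1
    have h2 : σ (⟨i, hi⟩ : Fin N) * σ ⟨j, hj⟩ * (σ ⟨j, hj⟩ * σ ⟨i, hi⟩)⁻¹ = 1 := h1
    rw [mul_inv_eq_one] at h2
    exact h2
  · rw [dif_neg hj, mul_one, one_mul]

theorem braid_rel {i : ℕ} (h : i + 1 < N) :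
    s N i * s N (i + 1) * s N i = s N (i + 1) * s N i * s N (i + 1) := by
  have hi : i < N := by omega
  unfold s
  rw [dif_pos hi, dif_pos h]
  have hr : FreeGroup.of (⟨i, hi⟩ : Fin N) * FreeGroup.of (⟨i + 1, h⟩ : Fin N) *
      FreeGroup.of (⟨i, hi⟩ : Fin N) *
      (FreeGroup.of (⟨i + 1, h⟩ : Fin N) * FreeGroup.of (⟨i, hi⟩ : Fin N) *
        FreeGroup.of (⟨i + 1, h⟩ : Fin N))⁻¹ ∈ braidRels N :=
    Or.inr ⟨⟨i, hi⟩, ⟨i + 1, h⟩, rfl, rfl⟩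
  have h1 := rel_one hr
  rw [map_mul, map_inv, map_mul, map_mul, map_mul] at h1
  have h2 : σ (⟨i, hi⟩ : Fin N) * σ ⟨i + 1, h⟩ * σ ⟨i, hi⟩ *
      (σ ⟨i + 1, h⟩ * σ ⟨i, hi⟩ * σ ⟨i + 1, h⟩)⁻¹ = 1 := h1
  rw [mul_inv_eq_one] at h2
  exact h2

/-- the list of generators with indices `a, a+1, …, a+k-1` -/
noncomputable def seg (N a k : ℕ) : List (BraidGroup N) := (List.range' a k).map (s N)

theorem seg_zero (a : ℕ) : seg N a 0 = [] := rfl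

theorem seg_succ (a k : ℕ) : seg N a (k + 1) = s N a :: seg N (a + 1) k := by
  unfold seg; rw [List.range'_succ]; rfl

theorem seg_concat (a k : ℕ) : seg N a (k + 1) = seg N a k ++ [s N (a + k)] := by
  unfold seg
  rw [List.range'_concat]
  simp

theorem seg_append (a k l : ℕ) : seg N a (k + l) = seg N a k ++ seg N (a + k) l := by
  unfold seg
  rw [← List.map_append, List.range'_append_1]

/-- partial products of generators -/
noncomputable def Q (N a k : ℕ) : BraidGroup N := (seg N a k).prod

theorem Q_zero (a : ℕ) : Q N a 0 = 1 := rfl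

theorem Q_succ (a k : ℕ) : Q N a (k + 1) = s N a * Q N (a + 1) k := by
  unfold Q; rw [seg_succ, List.prod_cons]

theorem Q_concat (a k : ℕ) : Q N a (k + 1) = Q N a k * s N (a + k) := by
  unfold Q; rw [seg_concat, List.prod_append, List.prod_cons, List.prod_nil, mul_one]

theorem Q_append (a k l : ℕ) : Q N a (k + l) = Q N a k * Q N (a + k) l := by
  unfold Q; rw [seg_append, List.prod_append]

/-- `s i` commutes with blocks of higher generators -/
theorem comm_sQ {i a : ℕ} (h : i + 2 ≤ a) (k : ℕ) : s N i * Q N a k = Q N a k * s N i := by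
  induction k generalizing a with
  | zero => rw [Q_zero, mul_one, one_mul]
  | succ k ih =>
      rw [Q_succ, ← mul_assoc, comm_rel h, mul_assoc, ih (by omega), ← mul_assoc]

/-- `s j` commutes with blocks of lower generators -/
theorem comm_Qs {j a k : ℕ} (h : a + k + 1 ≤ j) : Q N a k * s N j = s N j * Q N a k := by
  induction k generalizing a with
  | zero => rw [Q_zero, mul_one, one_mul]
  | succ k ih =>
      rw [Q_succ, mul_assoc, ih (by omega), ← mul_assoc,
        comm_rel (show a + 2 ≤ j by omega), mul_assoc]

/-- the shift identity `δ σᵢ = σᵢ₊₁ δ` -/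
theorem shift {i : ℕ} (h : i + 1 < N) : Q N 0 N * s N i = s N (i + 1) * Q N 0 N := by
  have key : ∀ a b c d : BraidGroup N, b * d = d * b → a * c = c * a →
      b * c * b = c * b * c → (a * (b * c) * d) * b = c * (a * (b * c) * d) := by
    intro a b c d hbd hac hb
    calc (a * (b * c) * d) * b = a * (b * c) * (d * b) := by group
      _ = a * (b * c) * (b * d) := by rw [hbd]
      _ = a * (b * c * b) * d := by group
      _ = a * (c * b * c) * d := by rw [hb]
      _ = (a * c) * ((b * c) * d) := by group
      _ = (c * a) * ((b * c) * d) := by rw [hac]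
      _ = c * (a * (b * c) * d) := by group
  have e1 : Q N 0 N = Q N 0 i * (s N i * s N (i + 1)) * Q N (i + 2) (N - (i + 2)) := by
    have e2 := Q_append (N := N) 0 (i + 2) (N - (i + 2))
    rw [show i + 2 + (N - (i + 2)) = N by omega,
      show (0 : ℕ) + (i + 2) = i + 2 by omega] at e2
    rw [e2, Q_append 0 i 2, Q_succ, Q_succ, Q_zero, mul_one,
      show (0 : ℕ) + i = i by omega, mul_assoc, mul_assoc]
  rw [e1]
  exact key _ _ _ _ (comm_sQ (le_refl (i + 2)) _) (comm_Qs (by omega)) (braid_rel h)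

/-- Claim(k): `σ₀ (σ₁⋯σₖ)(σ₀⋯σₖ₋₁) = (σ₁⋯σₖ)(σ₀⋯σₖ₋₁) σₖ` -/
theorem wrap {k : ℕ} (h : k < N) :
    s N 0 * (Q N 1 k * Q N 0 k) = (Q N 1 k * Q N 0 k) * s N k := by
  induction k with
  | zero => simp [Q_zero]
  | succ k ih =>
      have key : ∀ p q x y z : BraidGroup N, q * y = y * q → x * y * x = y * x * y →
          z * (p * q) = (p * q) * x → z * ((p * y) * (q * x)) = ((p * y) * (q * x)) * y := by
        intro p q x y z hqy hb ihk
        calc z * ((p * y) * (q * x)) = z * ((p * (y * q)) * x) := by group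
          _ = z * ((p * (q * y)) * x) := by rw [hqy]
          _ = (z * (p * q)) * (y * x) := by group
          _ = ((p * q) * x) * (y * x) := by rw [ihk]
          _ = (p * q) * (x * y * x) := by group
          _ = (p * q) * (y * x * y) := by rw [hb]
          _ = (p * (q * y)) * (x * y) := by group
          _ = (p * (y * q)) * (x * y) := by rw [hqy]
          _ = ((p * y) * (q * x)) * y := by group
      rw [Q_concat 1 k, Q_concat 0 k, show (1 : ℕ) + k = k + 1 by omega,
        show (0 : ℕ) + k = k by omega]
      exact key _ _ _ _ _ (comm_Qs (by omega)) (braid_rel h) (ih (by omega))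


/-! ### The lists -/

variable {G : Type*} [Group G]

/-- the standard block `σ₀ σ₁ ⋯ σ_{N-1}` -/
noncomputable def Rl (N : ℕ) : List (BraidGroup N) := seg N 0 N

/-- `k` consecutive copies of the block -/
noncomputable def Bl (N : ℕ) : ℕ → List (BraidGroup N)
  | 0 => []
  | k + 1 => Rl N ++ Bl N k

theorem Bl_concat {N : ℕ} (k : ℕ) : Bl N (k + 1) = Bl N k ++ Rl N := by
  induction k with
  | zero => simp [Bl]
  | succ k ih =>
      show Rl N ++ Bl N (k + 1) = (Rl N ++ Bl N k) ++ Rl N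
      rw [ih, List.append_assoc]

theorem mem_seg {N a k : ℕ} {y : BraidGroup N} (hy : y ∈ seg N a k) :
    ∃ j, a ≤ j ∧ j < a + k ∧ y = s N j := by
  unfold seg at hy
  obtain ⟨j, hj, rfl⟩ := List.mem_map.1 hy
  have := List.mem_range'_1.1 hj
  exact ⟨j, this.1, this.2, rfl⟩

/-- the block-passing lemma: `R ++ [σᵢ] ∼ σ_{i+1} :: R` -/
theorem he_A {N i : ℕ} (h : i + 1 < N) :
    HurwitzEquiv (Rl N ++ [s N i]) (s N (i + 1) :: Rl N) := by
  set X := seg N 0 i with hX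
  set Y := seg N (i + 2) (N - (i + 2)) with hY
  have hR : Rl N = X ++ (s N i :: s N (i + 1) :: Y) := by
    rw [hX, hY]
    show seg N 0 N = _
    rw [show N = i + (2 + (N - (i + 2))) by omega, seg_append, seg_append, seg_succ, seg_succ,
      seg_zero]
    simp [show i + 2 + (N - (i + 2)) = N by omega, show i + 1 + 1 = i + 2 by omega]
    rw [show i + (2 + (N - (i + 2))) = N by omega]
  have comY : ∀ y ∈ Y, s N i * y = y * s N i := by
    intro y hy
    obtain ⟨j, hj1, hj2, rfl⟩ := mem_seg hy
    exact comm_rel hj1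
  have comX : ∀ y ∈ X, s N (i + 1) * y = y * s N (i + 1) := by
    intro y hy
    obtain ⟨j, hj1, hj2, rfl⟩ := mem_seg hy
    exact (comm_rel (by omega)).symm
  have step1 : HurwitzEquiv (Rl N ++ [s N i]) (X ++ (s N i :: s N (i + 1) :: s N i :: Y)) := by
    rw [hR]
    have e : (X ++ (s N i :: s N (i + 1) :: Y)) ++ [s N i]
        = (X ++ [s N i, s N (i + 1)]) ++ (Y ++ [s N i]) := by simp
    rw [e]
    have := he_append_left (X ++ [s N i, s N (i + 1)]) (he_back_to_front comY)
    refine he_trans this ?_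
    simp only [List.append_assoc, List.cons_append, List.nil_append]
    exact he_refl _
  have step2 : HurwitzEquiv (X ++ (s N i :: s N (i + 1) :: s N i :: Y))
      (X ++ (s N (i + 1) :: s N i :: s N (i + 1) :: Y)) :=
    he_append_left X (he_braid (braid_rel h).symm Y)
  have step3 : HurwitzEquiv (X ++ (s N (i + 1) :: s N i :: s N (i + 1) :: Y))
      (s N (i + 1) :: Rl N) := by
    have e : X ++ (s N (i + 1) :: s N i :: s N (i + 1) :: Y)
        = (X ++ [s N (i + 1)]) ++ (s N i :: s N (i + 1) :: Y) := by simp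
    rw [e]
    have := he_append_right (s N i :: s N (i + 1) :: Y) (he_back_to_front comX)
    refine he_trans this ?_
    rw [hR]
    simp only [List.cons_append]
    exact he_refl _
  exact he_trans (he_trans step1 step2) step3

/-- pushing `σ_{N-1}` rightwards through `k` blocks -/
theorem he_chain {N : ℕ} : ∀ k, k ≤ N - 1 →
    HurwitzEquiv ([s N (N - 1)] ++ Bl N k) (Bl N k ++ [s N (N - 1 - k)]) := by
  intro k
  induction k with
  | zero => intro _; exact he_refl _
  | succ k ih =>
      intro hk
      have h1 : HurwitzEquiv ([s N (N - 1)] ++ Bl N (k + 1))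
          ((Bl N k ++ [s N (N - 1 - k)]) ++ Rl N) := by
        rw [Bl_concat, ← List.append_assoc]
        exact he_append_right _ (ih (by omega))
      refine he_trans h1 ?_
      rw [Bl_concat, List.append_assoc, List.append_assoc]
      refine he_append_left _ ?_
      have hA := he_A (N := N) (i := N - 1 - (k + 1)) (by omega)
      rw [show N - 1 - (k + 1) + 1 = N - 1 - k by omega] at hA
      simp only [List.singleton_append, List.cons_append, List.nil_append] at hA ⊢
      exact he_symm hA

/-- the wrap-around lemma `σ₀ :: R ++ (σ₀ ⋯ σ_{N-2}) ∼ R ++ R`  -/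
theorem he_G' {N : ℕ} (hN : 1 ≤ N) :
    HurwitzEquiv (s N 0 :: (Rl N ++ seg N 0 (N - 1))) (Rl N ++ Rl N) := by
  have hRl : Rl N = s N 0 :: seg N 1 (N - 1) := by
    show seg N 0 N = _
    rw [show N = (N - 1) + 1 by omega, seg_succ, show (N - 1) + 1 = N by omega]
  set V := seg N 1 (N - 1) ++ seg N 0 (N - 1) with hV
  have hVprod : V.prod = Q N 1 (N - 1) * Q N 0 (N - 1) := by
    rw [hV, List.prod_append]; rfl
  have hkey : V.prod⁻¹ * s N 0 * V.prod = s N (N - 1) := by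
    rw [hVprod]
    have := wrap (N := N) (k := N - 1) (by omega)
    rw [show Q N 1 (N - 1) * Q N 0 (N - 1) * s N (N - 1)
        = (Q N 1 (N - 1) * Q N 0 (N - 1)) * s N (N - 1) by group] at this
    rw [show (Q N 1 (N - 1) * Q N 0 (N - 1))⁻¹ * s N 0 * (Q N 1 (N - 1) * Q N 0 (N - 1))
        = (Q N 1 (N - 1) * Q N 0 (N - 1))⁻¹ * (s N 0 * (Q N 1 (N - 1) * Q N 0 (N - 1))) by group,
      this]
    group
  have e1 : s N 0 :: (Rl N ++ seg N 0 (N - 1)) = s N 0 :: (s N 0 :: V) := by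
    rw [hRl, hV]; simp
  rw [e1]
  have hpass := he_pass' (s N 0) V
  rw [hkey] at hpass
  refine he_trans (he_cons _ hpass) ?_
  have h3 : seg N 0 N = seg N 0 (N - 1) ++ [s N (N - 1)] := by
    have := seg_concat (N := N) 0 (N - 1)
    rw [show (N - 1) + 1 = N by omega, show 0 + (N - 1) = N - 1 by omega] at this
    exact this
  have e2 : s N 0 :: (V ++ [s N (N - 1)]) = Rl N ++ Rl N := by
    have h2 : Rl N ++ Rl N = (s N 0 :: seg N 1 (N - 1)) ++ seg N 0 N := by
      rw [← hRl]; rfl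
    rw [h2, hV, h3]
    simp
  rw [e2]
  exact he_refl _

/-- rotation by `N-1` can be undone -/
theorem he_L {N : ℕ} (hN : 1 ≤ N) :
    HurwitzEquiv ([s N (N - 1)] ++ Bl N N ++ seg N 0 (N - 1)) (Bl N (N + 1)) := by
  have h1 : HurwitzEquiv ([s N (N - 1)] ++ Bl N N ++ seg N 0 (N - 1))
      ((Bl N (N - 1) ++ [s N 0]) ++ (Rl N ++ seg N 0 (N - 1))) := by
    have hBl : Bl N N = Bl N (N - 1) ++ Rl N := by
      have := Bl_concat (N := N) (N - 1)
      rw [show N - 1 + 1 = N by omega] at this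
      exact this
    have e : [s N (N - 1)] ++ Bl N N ++ seg N 0 (N - 1)
        = ([s N (N - 1)] ++ Bl N (N - 1)) ++ (Rl N ++ seg N 0 (N - 1)) := by
      rw [hBl]; simp
    rw [e]
    have := he_chain (N := N) (N - 1) (le_refl _)
    rw [show N - 1 - (N - 1) = 0 by omega] at this
    exact he_append_right _ this
  refine he_trans h1 ?_
  have e2 : (Bl N (N - 1) ++ [s N 0]) ++ (Rl N ++ seg N 0 (N - 1))
      = Bl N (N - 1) ++ (s N 0 :: (Rl N ++ seg N 0 (N - 1))) := by simp
  rw [e2]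
  refine he_trans (he_append_left _ (he_G' hN)) ?_
  have hBl2 : Bl N N = Bl N (N - 1) ++ Rl N := by
    have := Bl_concat (N := N) (N - 1)
    rw [show N - 1 + 1 = N by omega] at this
    exact this
  have e3 : Bl N (N + 1) = Bl N (N - 1) ++ (Rl N ++ Rl N) := by
    rw [Bl_concat, hBl2, List.append_assoc]
  rw [e3]
  exact he_refl _

/-- the rotated tuples -/
noncomputable def Lk (N k : ℕ) : List (BraidGroup N) := seg N k (N - k) ++ Bl N N ++ seg N 0 k

theorem he_harvest {N : ℕ} : ∀ k, k ≤ N →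
    HurwitzEquiv (Bl N (N + 1)) ((Lk N k).map fun x => Q N 0 k * x * (Q N 0 k)⁻¹) := by
  intro k
  induction k with
  | zero =>
      intro _
      have e : Lk N 0 = Bl N (N + 1) := by
        unfold Lk
        simp [seg_zero, Bl, Rl]
      rw [e]
      have : ((Bl N (N + 1)).map fun x => Q N 0 0 * x * (Q N 0 0)⁻¹) = Bl N (N + 1) := by
        rw [Q_zero]
        simp
      rw [this]
      exact he_refl _
  | succ k ih =>
      intro hk
      refine he_trans (ih (by omega)) ?_
      have e1 : Lk N k = s N k :: (seg N (k + 1) (N - (k + 1)) ++ Bl N N ++ seg N 0 k) := by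
        unfold Lk
        conv_lhs => rw [show N - k = (N - (k + 1)) + 1 by omega]
        rw [seg_succ]
        simp
      have e2 : (seg N (k + 1) (N - (k + 1)) ++ Bl N N ++ seg N 0 k) ++ [s N k] = Lk N (k + 1) := by
        unfold Lk
        rw [show seg N 0 (k + 1) = seg N 0 k ++ [s N k] by
          rw [seg_concat, show 0 + k = k by omega]]
        simp
      have hpass := he_pass (s N k) (seg N (k + 1) (N - (k + 1)) ++ Bl N N ++ seg N 0 k)
      rw [e2] at hpass
      rw [e1]
      have hmap := he_map_conj (Q N 0 k) hpass
      refine he_trans hmap ?_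
      rw [List.map_map]
      have efun : ((fun x => Q N 0 k * x * (Q N 0 k)⁻¹) ∘ fun x => s N k * x * (s N k)⁻¹)
          = fun x => Q N 0 (k + 1) * x * (Q N 0 (k + 1))⁻¹ := by
        funext x
        simp only [Function.comp]
        rw [Q_concat, show 0 + k = k by omega]
        group
      rw [efun]
      exact he_refl _

/-! ### The stabilizer subgroup -/

theorem conj_map_map (g h : G) (l : List G) :
    ((l.map fun x => h * x * h⁻¹).map fun x => g * x * g⁻¹)
      = l.map fun x => (g * h) * x * (g * h)⁻¹ := by
  rw [List.map_map]
  apply List.map_congr_left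
  intro x _
  simp only [Function.comp]
  group

theorem conj_map_one (l : List G) : (l.map fun x => (1 : G) * x * (1 : G)⁻¹) = l := by
  simp

noncomputable def stab (N : ℕ) : Subgroup (BraidGroup N) where
  carrier := {g | HurwitzEquiv (Bl N (N + 1)) ((Bl N (N + 1)).map fun x => g * x * g⁻¹)}
  one_mem' := by
    simp only [Set.mem_setOf_eq, conj_map_one]
    exact he_refl _
  mul_mem' := by
    intro a b ha hb
    simp only [Set.mem_setOf_eq] at *
    refine he_trans ha ?_
    have := he_map_conj a hb
    rwa [conj_map_map] at this
  inv_mem' := by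
    intro a ha
    simp only [Set.mem_setOf_eq] at *
    have := he_map_conj a⁻¹ ha
    rw [conj_map_map, inv_mul_cancel, conj_map_one] at this
    exact he_symm this

theorem mem_stab_iff {N : ℕ} (g : BraidGroup N) :
    g ∈ stab N ↔ HurwitzEquiv (Bl N (N + 1)) ((Bl N (N + 1)).map fun x => g * x * g⁻¹) :=
  Iff.rfl

theorem Bl_comm {N : ℕ} : ∀ k, Bl N k ++ Rl N = Rl N ++ Bl N k := by
  intro k
  induction k with
  | zero => simp [Bl]
  | succ k ih =>
      show (Rl N ++ Bl N k) ++ Rl N = Rl N ++ (Rl N ++ Bl N k)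
      rw [List.append_assoc, ih]

theorem Q_first_mem {N : ℕ} (hN : 1 ≤ N) : Q N 0 (N - 1) ∈ stab N := by
  rw [mem_stab_iff]
  have h1 := he_harvest (N := N) (N - 1) (by omega)
  have e : Lk N (N - 1) = [s N (N - 1)] ++ Bl N N ++ seg N 0 (N - 1) := by
    unfold Lk
    rw [show N - (N - 1) = 1 by omega]
    have : seg N (N - 1) 1 = [s N (N - 1)] := by
      rw [show (1 : ℕ) = 0 + 1 by omega, seg_succ, seg_zero]
    rw [this]
  rw [e] at h1
  refine he_trans h1 ?_
  exact he_map_conj _ (he_L hN)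

theorem Q_full_mem {N : ℕ} : Q N 0 N ∈ stab N := by
  rw [mem_stab_iff]
  have h1 := he_harvest (N := N) N (le_refl N)
  have e : Lk N N = Bl N (N + 1) := by
    unfold Lk
    rw [Nat.sub_self, seg_zero, List.nil_append]
    show Bl N N ++ Rl N = Rl N ++ Bl N N
    exact Bl_comm N
  rwa [e] at h1

theorem s_last_mem {N : ℕ} (hN : 1 ≤ N) : s N (N - 1) ∈ stab N := by
  have e : s N (N - 1) = (Q N 0 (N - 1))⁻¹ * Q N 0 N := by
    have := Q_concat (N := N) 0 (N - 1)
    rw [show (N - 1) + 1 = N by omega, show 0 + (N - 1) = N - 1 by omega] at this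
    rw [this]
    group
  rw [e]
  exact mul_mem (inv_mem (Q_first_mem hN)) Q_full_mem

theorem s_mem_aux {N : ℕ} (hN : 1 ≤ N) : ∀ j, j < N → s N (N - 1 - j) ∈ stab N := by
  intro j
  induction j with
  | zero => intro _; simpa using s_last_mem hN
  | succ j ih =>
      intro hj
      have prev := ih (by omega)
      have hs := shift (N := N) (i := N - 1 - (j + 1)) (by omega)
      rw [show N - 1 - (j + 1) + 1 = N - 1 - j by omega] at hs
      have e : s N (N - 1 - (j + 1)) = (Q N 0 N)⁻¹ * s N (N - 1 - j) * Q N 0 N := by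
        rw [mul_assoc, ← hs]
        group
      rw [e]
      exact mul_mem (mul_mem (inv_mem Q_full_mem) prev) Q_full_mem

theorem s_mem {N : ℕ} (hN : 1 ≤ N) (i : ℕ) (hi : i < N) : s N i ∈ stab N := by
  have := s_mem_aux hN (N - 1 - i) (by omega)
  rwa [show N - 1 - (N - 1 - i) = i by omega] at this

theorem stab_eq_top {N : ℕ} (hN : 1 ≤ N) (g : BraidGroup N) : g ∈ stab N := by
  have h1 : Set.range (PresentedGroup.of : Fin N → BraidGroup N) ⊆ (stab N : Set (BraidGroup N)) := by
    rintro _ ⟨i, rfl⟩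
    have := s_mem hN i.val i.isLt
    unfold s at this
    rw [dif_pos i.isLt] at this
    simpa [σ] using this
  have h2 := PresentedGroup.closure_range_of (braidRels N)
  have h3 : (⊤ : Subgroup (BraidGroup N)) ≤ stab N := by
    rw [← h2]
    exact (Subgroup.closure_le _).2 h1
  exact h3 (Subgroup.mem_top g)

/-! ### Assembly -/

theorem ofFn_sigma (N : ℕ) : (List.ofFn fun i : Fin N => σ i) = Rl N := by
  apply List.ext_getElem
  · simp [Rl, seg]
  · intro i h1 h2
    simp only [List.getElem_ofFn, Rl, seg, List.getElem_map]
    have hi : i < N := by simpa using h1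
    have hr : (List.range' 0 N)[i]'(by
        simpa [Rl, seg, List.length_range'] using h2) = i := by
      rw [List.getElem_range'_1]
      omega
    rw [hr]
    unfold s
    rw [dif_pos hi]

theorem flatten_replicate (N : ℕ) : ∀ k, (List.replicate k (Rl N)).flatten = Bl N k := by
  intro k
  induction k with
  | zero => rfl
  | succ k ih => rw [List.replicate_succ, List.flatten_cons, ih]; rfl

theorem map_flatten_replicate {H : Type*} [Group H] (f : H → H) :
    ∀ (k : ℕ) (l : List H),
      ((List.replicate k l).flatten).map f = (List.replicate k (l.map f)).flatten := by
  intro k l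
  induction k with
  | zero => rfl
  | succ k ih => rw [List.replicate_succ, List.replicate_succ, List.flatten_cons,
      List.flatten_cons, List.map_append, ih]

end Hur


/-- Conjugating the standard `Δₙ²` factorization `(σ₁ ⋯ σₙ₋₁)ⁿ` by an
arbitrary braid `b` yields a Hurwitz equivalent factorization. -/
theorem hurwitz_equiv_conj_by_braid {n : ℕ} (hn : 2 ≤ n) (b : BraidGroup (n - 1)) :
    HurwitzEquiv
      (List.replicate n (List.ofFn fun i : Fin (n - 1) => σ i)).flatten
      (List.replicate n (List.ofFn fun i : Fin (n - 1) => b * σ i * b⁻¹)).flatten := by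
  obtain ⟨N, rfl⟩ : ∃ N, n = N + 1 := ⟨n - 1, by omega⟩
  let b' : BraidGroup N := b
  show HurwitzEquiv
      (List.replicate (N + 1) (List.ofFn fun i : Fin N => σ i)).flatten
      (List.replicate (N + 1) (List.ofFn fun i : Fin N => b' * σ i * b'⁻¹)).flatten
  have hN : 1 ≤ N := by omega
  have e1 : (List.ofFn fun i : Fin N => b' * σ i * b'⁻¹)
      = (List.ofFn fun i : Fin N => σ i).map (fun x => b' * x * b'⁻¹) := by
    rw [List.map_ofFn]
    rfl
  rw [e1, Hur.ofFn_sigma, ← Hur.map_flatten_replicate, Hur.flatten_replicate]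
  exact Hur.stab_eq_top hN b'
end
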